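/- arXiv:2601.10815 — 10 statements merged into one kernel-verified Lean document; each statement's English description precedes it below -/
import Mathlib

section
/- Let D, B : ℝ → Matrix n n ℝ with D differentiable and satisfying the Lax equation D'(t) = B t · D t − D t · B t for all t. Then the flow is isospectral: for all t, the characteristic polynomial of D t equals the characteristic polynomial of D 0. -/
attribute [local instance] Matrix.normedAddCommGroup Matrix.normedSpace

open Matrix

section Aux

variable {n : Type*} [Fintype n] [DecidableEq n]

lemma hasDerivAt_entry_aux {M : ℝ → Matrix n n ℝ} {M' : Matrix n n ℝ} {t : ℝ}
    (h : HasDerivAt M M' t) (i j : n) :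
    HasDerivAt (fun s => M s i j) (M' i j) t := by
  have := ((LinearMap.toContinuousLinearMap
      (Matrix.entryLinearMap ℝ ℝ i j)).hasFDerivAt (x := M t)).comp_hasDerivAt t h
  exact this

lemma hasDerivAt_det_aux {M : ℝ → Matrix n n ℝ} {M' : Matrix n n ℝ} {t : ℝ}
    (h : HasDerivAt M M' t) :
    HasDerivAt (fun s => (M s).det)
      (∑ i, ((M t).updateCol i fun k => M' k i).det) t := by
  have key : ∀ σ : Equiv.Perm n, HasDerivAt (fun s => ∏ i, M s (σ i) i)
      (∑ i, (∏ j ∈ Finset.univ.erase i, M t (σ j) j) • M' (σ i) i) t :=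
    fun σ => HasDerivAt.fun_finsetProd (fun i _ => hasDerivAt_entry_aux h (σ i) i)
  have h1 : HasDerivAt (fun s => (M s).det)
      (∑ σ : Equiv.Perm n, (Equiv.Perm.sign σ : ℝ) *
        ∑ i, (∏ j ∈ Finset.univ.erase i, M t (σ j) j) • M' (σ i) i) t := by
    simp only [det_apply']
    exact HasDerivAt.fun_sum fun σ _ => (key σ).const_mul _
  convert h1 using 1
  simp only [det_apply']
  rw [Finset.sum_comm]
  refine Finset.sum_congr rfl fun σ _ => ?_
  rw [Finset.mul_sum]
  refine Finset.sum_congr rfl fun i _ => ?_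
  rw [← Finset.mul_prod_erase _ _ (Finset.mem_univ i)]
  have hrest : ∀ j ∈ Finset.univ.erase i,
      (M t).updateCol i (fun k => M' k i) (σ j) j = M t (σ j) j := by
    intro j hj
    rw [updateCol_apply, if_neg (Finset.ne_of_mem_erase hj)]
  rw [Finset.prod_congr rfl hrest, updateCol_apply, if_pos rfl]
  simp [smul_eq_mul]
  ring

lemma sum_det_updateColumn_commutator (M B : Matrix n n ℝ) :
    (∑ i, (M.updateCol i fun k => (B * M - M * B) k i).det) = 0 := by
  have key : (∑ i, (M.updateCol i fun k => (B * M - M * B) k i).det)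
      = Matrix.trace (M.adjugate * (B * M - M * B)) := by
    simp only [← cramer_apply, cramer_eq_adjugate_mulVec]
    simp [Matrix.trace, Matrix.mulVec, Matrix.mul_apply, dotProduct, Matrix.diag]
  rw [key, Matrix.mul_sub, Matrix.trace_sub,
    ← Matrix.mul_assoc, trace_mul_cycle M.adjugate B M, ← Matrix.mul_assoc,
    Matrix.mul_adjugate, Matrix.adjugate_mul, sub_self]

lemma eval_charpoly_aux (M : Matrix n n ℝ) (x : ℝ) :
    (M.charpoly).eval x = (x • (1 : Matrix n n ℝ) - M).det := by
  rw [Matrix.charpoly, ← Polynomial.coe_evalRingHom, RingHom.map_det]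
  congr 1
  ext i j
  by_cases h : i = j <;>
    simp [h, charmatrix_apply_eq, charmatrix_apply_ne, Matrix.one_apply,
      Matrix.smul_apply, Matrix.sub_apply]

end Aux

/-- A Lax flow `D' = B D - D B` is isospectral: the characteristic polynomial is
constant in time. -/
theorem lax_flow_isospectral {n : Type*} [Fintype n] [DecidableEq n]
    (D B : ℝ → Matrix n n ℝ)
    (hLax : ∀ t, HasDerivAt D (B t * D t - D t * B t) t) :
    ∀ t, (D t).charpoly = (D 0).charpoly := by
  intro t
  apply Polynomial.funext
  intro x
  rw [eval_charpoly_aux, eval_charpoly_aux]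
  set M : ℝ → Matrix n n ℝ := fun s => x • (1 : Matrix n n ℝ) - D s with hMdef
  have hM : ∀ s, HasDerivAt M (B s * M s - M s * B s) s := by
    intro s
    have h1 : HasDerivAt M (-(B s * D s - D s * B s)) s := (hLax s).const_sub _
    convert h1 using 1
    simp only [hMdef, Matrix.mul_sub, Matrix.sub_mul, mul_smul_comm,
      smul_mul_assoc, mul_one, one_mul, neg_sub]
    abel
  have hderiv : ∀ s, HasDerivAt (fun s => (M s).det) 0 s := by
    intro s
    have := hasDerivAt_det_aux (hM s)
    rwa [sum_det_updateColumn_commutator (M s) (B s)] at this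
  have hconst : ∀ s, (M s).det = (M 0).det := by
    intro s
    have hdiff : Differentiable ℝ fun s => (M s).det :=
      fun s => (hderiv s).differentiableAt
    have : ∀ u, deriv (fun s => (M s).det) u = 0 := fun u => (hderiv u).deriv
    exact is_const_of_deriv_eq_zero hdiff this s 0
  exact hconst t
end

section
/- Let B : ℝ → Matrix n n ℝ be continuous, let D : ℝ → Matrix n n ℝ be differentiable with D'(t) = D t · B t − B t · D t for all t, and let u : ℝ → (n → ℝ) be differentiable with u'(t) = −(B t) ·ᵥ (u t) for all t. If D 0 ·ᵥ u 0 = 0, then D t ·ᵥ u t = 0 for all t. (Vectors in the kernel of D are transported along the Lax deformation, so the kernel dimension is preserved.) -/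
attribute [local instance] Matrix.normedAddCommGroup Matrix.normedSpace

open Matrix

lemma norm_mulVec_le' {n : Type*} [Fintype n] (M : Matrix n n ℝ) (x : n → ℝ) :
    ‖M.mulVec x‖ ≤ (Fintype.card n : ℝ) * ‖M‖ * ‖x‖ := by
  have hnn : (0:ℝ) ≤ (Fintype.card n : ℝ) * ‖M‖ * ‖x‖ := by positivity
  rw [pi_norm_le_iff_of_nonneg hnn]
  intro i
  calc ‖(M.mulVec x) i‖ = |∑ j, M i j * x j| := rfl
    _ ≤ ∑ j, |M i j * x j| := Finset.abs_sum_le_sum_abs _ _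
    _ ≤ ∑ j : n, ‖M‖ * ‖x‖ := by
        refine Finset.sum_le_sum fun j _ => ?_
        rw [abs_mul]
        gcongr
        · exact M.norm_entry_le_entrywise_sup_norm
        · exact norm_le_pi_norm x j
    _ = (Fintype.card n : ℝ) * ‖M‖ * ‖x‖ := by
        rw [Finset.sum_const, Finset.card_univ, nsmul_eq_mul, mul_assoc]

/-- Vectors in the kernel of `D` are transported along the Lax deformation:
if `u' = -B u` and `D' = D B - B D`, then `D t ·ᵥ u t` stays zero. -/
theorem lax_flow_kernel_transport {n : Type*} [Fintype n] [DecidableEq n]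
    (B D : ℝ → Matrix n n ℝ) (u : ℝ → (n → ℝ))
    (hB : Continuous B)
    (hD : ∀ t, HasDerivAt D (D t * B t - B t * D t) t)
    (hu : ∀ t, HasDerivAt u (-(B t).mulVec (u t)) t)
    (h0 : (D 0).mulVec (u 0) = 0) :
    ∀ t, (D t).mulVec (u t) = 0 := by
  -- the bundled "matrix to CLM" map
  let Ψ : Matrix n n ℝ →ₗ[ℝ] ((n → ℝ) →L[ℝ] (n → ℝ)) :=
    (LinearMap.toContinuousLinearMap.toLinearMap).comp (Matrix.toLin' : Matrix n n ℝ ≃ₗ[ℝ] _).toLinearMap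
  let Φ : Matrix n n ℝ →L[ℝ] ((n → ℝ) →L[ℝ] (n → ℝ)) := LinearMap.toContinuousLinearMap Ψ
  have hΦ : ∀ (M : Matrix n n ℝ) (x : n → ℝ), Φ M x = M.mulVec x := by
    intro M x
    simp [Φ, Ψ, Matrix.toLin'_apply]
  set w : ℝ → (n → ℝ) := fun t => (D t).mulVec (u t) with hw
  have hw' : ∀ t, HasDerivAt w (-(B t).mulVec (w t)) t := by
    intro t
    have h1 : HasDerivAt (fun s => Φ (D s)) (Φ (D t * B t - B t * D t)) t :=
      Φ.hasFDerivAt.comp_hasDerivAt t (hD t)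
    have h2 := h1.clm_apply (hu t)
    have h3 : HasDerivAt (fun s => Φ (D s) (u s))
        (Φ (D t * B t - B t * D t) (u t) + Φ (D t) (-(B t).mulVec (u t))) t := h2
    have heqf : (fun s => Φ (D s) (u s)) = w := by
      funext s; rw [hΦ]
    have heqd : Φ (D t * B t - B t * D t) (u t) + Φ (D t) (-(B t).mulVec (u t))
        = -(B t).mulVec (w t) := by
      rw [hΦ, hΦ, hw]
      simp only [Matrix.sub_mulVec, Matrix.mulVec_neg, ← Matrix.mulVec_mulVec,
        Matrix.neg_mulVec]
      abel
    rw [heqf, heqd] at h3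
    exact h3
  intro t
  -- uniqueness of ODE solutions on [-T, T]
  set T : ℝ := |t| + 1 with hT
  have hT0 : (0:ℝ) < T := by positivity
  have htmem : t ∈ Set.Icc (-T) T := by
    constructor <;> [linarith [neg_abs_le t]; linarith [le_abs_self t]]
  -- bound on ‖B s‖ on the compact interval
  obtain ⟨C, hC⟩ := (isCompact_Icc (a := -T) (b := T)).exists_bound_of_continuousOn
    (hB.norm.continuousOn)
  have hC0 : 0 ≤ C := le_trans (norm_nonneg _) (hC 0 ⟨by linarith, by linarith⟩)
  -- clamped vector field
  set c : ℝ → ℝ := fun s => min T (max (-T) s) with hc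
  have hcmem : ∀ s, c s ∈ Set.Icc (-T) T := fun s =>
    ⟨le_min (by linarith) (le_max_left _ _), min_le_left _ _⟩
  have hceq : ∀ s ∈ Set.Icc (-T) T, c s = s := by
    intro s hs
    simp [hc, max_eq_right hs.1, min_eq_right hs.2]
  set v : ℝ → (n → ℝ) → (n → ℝ) := fun s x => -(B (c s)).mulVec x with hv
  set K : NNReal := ⟨(Fintype.card n : ℝ) * C, by positivity⟩ with hK
  have hlip : ∀ s, LipschitzWith K (v s) := by
    intro s
    apply LipschitzWith.of_dist_le_mul
    intro x y
    rw [dist_eq_norm, dist_eq_norm]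
    have : v s x - v s y = -(B (c s)).mulVec (x - y) := by
      simp [hv, Matrix.mulVec_sub, Matrix.neg_mulVec]
      abel
    rw [this, norm_neg]
    calc ‖(B (c s)).mulVec (x - y)‖
        ≤ (Fintype.card n : ℝ) * ‖B (c s)‖ * ‖x - y‖ := norm_mulVec_le' _ _
      _ ≤ (Fintype.card n : ℝ) * C * ‖x - y‖ := by
          gcongr; simpa using hC _ (hcmem s)
  have key : Set.EqOn w (fun _ => (0 : n → ℝ)) (Set.Icc (-T) T) := by
    apply ODE_solution_unique_of_mem_Icc (s := fun _ => Set.univ)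
      (fun s _ => (hlip s).lipschitzOnWith) (t₀ := 0)
    · exact ⟨by linarith, by linarith⟩
    · exact fun s hs => ((hw' s).continuousAt.continuousWithinAt)
    · intro s hs
      have := hw' s
      rw [show v s (w s) = -(B s).mulVec (w s) by
        simp [hv, hceq s (Set.Ioo_subset_Icc_self hs)]]
      exact this
    · exact fun _ _ => trivial
    · exact continuousOn_const
    · intro s hs
      have : v s (0 : n → ℝ) = 0 := by simp [hv]
      rw [this]
      exact hasDerivAt_const _ _
    · exact fun _ _ => trivial
    · simpa using h0
  have := key htmem
  simpa [hw] using this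
end

section
/- Let n be a finite index type with a degree function deg : n → ℕ, and let d be a real n×n matrix such that d_{ij} = 0 unless deg j = deg i + 1, and d · d = 0. Set D = d + dᵀ. Then for every real polynomial g, the matrix g(D) has the same Jacobi block structure as D: (g(D))_{ij} = 0 whenever |(deg i : ℤ) − (deg j : ℤ)| ≥ 2. -/
open Matrix Polynomial

/-- If `d` raises the degree by exactly one and `d * d = 0`, then for every polynomial `g`
the matrix `g(d + dᵀ)` has block Jacobi structure: its `(i,j)` entry vanishes whenever
the degrees of `i` and `j` differ by at least `2`. -/
theorem aeval_dirac_block_tridiagonal {n : Type*} [Fintype n] [DecidableEq n]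
    (deg : n → ℕ) (d : Matrix n n ℝ)
    (hd : ∀ i j, deg j ≠ deg i + 1 → d i j = 0)
    (hdd : d * d = 0) (g : Polynomial ℝ) :
    ∀ i j, 2 ≤ |(deg i : ℤ) - (deg j : ℤ)| →
      (Polynomial.aeval (d + dᵀ) g) i j = 0 := by
  set D := d + dᵀ with hD
  -- D itself is tridiagonal
  have h1 : ∀ i j, 2 ≤ |(deg i : ℤ) - (deg j : ℤ)| → D i j = 0 := by
    intro i j h
    have hij : deg j ≠ deg i + 1 := by
      intro he; rw [he] at h; simp at h
    have hji : deg i ≠ deg j + 1 := by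
      intro he; rw [he] at h; simp at h
    simp only [hD, Matrix.add_apply, Matrix.transpose_apply, hd i j hij, hd j i hji, add_zero]
  -- D^2 is block diagonal
  have h2 : ∀ i j, deg i ≠ deg j → (D * D) i j = 0 := by
    intro i j h
    have hDD : D * D = d * dᵀ + dᵀ * d := by
      have ht : dᵀ * dᵀ = 0 := by
        rw [← Matrix.transpose_mul, hdd, Matrix.transpose_zero]
      rw [hD]
      rw [add_mul, mul_add, mul_add, hdd, ht]
      abel
    rw [hDD]
    simp only [Matrix.add_apply, Matrix.mul_apply, Matrix.transpose_apply]
    rw [Finset.sum_eq_zero, Finset.sum_eq_zero, add_zero]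
    · intro k _
      by_cases hk : deg i = deg k + 1
      · have : deg j ≠ deg k + 1 := fun hj => h (hk.trans hj.symm)
        rw [hd k j this, mul_zero]
      · rw [hd k i hk, zero_mul]
    · intro k _
      by_cases hk : deg k = deg i + 1
      · have : deg k ≠ deg j + 1 := by intro hj; apply h; omega
        rw [hd j k this, mul_zero]
      · rw [hd i k hk, zero_mul]
  -- all powers of D are tridiagonal
  have hpow : ∀ k : ℕ, ∀ i j, 2 ≤ |(deg i : ℤ) - (deg j : ℤ)| → (D ^ k) i j = 0 := by
    intro k
    induction k using Nat.strong_induction_on with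
    | _ k ih =>
      match k with
      | 0 =>
        intro i j h
        have hij : i ≠ j := by rintro rfl; simp at h
        simp [Matrix.one_apply, hij]
      | 1 => simpa using h1
      | (m + 2) =>
        intro i j h
        have : D ^ (m + 2) = D ^ m * (D * D) := by rw [pow_add, pow_two]
        rw [this, Matrix.mul_apply]
        apply Finset.sum_eq_zero
        intro k' _
        by_cases hk : deg k' = deg j
        · have : (D ^ m) i k' = 0 := by
            apply ih m (by omega)
            rw [hk]; exact h
          rw [this, zero_mul]
        · rw [h2 k' j hk, mul_zero]
  intro i j h
  rw [Polynomial.aeval_eq_sum_range]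
  simp only [Matrix.sum_apply, Matrix.smul_apply, smul_eq_mul]
  apply Finset.sum_eq_zero
  intro k _
  rw [hpow k i j h, mul_zero]
end

section
/- Let D and ε be symmetric real n×n matrices with ε · ε = 1 and ε · D = −(D · ε). Then for every real t, the supertrace of the heat kernel is time independent: trace(ε · exp(−t · D²)) = trace(ε). (McKean–Singer: str(e^{−tL}) = χ(G) for the Hodge Laplacian L = D² with grading ε.) -/
open Matrix

theorem trace_eps_pow_aux {n : Type*} [Fintype n] [DecidableEq n]
    (D ε : Matrix n n ℝ) (hanti : ε * D = -(D * ε)) :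
    ∀ m : ℕ, (ε * D ^ (m + 1)).trace = 0 := by
  intro m
  have h1 : ε * D ^ (m + 1) = -(D * (ε * D ^ m)) := by
    rw [pow_succ', ← mul_assoc, hanti, neg_mul, mul_assoc]
  have h2 : (ε * D ^ (m + 1)).trace = -(ε * D ^ (m + 1)).trace := by
    calc (ε * D ^ (m + 1)).trace = (-(D * (ε * D ^ m))).trace := by rw [h1]
    _ = -((D * (ε * D ^ m)).trace) := by rw [trace_neg]
    _ = -(((ε * D ^ m) * D).trace) := by rw [trace_mul_comm]
    _ = -(ε * D ^ (m + 1)).trace := by rw [mul_assoc, ← pow_succ]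
  linarith

/-- McKean–Singer: if `ε` is a symmetric involution anticommuting with the symmetric
matrix `D`, then the supertrace of the heat kernel `exp (-t D²)` is time independent
and equals `trace ε`. -/
theorem mckean_singer_heat {n : Type*} [Fintype n] [DecidableEq n]
    (D ε : Matrix n n ℝ) (hD : D.IsSymm) (hε : ε.IsSymm)
    (hinv : ε * ε = 1) (hanti : ε * D = -(D * ε)) :
    ∀ t : ℝ, (ε * NormedSpace.exp (-(t • (D * D)))).trace = ε.trace := by
  intro t
  letI : SeminormedRing (Matrix n n ℝ) := Matrix.linftyOpSemiNormedRing
  letI : NormedRing (Matrix n n ℝ) := Matrix.linftyOpNormedRing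
  letI : NormedAlgebra ℝ (Matrix n n ℝ) := Matrix.linftyOpNormedAlgebra
  set A : Matrix n n ℝ := -(t • (D * D)) with hA
  have hsum : Summable fun k : ℕ => (Nat.factorial k : ℝ)⁻¹ • A ^ k :=
    NormedSpace.expSeries_summable' A
  -- the continuous linear map X ↦ trace (ε * X)
  let L : Matrix n n ℝ →ₗ[ℝ] ℝ :=
    (Matrix.traceLinearMap n ℝ ℝ).comp (LinearMap.mulLeft ℝ ε)
  have hLc : Continuous L := LinearMap.continuous_of_finiteDimensional L
  have key : ∀ k : ℕ, L ((Nat.factorial k : ℝ)⁻¹ • A ^ k) = if k = 0 then ε.trace else 0 := by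
    intro k
    have hAk : A ^ k = (-t) ^ k • D ^ (2 * k) := by
      rw [hA, pow_mul]
      rw [show -(t • (D * D)) = (-t) • (D * D) by simp [neg_smul]]
      rw [smul_pow, sq, ← sq]
    cases k with
    | zero => simp [L]
    | succ m =>
      have h2m : 2 * (m + 1) = (2 * m + 1) + 1 := by ring
      simp only [L, LinearMap.comp_apply, LinearMap.mulLeft_apply,
        Matrix.traceLinearMap_apply, hAk, h2m]
      rw [Matrix.mul_smul, Matrix.mul_smul, Matrix.trace_smul, Matrix.trace_smul,
        trace_eps_pow_aux D ε hanti (2 * m + 1)]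
      simp
  have := ContinuousLinearMap.map_tsum (⟨L, hLc⟩ : Matrix n n ℝ →L[ℝ] ℝ) hsum
  rw [NormedSpace.exp_eq_tsum (𝕂 := ℝ)]
  have hL : (ε * ∑' k : ℕ, (Nat.factorial k : ℝ)⁻¹ • A ^ k).trace
      = L (∑' k : ℕ, (Nat.factorial k : ℝ)⁻¹ • A ^ k) := rfl
  rw [hL]
  calc L (∑' k : ℕ, (Nat.factorial k : ℝ)⁻¹ • A ^ k)
      = ∑' k : ℕ, L ((Nat.factorial k : ℝ)⁻¹ • A ^ k) := this
    _ = ∑' k : ℕ, if k = 0 then ε.trace else 0 := by simp_rw [key]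
    _ = ε.trace := by rw [tsum_eq_single 0 (fun b hb => if_neg hb)]; simp
end

section
/- Let D and ε be symmetric real n×n matrices with ε · ε = 1 and ε · D = −(D · ε), and set L = D². Then for every real λ ≠ 0, the even and odd parts of the λ-eigenspace of L have the same dimension: the dimension of {v : n → ℝ | L ·ᵥ v = λ • v and ε ·ᵥ v = v} equals the dimension of {v : n → ℝ | L ·ᵥ v = λ • v and ε ·ᵥ v = −v}. (McKean–Singer symmetry: the nonzero spectrum of L on even forms agrees with the nonzero spectrum on odd forms.) -/
open Matrix

/-- McKean–Singer symmetry: for a nonzero eigenvalue `λ` of `L = D²`, the even part and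
the odd part (with respect to the grading involution `ε`) of the `λ`-eigenspace have
the same dimension. -/
theorem mckean_singer_eigenspace_symmetry {n : Type*} [Fintype n] [DecidableEq n]
    (D ε : Matrix n n ℝ) (hD : D.IsSymm) (hε : ε.IsSymm)
    (hinv : ε * ε = 1) (hanti : ε * D = -(D * ε)) (lam : ℝ) (hlam : lam ≠ 0) :
    Module.finrank ℝ
      ((LinearMap.ker ((D * D).mulVecLin - lam • LinearMap.id)) ⊓
        (LinearMap.ker (ε.mulVecLin - LinearMap.id)) : Submodule ℝ (n → ℝ)) =
    Module.finrank ℝ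
      ((LinearMap.ker ((D * D).mulVecLin - lam • LinearMap.id)) ⊓
        (LinearMap.ker (ε.mulVecLin + LinearMap.id)) : Submodule ℝ (n → ℝ)) := by
  set Sp := ((LinearMap.ker ((D * D).mulVecLin - lam • LinearMap.id)) ⊓
        (LinearMap.ker (ε.mulVecLin - LinearMap.id)) : Submodule ℝ (n → ℝ)) with hSp
  set Sm := ((LinearMap.ker ((D * D).mulVecLin - lam • LinearMap.id)) ⊓
        (LinearMap.ker (ε.mulVecLin + LinearMap.id)) : Submodule ℝ (n → ℝ)) with hSm
  have memp : ∀ v : n → ℝ, v ∈ Sp ↔ (D * D) *ᵥ v = lam • v ∧ ε *ᵥ v = v := by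
    intro v
    simp [hSp, Submodule.mem_inf, LinearMap.mem_ker, sub_eq_zero]
  have memm : ∀ v : n → ℝ, v ∈ Sm ↔ (D * D) *ᵥ v = lam • v ∧ ε *ᵥ v = -v := by
    intro v
    simp [hSm, Submodule.mem_inf, LinearMap.mem_ker, sub_eq_zero, add_eq_zero_iff_eq_neg]
  -- L commutes with D
  have hL : ∀ v : n → ℝ, (D * D) *ᵥ v = lam • v → (D * D) *ᵥ (D *ᵥ v) = lam • (D *ᵥ v) := by
    intro v hv
    rw [mulVec_mulVec, mul_assoc, ← mulVec_mulVec, hv, mulVec_smul]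
  have hεD : ∀ v : n → ℝ, ε *ᵥ (D *ᵥ v) = -(D *ᵥ (ε *ᵥ v)) := by
    intro v
    rw [mulVec_mulVec, hanti, neg_mulVec, mulVec_mulVec]
  have hinj : ∀ v : n → ℝ, (D * D) *ᵥ v = lam • v → D *ᵥ v = 0 → v = 0 := by
    intro v hv hD0
    have : lam • v = 0 := by rw [← hv, ← mulVec_mulVec, hD0, mulVec_zero]
    exact (smul_eq_zero.mp this).resolve_left hlam
  have hmap1 : ∀ v ∈ Sp, D.mulVecLin v ∈ Sm := by
    intro v hv
    obtain ⟨h1, h2⟩ := (memp v).mp hv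
    refine (memm _).mpr ⟨hL v h1, ?_⟩
    simp only [mulVecLin_apply]
    rw [hεD, h2]
  have hmap2 : ∀ v ∈ Sm, D.mulVecLin v ∈ Sp := by
    intro v hv
    obtain ⟨h1, h2⟩ := (memm v).mp hv
    refine (memp _).mpr ⟨hL v h1, ?_⟩
    simp only [mulVecLin_apply]
    rw [hεD, h2, mulVec_neg, neg_neg]
  have hinj1 : Function.Injective (D.mulVecLin.restrict hmap1) := by
    intro x y hxy
    have hx := ((memp x).mp x.2).1
    have hy := ((memp y).mp y.2).1
    have : D *ᵥ (x : n → ℝ) = D *ᵥ (y : n → ℝ) := congrArg Subtype.val hxy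
    have : (x : n → ℝ) - y = 0 := by
      apply hinj _ ?_ ?_
      · rw [mulVec_sub, hx, hy, ← smul_sub]
      · rw [mulVec_sub, this, sub_self]
    exact Subtype.ext (sub_eq_zero.mp this)
  have hinj2 : Function.Injective (D.mulVecLin.restrict hmap2) := by
    intro x y hxy
    have hx := ((memm x).mp x.2).1
    have hy := ((memm y).mp y.2).1
    have : D *ᵥ (x : n → ℝ) = D *ᵥ (y : n → ℝ) := congrArg Subtype.val hxy
    have : (x : n → ℝ) - y = 0 := by
      apply hinj _ ?_ ?_
      · rw [mulVec_sub, hx, hy, ← smul_sub]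
      · rw [mulVec_sub, this, sub_self]
    exact Subtype.ext (sub_eq_zero.mp this)
  exact le_antisymm (LinearMap.finrank_le_finrank_of_injective hinj1)
    (LinearMap.finrank_le_finrank_of_injective hinj2)
end

section
/- Let G and H be simple graphs on the same finite vertex set of n elements, and let λ₁ ≤ … ≤ λ_n and μ₁ ≤ … ≤ μ_n be the eigenvalues of their Kirchhoff Laplacians listed in nondecreasing order with multiplicity. Then Σ_{j=1}^{n} |λ_j − μ_j| ≤ 4·d(G,H), where d(G,H) is the number of edges in the symmetric difference of the edge sets of G and H. -/
open Matrix Finset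

open Polynomial
open scoped RealInnerProductSpace

namespace LapSpecAux

variable {V : Type*} [Fintype V] [DecidableEq V]

/-- charpoly is invariant under conjugation. -/
lemma charpoly_conj {R : Type*} [CommRing R] (M A N : Matrix V V R) (h : M * N = 1) :
    (M * A * N).charpoly = A.charpoly := by
  have hmap : (M.map C) * (N.map C) = (1 : Matrix V V R[X]) := by
    rw [← Matrix.map_mul, h]
    simp
  have hcomm := Matrix.scalar_commute (X : R[X]) (fun r' => Commute.all _ _) (M.map C)
  have hcm : charmatrix (M * A * N) = M.map C * charmatrix A * N.map C := by
    unfold charmatrix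
    rw [RingHom.mapMatrix_apply, RingHom.mapMatrix_apply, mul_sub, sub_mul]
    congr 1
    · calc Matrix.scalar V (X : R[X])
          = Matrix.scalar V (X : R[X]) * (M.map C * N.map C) := by rw [hmap, mul_one]
        _ = M.map C * Matrix.scalar V (X : R[X]) * N.map C := by
            rw [← mul_assoc, ← hcomm.eq]
    · rw [← Matrix.map_mul, ← Matrix.map_mul]
  rw [Matrix.charpoly, hcm, det_mul, det_mul, Matrix.charpoly]
  have h1 : (M.map C).det * (N.map C).det = 1 := by rw [← det_mul, hmap, det_one]
  calc (M.map C).det * (charmatrix A).det * (N.map C).det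
      = (charmatrix A).det * ((M.map C).det * (N.map C).det) := by ring
    _ = (charmatrix A).det := by rw [h1, mul_one]

lemma charpoly_diagonal {R : Type*} [CommRing R] (d : V → R) :
    (diagonal d).charpoly = ∏ i, (X - C (d i)) := by
  have hcm : charmatrix (diagonal d) = diagonal (fun i => X - C (d i)) := by
    ext i j
    by_cases hij : i = j
    · subst hij; simp [charmatrix_apply_eq]
    · simp [charmatrix_apply_ne _ _ _ hij, diagonal_apply_ne _ hij]
  rw [Matrix.charpoly, hcm, det_diagonal]

lemma charpoly_isHermitian {A : Matrix V V ℝ} (hA : A.IsHermitian) :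
    A.charpoly = ∏ i, (X - C (hA.eigenvalues i)) := by
  have hu : (hA.eigenvectorUnitary : Matrix V V ℝ) * star (hA.eigenvectorUnitary : Matrix V V ℝ)
      = 1 := Matrix.mem_unitaryGroup_iff.mp hA.eigenvectorUnitary.2
  conv_lhs => rw [hA.spectral_theorem]
  rw [Unitary.conjStarAlgAut_apply, charpoly_conj _ _ _ hu]
  have : (RCLike.ofReal ∘ hA.eigenvalues : V → ℝ) = hA.eigenvalues := by
    funext i; simp [RCLike.ofReal]
  rw [this, charpoly_diagonal]

lemma roots_charpoly_isHermitian {A : Matrix V V ℝ} (hA : A.IsHermitian) :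
    A.charpoly.roots = (univ.val : Multiset V).map hA.eigenvalues := by
  rw [charpoly_isHermitian hA]
  have : (∏ i, (X - C (hA.eigenvalues i)))
      = (Multiset.map (fun a => X - C a) ((univ.val : Multiset V).map hA.eigenvalues)).prod := by
    rw [Multiset.map_map]; rfl
  rw [this, roots_multiset_prod_X_sub_C]

lemma splits_charpoly_isHermitian {A : Matrix V V ℝ} (hA : A.IsHermitian) :
    A.charpoly.Splits := by
  rw [charpoly_isHermitian hA]
  exact Splits.prod fun i _ => Splits.X_sub_C _

lemma sum_eq_trace {A : Matrix V V ℝ} (hA : A.IsHermitian) {n : ℕ} (f : Fin n → ℝ)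
    (hf : (univ.val : Multiset (Fin n)).map f = A.charpoly.roots) :
    ∑ j, f j = A.trace := by
  rw [trace_eq_sum_roots_charpoly_of_splits (splits_charpoly_isHermitian hA), ← hf]
  rfl

end LapSpecAux

namespace LapSpecAux2

variable {V : Type*} [Fintype V] [DecidableEq V]

/-- Coordinate functional of an orthonormal basis, as a linear map. -/
noncomputable def coordFn (b : OrthonormalBasis V ℝ (EuclideanSpace ℝ V)) (i : V) :
    EuclideanSpace ℝ V →ₗ[ℝ] ℝ where
  toFun x := b.repr x i
  map_add' x y := by simp
  map_smul' c x := by simp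

lemma repr_toEuclideanLin {A : Matrix V V ℝ} (hA : A.IsHermitian) (x : EuclideanSpace ℝ V)
    (i : V) :
    hA.eigenvectorBasis.repr (toEuclideanLin A x) i
      = hA.eigenvalues i * hA.eigenvectorBasis.repr x i := by
  have hsym := (isHermitian_iff_isSymmetric.mp hA)
  have hT : toEuclideanLin A (hA.eigenvectorBasis i)
      = hA.eigenvalues i • hA.eigenvectorBasis i := by
    have h := hA.mulVec_eigenvectorBasis i
    rw [toEuclideanLin_apply]
    simp only [h, WithLp.toLp_smul, WithLp.toLp_ofLp]
  rw [OrthonormalBasis.repr_apply_apply, ← hsym (hA.eigenvectorBasis i) x, hT,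
    inner_smul_left, OrthonormalBasis.repr_apply_apply]
  simp

lemma inner_eq_sum (b : OrthonormalBasis V ℝ (EuclideanSpace ℝ V))
    (x y : EuclideanSpace ℝ V) : ⟪x, y⟫ = ∑ i, b.repr x i * b.repr y i := by
  calc ⟪x, y⟫ = (inner ℝ (b.repr x) (b.repr y) : ℝ) := (b.repr.inner_map_map x y).symm
    _ = ∑ i, b.repr x i * b.repr y i := by
        rw [PiLp.inner_apply]
        simp [RCLike.inner_apply, mul_comm]

lemma quad_eq_sum {A : Matrix V V ℝ} (hA : A.IsHermitian) (x : EuclideanSpace ℝ V) :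
    ⟪x, toEuclideanLin A x⟫ = ∑ i, hA.eigenvalues i * (hA.eigenvectorBasis.repr x i) ^ 2 := by
  rw [inner_eq_sum hA.eigenvectorBasis]
  refine Finset.sum_congr rfl fun i _ => ?_
  rw [repr_toEuclideanLin hA]
  ring

lemma quad_nonneg {B : Matrix V V ℝ} (hB : B.PosSemidef) (x : EuclideanSpace ℝ V) :
    0 ≤ ⟪x, toEuclideanLin B x⟫ := by
  have h := hB.dotProduct_mulVec_nonneg (x : V → ℝ)
  have h2 : ⟪x, toEuclideanLin B x⟫ = ∑ i, x i * (B *ᵥ (x : V → ℝ)) i := by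
    rw [PiLp.inner_apply]
    simp only [toEuclideanLin_apply, WithLp.equiv, Equiv.refl_symm, Equiv.refl_apply,
      RCLike.inner_apply, conj_trivial]
    exact Finset.sum_congr rfl fun i _ => mul_comm _ _
  have h3 : dotProduct (star (x : V → ℝ)) (B *ᵥ (x : V → ℝ))
      = ∑ i, x i * (B *ᵥ (x : V → ℝ)) i := by
    simp [dotProduct]
  rw [h2, ← h3]
  exact h

end LapSpecAux2

namespace LapSpecAux3
open LapSpecAux LapSpecAux2

variable {V : Type*} [Fintype V] [DecidableEq V]

lemma card_filter_eq {n : ℕ} {f : Fin n → ℝ} {e : V → ℝ}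
    (hfe : (univ.val : Multiset (Fin n)).map f = (univ.val : Multiset V).map e)
    (p : ℝ → Prop) [DecidablePred p] :
    (univ.filter fun j => p (f j)).card = (univ.filter fun i => p (e i)).card := by
  have h := congrArg (Multiset.countP p) hfe
  rw [Multiset.countP_map, Multiset.countP_map] at h
  rw [Finset.card_def, Finset.card_def, Finset.filter_val, Finset.filter_val]
  exact h

lemma weyl_monotone {A B : Matrix V V ℝ} (hA : A.IsHermitian) (hB : B.PosSemidef)
    (f g : Fin (Fintype.card V) → ℝ) (hf : Monotone f) (hg : Monotone g)
    (hfA : (univ.val : Multiset (Fin (Fintype.card V))).map f = A.charpoly.roots)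
    (hgAB : (univ.val : Multiset (Fin (Fintype.card V))).map g = (A + B).charpoly.roots)
    (k : Fin (Fintype.card V)) : f k ≤ g k := by
  have hAB : (A + B).IsHermitian := hA.add hB.1
  rw [roots_charpoly_isHermitian hA] at hfA
  rw [roots_charpoly_isHermitian hAB] at hgAB
  set eA := hA.eigenvalues with heA
  set eAB := hAB.eigenvalues with heAB
  set bA := hA.eigenvectorBasis with hbA
  set bAB := hAB.eigenvectorBasis with hbAB
  set S : Finset V := univ.filter (fun i => f k ≤ eA i) with hS
  set T : Finset V := univ.filter (fun i => eAB i ≤ g k) with hT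
  have hScard : Fintype.card V - (k : ℕ) ≤ S.card := by
    rw [← card_filter_eq hfA (fun r => f k ≤ r)]
    calc Fintype.card V - (k : ℕ) = (Finset.Ici k).card := (Fin.card_Ici k).symm
      _ ≤ _ := Finset.card_le_card fun j hj =>
          Finset.mem_filter.2 ⟨Finset.mem_univ _, hf (Finset.mem_Ici.mp hj)⟩
  have hTcard : (k : ℕ) + 1 ≤ T.card := by
    rw [← card_filter_eq hgAB (fun r => r ≤ g k)]
    calc (k : ℕ) + 1 = (Finset.Iic k).card := (Fin.card_Iic k).symm
      _ ≤ _ := Finset.card_le_card fun j hj =>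
          Finset.mem_filter.2 ⟨Finset.mem_univ _, hg (Finset.mem_Iic.mp hj)⟩
  -- a nonzero vector in the intersection of the two spectral subspaces
  let Φ : EuclideanSpace ℝ V →ₗ[ℝ] ((Sᶜ : Finset V) → ℝ) × ((Tᶜ : Finset V) → ℝ) :=
    LinearMap.prod (LinearMap.pi fun i : (Sᶜ : Finset V) => coordFn bA i.1)
      (LinearMap.pi fun i : (Tᶜ : Finset V) => coordFn bAB i.1)
  have hker : LinearMap.ker Φ ≠ ⊥ := by
    intro hbot
    have hinj : Function.Injective Φ := LinearMap.ker_eq_bot.mp hbot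
    have hle := LinearMap.finrank_le_finrank_of_injective hinj
    rw [finrank_euclideanSpace, Module.finrank_prod, Module.finrank_pi, Module.finrank_pi,
      Fintype.card_coe, Fintype.card_coe, Finset.card_compl, Finset.card_compl] at hle
    have h1 : S.card ≤ Fintype.card V := Finset.card_le_univ S
    have h2 : T.card ≤ Fintype.card V := Finset.card_le_univ T
    have h3 : (k : ℕ) < Fintype.card V := k.isLt
    omega
  obtain ⟨x, hxker, hx0⟩ := Submodule.exists_mem_ne_zero_of_ne_bot hker
  have hΦ := LinearMap.mem_ker.mp hxker
  have hxS : ∀ i ∉ S, bA.repr x i = 0 := by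
    intro i hi
    have := congrFun (congrArg Prod.fst hΦ) ⟨i, Finset.mem_compl.2 hi⟩
    exact this
  have hxT : ∀ i ∉ T, bAB.repr x i = 0 := by
    intro i hi
    have := congrFun (congrArg Prod.snd hΦ) ⟨i, Finset.mem_compl.2 hi⟩
    exact this
  have hnorm : 0 < ∑ i, (bA.repr x i) ^ 2 := by
    have hne : bA.repr x ≠ 0 := fun hc => hx0 (by
      have := congrArg bA.repr.symm hc
      simpa using this)
    obtain ⟨i0, hi0⟩ : ∃ i, bA.repr x i ≠ 0 := by
      by_contra hcon
      push_neg at hcon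
      exact hne (PiLp.ext hcon)
    refine Finset.sum_pos' (fun i _ => sq_nonneg _) ⟨i0, Finset.mem_univ _, ?_⟩
    positivity
  have hsum_eq : ∑ i, (bA.repr x i) ^ 2 = ∑ i, (bAB.repr x i) ^ 2 := by
    have e1 := inner_eq_sum bA x x
    have e2 := inner_eq_sum bAB x x
    simp only [← sq] at e1 e2
    rw [← e1, ← e2]
  have h1 : f k * ∑ i, (bA.repr x i) ^ 2 ≤ ⟪x, toEuclideanLin A x⟫ := by
    rw [quad_eq_sum hA x, Finset.mul_sum]
    refine Finset.sum_le_sum fun i _ => ?_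
    by_cases hi : i ∈ S
    · exact mul_le_mul_of_nonneg_right (Finset.mem_filter.mp hi).2 (sq_nonneg _)
    · rw [hxS i hi]
      simp
  have h2 : ⟪x, toEuclideanLin (A + B) x⟫ ≤ g k * ∑ i, (bAB.repr x i) ^ 2 := by
    rw [quad_eq_sum hAB x, Finset.mul_sum]
    refine Finset.sum_le_sum fun i _ => ?_
    by_cases hi : i ∈ T
    · exact mul_le_mul_of_nonneg_right (Finset.mem_filter.mp hi).2 (sq_nonneg _)
    · rw [hxT i hi]
      simp
  have h3 : ⟪x, toEuclideanLin A x⟫ ≤ ⟪x, toEuclideanLin (A + B) x⟫ := by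
    have hq := quad_nonneg hB x
    have : toEuclideanLin (A + B) x = toEuclideanLin A x + toEuclideanLin B x := by
      rw [map_add]
      rfl
    rw [this, inner_add_right]
    linarith
  have hfg : f k * ∑ i, (bA.repr x i) ^ 2 ≤ g k * ∑ i, (bA.repr x i) ^ 2 := by
    rw [hsum_eq] at h1 ⊢ <;> linarith
  exact le_of_mul_le_mul_right (by linarith [hfg]) hnorm

end LapSpecAux3

namespace LapSpecAux4
variable {V : Type*} [Fintype V] [DecidableEq V]

lemma multiset_map_equiv {α β : Type*} [Fintype α] [Fintype β] (h : α ≃ β) (w : β → ℝ) :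
    (univ.val : Multiset α).map (w ∘ h) = (univ.val : Multiset β).map w := by
  rw [← Multiset.map_map]
  congr 1
  have := Finset.map_univ_equiv h
  calc Multiset.map (⇑h) univ.val = (Finset.map h.toEmbedding univ).val := by
        rw [Finset.map_val]; rfl
    _ = univ.val := congrArg Finset.val this

lemma lapMatrix_add_of (A B C : SimpleGraph V) [DecidableRel A.Adj] [DecidableRel B.Adj]
    [DecidableRel C.Adj] (h : ∀ i j, C.Adj i j ↔ (A.Adj i j ∨ B.Adj i j))
    (hdisj : ∀ i j, ¬(A.Adj i j ∧ B.Adj i j)) :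
    A.lapMatrix ℝ + B.lapMatrix ℝ = C.lapMatrix ℝ := by
  have hdeg : ∀ v, A.degree v + B.degree v = C.degree v := by
    intro v
    have hu : A.neighborFinset v ∪ B.neighborFinset v = C.neighborFinset v := by
      ext u
      simp only [Finset.mem_union, SimpleGraph.mem_neighborFinset]
      exact (h v u).symm
    have hd : Disjoint (A.neighborFinset v) (B.neighborFinset v) := by
      rw [Finset.disjoint_left]
      intro u h1 h2
      rw [SimpleGraph.mem_neighborFinset] at h1 h2
      exact hdisj v u ⟨h1, h2⟩
    rw [SimpleGraph.degree, SimpleGraph.degree, SimpleGraph.degree, ← hu,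
      Finset.card_union_of_disjoint hd]
  ext i j
  simp only [SimpleGraph.lapMatrix, SimpleGraph.degMatrix, Matrix.sub_apply, Matrix.add_apply,
    Matrix.diagonal_apply, SimpleGraph.adjMatrix_apply]
  by_cases hij : i = j
  · subst hij
    simp only [if_pos rfl, SimpleGraph.irrefl, if_false]
    have := hdeg i
    push_cast [← this]
    ring
  · by_cases ha : A.Adj i j <;> by_cases hb : B.Adj i j
    · exact absurd ⟨ha, hb⟩ (hdisj i j)
    · have hc : C.Adj i j := (h i j).mpr (Or.inl ha)
      simp [hij, ha, hb, hc]
    · have hc : C.Adj i j := (h i j).mpr (Or.inr hb)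
      simp [hij, ha, hb, hc]
    · have hc : ¬ C.Adj i j := fun hcc => by rcases (h i j).mp hcc with h' | h' <;> tauto
      simp [hij, ha, hb, hc]

lemma trace_lapMatrix (G : SimpleGraph V) [DecidableRel G.Adj] :
    (G.lapMatrix ℝ).trace = 2 * (G.edgeFinset.card : ℝ) := by
  rw [Matrix.trace]
  have h : ∀ i : V, (G.lapMatrix ℝ).diag i = (G.degree i : ℝ) := by
    intro i
    simp [SimpleGraph.lapMatrix, SimpleGraph.degMatrix, Matrix.diag, SimpleGraph.irrefl]
  rw [Finset.sum_congr rfl fun i _ => h i, ← Nat.cast_sum, G.sum_degrees_eq_twice_card_edges]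
  push_cast
  ring

end LapSpecAux4


open LapSpecAux LapSpecAux2 LapSpecAux3 LapSpecAux4 Matrix Finset Polynomial

/-- The `ℓ¹` distance between the ordered Kirchhoff spectra of two graphs on the same
vertex set is at most four times the number of edges in the symmetric difference of
the edge sets. -/
theorem lapMatrix_spectra_dist_le {V : Type*} [Fintype V] [DecidableEq V]
    (G H : SimpleGraph V) [DecidableRel G.Adj] [DecidableRel H.Adj]
    (lam mu : Fin (Fintype.card V) → ℝ) (hlam : Monotone lam) (hmu : Monotone mu)
    (hlamG : (G.lapMatrix ℝ).charpoly.roots =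
      (Finset.univ.val : Multiset (Fin (Fintype.card V))).map lam)
    (hmuH : (H.lapMatrix ℝ).charpoly.roots =
      (Finset.univ.val : Multiset (Fin (Fintype.card V))).map mu) :
    ∑ j, |lam j - mu j| ≤ 4 * (symmDiff G.edgeFinset H.edgeFinset).card := by
  classical
  letI instK : DecidableRel (G ⊓ H).Adj := fun a b => instDecidableAnd
  letI instGH : DecidableRel (G \ H).Adj := fun a b => instDecidableAnd
  letI instHG : DecidableRel (H \ G).Adj := fun a b => instDecidableAnd
  have hKpsd : ((G ⊓ H).lapMatrix ℝ).PosSemidef := (G ⊓ H).posSemidef_lapMatrix (R := ℝ)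
  have hKherm := hKpsd.1
  have hGdec : (G ⊓ H).lapMatrix ℝ + (G \ H).lapMatrix ℝ = G.lapMatrix ℝ := by
    refine lapMatrix_add_of _ _ _ (fun i j => ?_) (fun i j => ?_)
    · constructor
      · intro hg
        by_cases hh : H.Adj i j
        · exact Or.inl ⟨hg, hh⟩
        · exact Or.inr ⟨hg, hh⟩
      · rintro (⟨h1, _⟩ | ⟨h1, _⟩) <;> exact h1
    · rintro ⟨⟨_, h1⟩, ⟨_, h2⟩⟩
      exact h2 h1
  have hHdec : (G ⊓ H).lapMatrix ℝ + (H \ G).lapMatrix ℝ = H.lapMatrix ℝ := by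
    refine lapMatrix_add_of _ _ _ (fun i j => ?_) (fun i j => ?_)
    · constructor
      · intro hg
        by_cases hh : G.Adj i j
        · exact Or.inl ⟨hh, hg⟩
        · exact Or.inr ⟨hg, hh⟩
      · rintro (⟨_, h1⟩ | ⟨h1, _⟩) <;> exact h1
    · rintro ⟨⟨h1, _⟩, ⟨_, h2⟩⟩
      exact h2 h1
  -- sorted spectrum of the intersection graph
  set w : Fin (Fintype.card V) → ℝ := hKherm.eigenvalues ∘ (Fintype.equivFin V).symm with hw
  set ν : Fin (Fintype.card V) → ℝ := w ∘ Tuple.sort w with hν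
  have hνmono : Monotone ν := Tuple.monotone_sort w
  have hνroots : (univ.val : Multiset (Fin (Fintype.card V))).map ν
      = ((G ⊓ H).lapMatrix ℝ).charpoly.roots := by
    rw [roots_charpoly_isHermitian hKherm, hν, hw]
    calc (univ.val).map ((hKherm.eigenvalues ∘ (Fintype.equivFin V).symm) ∘ Tuple.sort w)
        = (univ.val).map (hKherm.eigenvalues ∘ (Fintype.equivFin V).symm) :=
          multiset_map_equiv (Tuple.sort w : Fin _ ≃ Fin _) _
      _ = (univ.val).map hKherm.eigenvalues :=
          multiset_map_equiv (Fintype.equivFin V).symm _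
  have hν_lam : ∀ k, ν k ≤ lam k := by
    intro k
    refine weyl_monotone hKherm ((G \ H).posSemidef_lapMatrix (R := ℝ)) ν lam hνmono hlam hνroots ?_ k
    rw [hGdec, ← hlamG]
  have hν_mu : ∀ k, ν k ≤ mu k := by
    intro k
    refine weyl_monotone hKherm ((H \ G).posSemidef_lapMatrix (R := ℝ)) ν mu hνmono hmu hνroots ?_ k
    rw [hHdec, ← hmuH]
  -- sums and traces
  have hGherm : (G.lapMatrix ℝ).IsHermitian := (G.posSemidef_lapMatrix (R := ℝ)).1
  have hHherm : (H.lapMatrix ℝ).IsHermitian := (H.posSemidef_lapMatrix (R := ℝ)).1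
  have hsl : ∑ j, lam j = (G.lapMatrix ℝ).trace := sum_eq_trace hGherm lam hlamG.symm
  have hsm : ∑ j, mu j = (H.lapMatrix ℝ).trace := sum_eq_trace hHherm mu hmuH.symm
  have hsν : ∑ j, ν j = ((G ⊓ H).lapMatrix ℝ).trace := sum_eq_trace hKherm ν hνroots
  have htG : (G.lapMatrix ℝ).trace
      = ((G ⊓ H).lapMatrix ℝ).trace + ((G \ H).lapMatrix ℝ).trace := by
    rw [← hGdec, Matrix.trace_add]
  have htH : (H.lapMatrix ℝ).trace
      = ((G ⊓ H).lapMatrix ℝ).trace + ((H \ G).lapMatrix ℝ).trace := by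
    rw [← hHdec, Matrix.trace_add]
  have htGH : ((G \ H).lapMatrix ℝ).trace = 2 * ((G \ H).edgeFinset.card : ℝ) := by
    rw [trace_lapMatrix]
    congr!
  have htHG : ((H \ G).lapMatrix ℝ).trace = 2 * ((H \ G).edgeFinset.card : ℝ) := by
    rw [trace_lapMatrix]
    congr!
  have hcard : (G \ H).edgeFinset.card + (H \ G).edgeFinset.card
      = (symmDiff G.edgeFinset H.edgeFinset).card := by
    rw [symmDiff_def, SimpleGraph.edgeFinset_sdiff, SimpleGraph.edgeFinset_sdiff]
    exact (Finset.card_union_of_disjoint disjoint_sdiff_sdiff).symm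
  calc ∑ j, |lam j - mu j| ≤ ∑ j, ((lam j - ν j) + (mu j - ν j)) := by
        refine Finset.sum_le_sum fun j _ => ?_
        have h1 := hν_lam j
        have h2 := hν_mu j
        refine abs_sub_le_iff.mpr ⟨by linarith, by linarith⟩
    _ = (∑ j, lam j) + (∑ j, mu j) - 2 * ∑ j, ν j := by
        rw [Finset.sum_add_distrib, Finset.sum_sub_distrib, Finset.sum_sub_distrib]
        ring
    _ = 2 * (((G \ H).edgeFinset.card : ℝ) + ((H \ G).edgeFinset.card : ℝ)) := by
        rw [hsl, hsm, hsν, htG, htH, htGH, htHG]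
        ring
    _ = 2 * ((symmDiff G.edgeFinset H.edgeFinset).card : ℝ) := by
        rw [← hcard]
        push_cast
        ring
    _ ≤ 4 * ((symmDiff G.edgeFinset H.edgeFinset).card : ℝ) := by
        have : (0:ℝ) ≤ ((symmDiff G.edgeFinset H.edgeFinset).card : ℝ) := Nat.cast_nonneg _
        linarith
end

section
/- Let G be a finite abstract simplicial complex and G₁ its Barycentric refinement. Then for every k ≥ 0, the number f_k(G₁) of simplices of G₁ of cardinality k+1 (that is, the number of chains x₀ ⊊ x₁ ⊊ … ⊊ x_k of elements of G) equals Σ_{x ∈ G} (number of surjective functions from x onto a fixed (k+1)-element set). Equivalently, f_k(G₁) = Σ_j (k+1)! · S(j+1, k+1) · f_j(G), where S denotes Stirling numbers of the second kind. -/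
open Classical in
/-- The Barycentric refinement of a finite abstract simplicial complex `G` (given as a
finite set of finsets): its simplices are the nonempty chains in `(G, ⊊)`. -/
noncomputable def baryRefine {V : Type*} (G : Finset (Finset V)) :
    Finset (Finset (Finset V)) :=
  G.powerset.filter fun c => c.Nonempty ∧
    (↑c : Set (Finset V)).Pairwise fun x y => x ⊂ y ∨ y ⊂ x

open Classical in
/-- The `f`-vector: `fVec G k` is the number of simplices of `G` of cardinality `k+1`. -/
noncomputable def fVec {α : Type*} (G : Finset (Finset α)) (k : ℕ) : ℕ :=
  (G.filter fun x => x.card = k + 1).card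

/-- Stirling numbers of the second kind. -/
def stirling2 : ℕ → ℕ → ℕ
  | 0, 0 => 1
  | 0, _ + 1 => 0
  | _ + 1, 0 => 0
  | n + 1, k + 1 => (k + 1) * stirling2 n (k + 1) + stirling2 n k


open Finset Function

section Aux

section ChainLemmas
variable {V : Type*} [DecidableEq V]

/-- level of a vertex in a chain -/
def lev (c : Finset (Finset V)) (v : V) : ℕ :=
  (c.filter fun y => v ∉ y).card

/-- rank of a set in a chain -/
def rnk (c : Finset (Finset V)) (y : Finset V) : ℕ :=
  (c.filter fun z => z ⊂ y).card

variable {c : Finset (Finset V)}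

lemma chain_exists_max
    (hc : (↑c : Set (Finset V)).Pairwise fun x y => x ⊂ y ∨ y ⊂ x)
    (hne : c.Nonempty) : ∃ t ∈ c, ∀ y ∈ c, y ⊆ t := by
  obtain ⟨t, ht, hmax⟩ := c.exists_max_image Finset.card hne
  refine ⟨t, ht, fun y hy => ?_⟩
  rcases eq_or_ne y t with rfl | hne'
  · exact subset_rfl
  · rcases hc hy ht hne' with h | h
    · exact h.subset
    · exact absurd (Finset.card_lt_card h) (not_lt.2 (hmax y hy))

lemma chain_sup_mem
    (hc : (↑c : Set (Finset V)).Pairwise fun x y => x ⊂ y ∨ y ⊂ x)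
    (hne : c.Nonempty) : c.sup id ∈ c := by
  obtain ⟨t, ht, hmax⟩ := chain_exists_max hc hne
  have : c.sup id = t := le_antisymm (Finset.sup_le fun y hy => hmax y hy)
    (Finset.le_sup (f := id) ht)
  rw [this]; exact ht

lemma subset_sup {y : Finset V} (hy : y ∈ c) : y ⊆ c.sup id :=
  Finset.le_sup (f := id) hy

lemma rnk_lt {y : Finset V} (hy : y ∈ c) : rnk c y < c.card := by
  have hsub : (c.filter fun z => z ⊂ y) ⊆ c.erase y := by
    intro z hz
    rw [Finset.mem_filter] at hz
    exact Finset.mem_erase.2 ⟨ne_of_lt hz.2, hz.1⟩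
  exact lt_of_le_of_lt (Finset.card_le_card hsub) (Finset.card_erase_lt_of_mem hy)

lemma rnk_lt_rnk {y z : Finset V} (hz : z ∈ c) (hzy : z ⊂ y) :
    rnk c z < rnk c y := by
  apply Finset.card_lt_card
  have hsub : (c.filter fun w => w ⊂ z) ⊆ c.filter fun w => w ⊂ y := by
    intro w hw
    rw [Finset.mem_filter] at hw ⊢
    exact ⟨hw.1, lt_trans hw.2 hzy⟩
  rw [Finset.ssubset_iff_of_subset hsub]
  exact ⟨z, Finset.mem_filter.2 ⟨hz, hzy⟩, fun h => lt_irrefl z (Finset.mem_filter.1 h).2⟩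

lemma rnk_surj
    (hc : (↑c : Set (Finset V)).Pairwise fun x y => x ⊂ y ∨ y ⊂ x) :
    ∀ i < c.card, ∃ y ∈ c, rnk c y = i := by
  have hinj : Set.InjOn (rnk c) ↑c := by
    intro y hy z hz hyz
    by_contra hne
    rcases hc hy hz hne with h | h
    · exact absurd hyz (ne_of_lt (rnk_lt_rnk hy h))
    · exact absurd hyz.symm (ne_of_lt (rnk_lt_rnk hz h))
  have himg : c.image (rnk c) ⊆ Finset.range c.card := by
    intro i hi
    obtain ⟨y, hy, rfl⟩ := Finset.mem_image.1 hi
    exact Finset.mem_range.2 (rnk_lt hy)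
  have hcard : (c.image (rnk c)).card = c.card := Finset.card_image_of_injOn hinj
  have : c.image (rnk c) = Finset.range c.card :=
    Finset.eq_of_subset_of_card_le himg (by rw [hcard, Finset.card_range])
  intro i hi
  have : i ∈ c.image (rnk c) := this ▸ Finset.mem_range.2 hi
  obtain ⟨y, hy, h⟩ := Finset.mem_image.1 this
  exact ⟨y, hy, h⟩

lemma lev_filter_subset
    (hc : (↑c : Set (Finset V)).Pairwise fun x y => x ⊂ y ∨ y ⊂ x)
    {y : Finset V} (hy : y ∈ c) {v : V} (hv : v ∈ y) :
    (c.filter fun z => v ∉ z) ⊆ c.filter fun z => z ⊂ y := by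
  intro z hz
  rw [Finset.mem_filter] at hz ⊢
  refine ⟨hz.1, ?_⟩
  rcases eq_or_ne z y with rfl | hne
  · exact absurd hv hz.2
  rcases hc hz.1 hy hne with h | h
  · exact h
  · exact absurd (h.subset hv) hz.2

lemma lev_le_rnk
    (hc : (↑c : Set (Finset V)).Pairwise fun x y => x ⊂ y ∨ y ⊂ x)
    {y : Finset V} (hy : y ∈ c) {v : V} (hv : v ∈ y) :
    lev c v ≤ rnk c y :=
  Finset.card_le_card (lev_filter_subset hc hy hv)

lemma downset_eq
    (hc : (↑c : Set (Finset V)).Pairwise fun x y => x ⊂ y ∨ y ⊂ x)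
    {y : Finset V} (hy : y ∈ c) :
    ((c.sup id).filter fun v => lev c v ≤ rnk c y) = y := by
  ext v
  rw [Finset.mem_filter]
  constructor
  · rintro ⟨hv, hlev⟩
    by_contra hvy
    have hss : (c.filter fun z => z ⊂ y) ⊂ c.filter fun z => v ∉ z := by
      constructor
      · intro z hz
        rw [Finset.mem_filter] at hz ⊢
        exact ⟨hz.1, fun hvz => hvy (hz.2.subset hvz)⟩
      · intro hsub
        have : y ∈ c.filter fun z => v ∉ z := Finset.mem_filter.2 ⟨hy, hvy⟩
        have := Finset.mem_filter.1 (hsub this)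
        exact lt_irrefl y this.2
    exact absurd hlev (not_le.2 (Finset.card_lt_card hss))
  · intro hv
    exact ⟨subset_sup hy hv, lev_le_rnk hc hy hv⟩

lemma lev_lt {v : V} (hv : v ∈ c.sup id) : lev c v < c.card := by
  obtain ⟨y, hy, hvy⟩ := Finset.mem_sup.1 hv
  have hsub : (c.filter fun z => v ∉ z) ⊆ c.erase y := by
    intro z hz
    rw [Finset.mem_filter] at hz
    refine Finset.mem_erase.2 ⟨?_, hz.1⟩
    rintro rfl; exact hz.2 hvy
  exact lt_of_le_of_lt (Finset.card_le_card hsub) (Finset.card_erase_lt_of_mem hy)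

lemma lev_surj
    (hc : (↑c : Set (Finset V)).Pairwise fun x y => x ⊂ y ∨ y ⊂ x)
    (hG : ∀ y ∈ c, y.Nonempty) {y : Finset V} (hy : y ∈ c) :
    ∃ v ∈ c.sup id, lev c v = rnk c y := by
  set d := c.filter fun z => z ⊂ y with hd
  have hdsub : ∀ z ∈ d, z ⊆ d.sup id := fun z hz => Finset.le_sup (f := id) hz
  have hdy : d.sup id ⊂ y := by
    rcases d.eq_empty_or_nonempty with he | hne
    · rw [he]
      simpa [Finset.sup_empty] using
        (Finset.empty_ssubset).2 (hG y hy)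
    · have hdc : (↑d : Set (Finset V)).Pairwise fun x y => x ⊂ y ∨ y ⊂ x :=
        hc.mono (Finset.coe_subset.2 (Finset.filter_subset _ c))
      have := chain_sup_mem hdc hne
      exact (Finset.mem_filter.1 this).2
  obtain ⟨v, hvy, hvt⟩ := Finset.exists_of_ssubset hdy
  refine ⟨v, subset_sup hy hvy, ?_⟩
  unfold lev rnk
  congr 1
  apply Finset.Subset.antisymm
  · exact lev_filter_subset hc hy hvy
  · intro z hz
    rw [Finset.mem_filter] at hz ⊢
    refine ⟨hz.1, fun hvz => hvt ?_⟩
    exact hdsub z (Finset.mem_filter.2 hz) hvz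

end ChainLemmas

lemma natCard_surj_congr {α β γ δ : Type*} (e : α ≃ β) (e' : γ ≃ δ) :
    Nat.card {f : α → γ // Surjective f} = Nat.card {f : β → δ // Surjective f} :=
  Nat.card_congr <| Equiv.subtypeEquiv (e.arrowCongr e') fun f => by
    rw [show (e.arrowCongr e') f = ⇑e' ∘ f ∘ ⇑e.symm from rfl,
      Equiv.comp_surjective, Equiv.surjective_comp]

/-- number of surjections from `Fin n` onto `Fin k` -/
noncomputable def surjCard (n k : ℕ) : ℕ :=
  Nat.card {f : Fin n → Fin k // Surjective f}

lemma surjCard_zero_zero : surjCard 0 0 = 1 := by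
  have : Nonempty {f : Fin 0 → Fin 0 // Surjective f} :=
    ⟨⟨fun i => i.elim0, fun b => b.elim0⟩⟩
  have hs : Subsingleton {f : Fin 0 → Fin 0 // Surjective f} :=
    ⟨fun f g => Subtype.ext (funext fun i => i.elim0)⟩
  exact Nat.card_unique

lemma surjCard_zero_succ (k : ℕ) : surjCard 0 (k + 1) = 0 := by
  have : IsEmpty {f : Fin 0 → Fin (k + 1) // Surjective f} := by
    refine ⟨fun f => ?_⟩
    obtain ⟨i, _⟩ := f.2 0
    exact i.elim0
  exact Nat.card_of_isEmpty

lemma surjCard_succ_zero (n : ℕ) : surjCard (n + 1) 0 = 0 := by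
  have : IsEmpty {f : Fin (n + 1) → Fin 0 // Surjective f} :=
    ⟨fun f => (f.1 0).elim0⟩
  exact Nat.card_of_isEmpty

lemma cons_surjective_iff {n m : ℕ} (a : Fin (m + 1)) (g : Fin n → Fin (m + 1)) :
    Surjective (Fin.cons a g : Fin (n + 1) → Fin (m + 1)) ↔
      Surjective g ∨ ((∀ i, g i ≠ a) ∧ Surjective (Fin.cons a g)) := by
  constructor
  · intro h
    by_cases hg : Surjective g
    · exact Or.inl hg
    · refine Or.inr ⟨fun i hi => hg fun b => ?_, h⟩
      obtain ⟨j, hj⟩ := h b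
      induction j using Fin.cases with
      | zero => rw [Fin.cons_zero] at hj; exact ⟨i, hi.trans hj⟩
      | succ i' => rw [Fin.cons_succ] at hj; exact ⟨i', hj⟩
  · rintro (hg | ⟨_, h⟩)
    · intro b
      obtain ⟨i, hi⟩ := hg b
      exact ⟨i.succ, by rwa [Fin.cons_succ]⟩
    · exact h

def missingEquiv {n m : ℕ} (a : Fin (m + 1)) :
    {g : Fin n → Fin (m + 1) // (∀ i, g i ≠ a) ∧ Surjective (Fin.cons a g)} ≃
      {g' : Fin n → {b : Fin (m + 1) // b ≠ a} // Surjective g'} where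
  toFun g := ⟨fun i => ⟨g.1 i, g.2.1 i⟩, by
    rintro ⟨b, hb⟩
    obtain ⟨j, hj⟩ := g.2.2 b
    induction j using Fin.cases with
    | zero => rw [Fin.cons_zero] at hj; exact absurd hj.symm hb
    | succ i' => rw [Fin.cons_succ] at hj; exact ⟨i', Subtype.ext hj⟩⟩
  invFun g' := ⟨fun i => (g'.1 i).1, fun i => (g'.1 i).2, by
    intro b
    by_cases hb : b = a
    · exact ⟨0, by rw [Fin.cons_zero, hb]⟩
    · obtain ⟨i, hi⟩ := g'.2 ⟨b, hb⟩
      exact ⟨i.succ, by rw [Fin.cons_succ]; exact congrArg Subtype.val hi⟩⟩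
  left_inv g := Subtype.ext rfl
  right_inv g' := Subtype.ext (funext fun i => Subtype.ext rfl)

noncomputable def neEquivFin {m : ℕ} (a : Fin (m + 1)) :
    {b : Fin (m + 1) // b ≠ a} ≃ Fin m :=
  Fintype.equivFinOfCardEq (by
    have h := Fintype.card_subtype_compl (fun b : Fin (m + 1) => b = a)
    simp only [Fintype.card_subtype_eq, Fintype.card_fin, Nat.add_sub_cancel] at h
    exact h)

lemma surjCard_rec (n m : ℕ) :
    surjCard (n + 1) (m + 1) = (m + 1) * surjCard n (m + 1) + (m + 1) * surjCard n m := by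
  classical
  have h1 : surjCard (n + 1) (m + 1)
      = Nat.card {p : Fin (m + 1) × (Fin n → Fin (m + 1)) //
          Surjective (Fin.cons p.1 p.2)} :=
    (Nat.card_congr (Equiv.subtypeEquiv (Fin.consEquiv fun _ => Fin (m + 1))
      fun p => Iff.rfl)).symm
  have h2 : Nat.card {p : Fin (m + 1) × (Fin n → Fin (m + 1)) //
          Surjective (Fin.cons p.1 p.2)}
      = ∑ a : Fin (m + 1), Fintype.card {g : Fin n → Fin (m + 1) //
          Surjective (Fin.cons a g)} := by
    rw [Nat.card_congr (Equiv.subtypeProdEquivSigmaSubtype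
      fun (a : Fin (m + 1)) (g : Fin n → Fin (m + 1)) => Surjective (Fin.cons a g))]
    rw [Nat.card_eq_fintype_card, Fintype.card_sigma]
  have h3 : ∀ a : Fin (m + 1), Fintype.card {g : Fin n → Fin (m + 1) //
          Surjective (Fin.cons a g)}
      = surjCard n (m + 1) + surjCard n m := by
    intro a
    have hsplit : (univ.filter fun g : Fin n → Fin (m + 1) => Surjective (Fin.cons a g))
        = (univ.filter fun g => Surjective g)
          ∪ (univ.filter fun g => (∀ i, g i ≠ a) ∧ Surjective (Fin.cons a g)) := by
      rw [← Finset.filter_or]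
      exact Finset.filter_congr fun g _ => cons_surjective_iff a g
    have hdisj : Disjoint (univ.filter fun g : Fin n → Fin (m + 1) => Surjective g)
        (univ.filter fun g => (∀ i, g i ≠ a) ∧ Surjective (Fin.cons a g)) := by
      rw [Finset.disjoint_left]
      intro g hg1 hg2
      rw [Finset.mem_filter] at hg1 hg2
      obtain ⟨i, hi⟩ := hg1.2 a
      exact hg2.2.1 i hi
    have hm : Fintype.card {g : Fin n → Fin (m + 1) //
          (∀ i, g i ≠ a) ∧ Surjective (Fin.cons a g)} = surjCard n m := by
      rw [← Nat.card_eq_fintype_card, Nat.card_congr (missingEquiv a)]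
      exact natCard_surj_congr (Equiv.refl (Fin n)) (neEquivFin a)
    rw [Fintype.card_subtype, hsplit, Finset.card_union_of_disjoint hdisj,
      ← Fintype.card_subtype, ← Fintype.card_subtype, ← hm,
      surjCard, Nat.card_eq_fintype_card]
  rw [h1, h2]
  simp only [h3]
  rw [Finset.sum_add_distrib, Finset.sum_const, Finset.sum_const, Finset.card_univ,
    Fintype.card_fin, smul_eq_mul, smul_eq_mul]

lemma surjCard_eq (n k : ℕ) : surjCard n k = k.factorial * stirling2 n k := by
  induction n generalizing k with
  | zero =>
    cases k with
    | zero => rw [surjCard_zero_zero]; simp [stirling2]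
    | succ k => rw [surjCard_zero_succ]; simp [stirling2]
  | succ n ih =>
    cases k with
    | zero => rw [surjCard_succ_zero]; simp [stirling2]
    | succ m =>
      rw [surjCard_rec, ih, ih]
      show _ = (m + 1).factorial * ((m + 1) * stirling2 n (m + 1) + stirling2 n m)
      rw [Nat.factorial_succ]
      ring


lemma surjCard_eq' (n k : ℕ) :
    Nat.card {f : Fin n → Fin k // Surjective f} = k.factorial * stirling2 n k :=
  surjCard_eq n k

lemma sigma_fun_ext {α β : Type*} {s t : Finset α} (h : s = t)
    {F : {v // v ∈ s} → β} {f : {v // v ∈ t} → β}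
    (hp : ∀ (v : α) (hv : v ∈ s), F ⟨v, hv⟩ = f ⟨v, h ▸ hv⟩) :
    (⟨s, F⟩ : Σ u : Finset α, ({v // v ∈ u} → β)) = ⟨t, f⟩ := by
  subst h
  exact congrArg (Sigma.mk s) (funext fun w => hp w.1 w.2)

section Ymap
variable {V : Type*} [DecidableEq V] {k : ℕ}

open Classical in
noncomputable def ymap (x : Finset V) (f : {v : V // v ∈ x} → Fin (k + 1))
    (i : Fin (k + 1)) : Finset V :=
  x.filter fun v => ∀ h : v ∈ x, f ⟨v, h⟩ ≤ i

lemma mem_ymap_iff {x : Finset V} {f : {v : V // v ∈ x} → Fin (k + 1)} {i : Fin (k + 1)}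
    {v : V} (hv : v ∈ x) : v ∈ ymap x f i ↔ f ⟨v, hv⟩ ≤ i := by
  unfold ymap
  rw [Finset.mem_filter]
  exact ⟨fun h => h.2 hv, fun h => ⟨hv, fun h' => h⟩⟩

lemma ymap_subset (x : Finset V) (f : {v : V // v ∈ x} → Fin (k + 1)) (i : Fin (k + 1)) :
    ymap x f i ⊆ x := Finset.filter_subset _ _

lemma ymap_mono {x : Finset V} {f : {v : V // v ∈ x} → Fin (k + 1)} {i j : Fin (k + 1)}
    (h : i ≤ j) : ymap x f i ⊆ ymap x f j := by
  intro v hv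
  have hvx := ymap_subset x f i hv
  rw [mem_ymap_iff hvx] at hv ⊢
  exact le_trans hv h

lemma ymap_nonempty {x : Finset V} {f : {v : V // v ∈ x} → Fin (k + 1)}
    (hf : Surjective f) (i : Fin (k + 1)) : (ymap x f i).Nonempty := by
  obtain ⟨v, hv⟩ := hf 0
  refine ⟨v.1, (mem_ymap_iff v.2).2 ?_⟩
  have h0 : f ⟨v.1, v.2⟩ = 0 := hv
  rw [h0]
  exact Fin.zero_le i

lemma ymap_lt_ne {x : Finset V} {f : {v : V // v ∈ x} → Fin (k + 1)}
    (hf : Surjective f) {i j : Fin (k + 1)} (hij : i < j) : ymap x f i ≠ ymap x f j := by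
  obtain ⟨v, hv⟩ := hf j
  intro heq
  have h1 : v.1 ∈ ymap x f j := (mem_ymap_iff v.2).2 (le_of_eq (show f ⟨v.1, v.2⟩ = j from hv))
  rw [← heq] at h1
  have h2 := (mem_ymap_iff v.2).1 h1
  rw [show f ⟨v.1, v.2⟩ = j from hv] at h2
  exact absurd hij (not_lt.2 h2)

lemma ymap_inj {x : Finset V} {f : {v : V // v ∈ x} → Fin (k + 1)}
    (hf : Surjective f) : Injective (fun i : Fin (k + 1) => ymap x f i) := by
  intro i j h
  rcases lt_trichotomy i j with hij | hij | hij
  · exact absurd h (ymap_lt_ne hf hij)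
  · exact hij
  · exact absurd h.symm (ymap_lt_ne hf hij)

lemma ymap_last (x : Finset V) (f : {v : V // v ∈ x} → Fin (k + 1)) :
    ymap x f (Fin.last k) = x :=
  Finset.filter_true_of_mem fun v hv => fun h => Fin.le_last _

end Ymap

end Aux

/-- The number of `(k+1)`-element chains of a finite abstract simplicial complex `G`
(simplices of cardinality `k+1` of the Barycentric refinement) equals the total number
of surjections of simplices of `G` onto a fixed `(k+1)`-element set; equivalently it is
`Σ_j (k+1)! S(j+1, k+1) f_j(G)` with Stirling numbers `S` of the second kind. -/
theorem fvec_barycentric {V : Type*} [DecidableEq V] (G : Finset (Finset V))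
    (hne : ∀ x ∈ G, x.Nonempty)
    (hdown : ∀ x ∈ G, ∀ y ⊆ x, y.Nonempty → y ∈ G) (k : ℕ) :
    (fVec (baryRefine G) k =
      ∑ x ∈ G, Nat.card {f : {v : V // v ∈ x} → Fin (k + 1) // Function.Surjective f}) ∧
    (∀ m : ℕ, (∀ x ∈ G, x.card ≤ m) →
      fVec (baryRefine G) k =
        ∑ j ∈ Finset.range m, (k + 1).factorial * stirling2 (j + 1) (k + 1) * fVec G j) := by
  classical
  have key : fVec (baryRefine G) k =
      ∑ x ∈ G, Nat.card {f : {v : V // v ∈ x} → Fin (k + 1) // Function.Surjective f} := by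
    have hA : ∀ c : Finset (Finset V),
        c ∈ (baryRefine G).filter (fun s => s.card = k + 1) ↔
          c ⊆ G ∧ c.Nonempty ∧
            ((↑c : Set (Finset V)).Pairwise fun x y => x ⊂ y ∨ y ⊂ x) ∧ c.card = k + 1 := by
      intro c
      simp only [baryRefine, Finset.mem_filter, Finset.mem_powerset]
      tauto
    have hRHS : ∑ x ∈ G, Nat.card {f : {v : V // v ∈ x} → Fin (k + 1) // Surjective f}
        = (G.sigma fun x =>
            (univ.filter fun f : {v : V // v ∈ x} → Fin (k + 1) => Surjective f)).card := by
      rw [Finset.card_sigma]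
      exact Finset.sum_congr rfl fun x _ => by
        rw [Nat.card_eq_fintype_card, Fintype.card_subtype]
    rw [hRHS]
    show ((baryRefine G).filter fun s => s.card = k + 1).card = _
    refine Finset.card_bij'
      (fun c hc => ⟨c.sup id, fun v => ⟨lev c v.1, by
        have h4 := ((hA c).1 hc).2.2.2
        have h5 := lev_lt (c := c) v.2
        omega⟩⟩)
      (fun p hp => Finset.image (fun i : Fin (k + 1) => ymap p.1 p.2 i) Finset.univ)
      ?_ ?_ ?_ ?_
    · -- forward lands in the sigma set
      intro c hc
      obtain ⟨hsub, hcne, hchain, hcard⟩ := (hA c).1 hc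
      have hsupc := chain_sup_mem hchain hcne
      rw [Finset.mem_sigma]
      refine ⟨hsub hsupc, Finset.mem_filter.2 ⟨Finset.mem_univ _, ?_⟩⟩
      intro b
      obtain ⟨y, hy, hrnk⟩ := rnk_surj hchain b.1 (by rw [hcard]; exact b.isLt)
      obtain ⟨v, hv, hlev⟩ := lev_surj hchain (fun z hz => hne z (hsub hz)) hy
      exact ⟨⟨v, hv⟩, Fin.ext (hlev.trans hrnk)⟩
    · -- backward lands in the chain set
      intro p hp
      rw [Finset.mem_sigma] at hp
      have hx : p.1 ∈ G := hp.1
      have hf : Surjective p.2 := (Finset.mem_filter.1 hp.2).2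
      rw [hA]
      refine ⟨?_, ?_, ?_, ?_⟩
      · intro y hy
        obtain ⟨i, _, rfl⟩ := Finset.mem_image.1 hy
        exact hdown p.1 hx _ (ymap_subset p.1 p.2 i) (ymap_nonempty hf i)
      · exact Finset.Nonempty.image ⟨0, Finset.mem_univ 0⟩ _
      · intro y₁ hy₁ y₂ hy₂ hne12
        obtain ⟨i₁, _, rfl⟩ := Finset.mem_image.1 (Finset.mem_coe.1 hy₁)
        obtain ⟨i₂, _, rfl⟩ := Finset.mem_image.1 (Finset.mem_coe.1 hy₂)
        rcases le_total i₁ i₂ with h | h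
        · exact Or.inl (lt_of_le_of_ne (ymap_mono h) hne12)
        · exact Or.inr (lt_of_le_of_ne (ymap_mono h) (Ne.symm hne12))
      · rw [Finset.card_image_of_injective _ (ymap_inj hf), Finset.card_univ,
          Fintype.card_fin]
    · -- left inverse
      intro c hc
      obtain ⟨hsub, hcne, hchain, hcard⟩ := (hA c).1 hc
      have hkey : ∀ (F : {v : V // v ∈ c.sup id} → Fin (k + 1)),
          (∀ (w : V) (hw : w ∈ c.sup id), (F ⟨w, hw⟩).1 = lev c w) →
          ∀ (i : Fin (k + 1)) (y : Finset V), y ∈ c →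
            rnk c y = i.1 → ymap (c.sup id) F i = y := by
        intro F hF i y hyc hrnk
        rw [← downset_eq hchain hyc]
        unfold ymap
        apply Finset.filter_congr
        intro v hv
        constructor
        · intro h
          have h2 := Fin.le_def.1 (h hv)
          rw [hF v hv] at h2
          omega
        · intro h h'
          rw [Fin.le_def, hF v h']
          omega
      apply Finset.Subset.antisymm
      · intro y hy'
        obtain ⟨i, _, rfl⟩ := Finset.mem_image.1 hy'
        obtain ⟨y', hy'', hrnk⟩ := rnk_surj hchain i.1 (by rw [hcard]; exact i.isLt)
        rw [hkey _ (fun w hw => rfl) i y' hy'' hrnk]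
        exact hy''
      · intro y hyc
        exact Finset.mem_image.2 ⟨⟨rnk c y, by rw [← hcard]; exact rnk_lt hyc⟩,
          Finset.mem_univ _, hkey _ (fun w hw => rfl) _ y hyc rfl⟩
    · -- right inverse
      intro p hp
      obtain ⟨x, f⟩ := p
      rw [Finset.mem_sigma] at hp
      have hx : x ∈ G := hp.1
      have hf : Surjective f := (Finset.mem_filter.1 hp.2).2
      set c := Finset.image (fun i : Fin (k + 1) => ymap x f i) Finset.univ with hcdef
      have hxc : x ∈ c := Finset.mem_image.2 ⟨Fin.last k, Finset.mem_univ _, ymap_last x f⟩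
      have hsup : c.sup id = x := le_antisymm
        (Finset.sup_le fun y hy => by
          obtain ⟨i, _, rfl⟩ := Finset.mem_image.1 hy
          exact ymap_subset x f i)
        (Finset.le_sup (f := id) hxc)
      apply sigma_fun_ext hsup
      intro v hv
      have hvx : v ∈ x := hsup ▸ hv
      apply Fin.ext
      show lev c v = ((f ⟨v, hvx⟩ : Fin (k + 1)) : ℕ)
      have h1 : (c.filter fun y => v ∉ y)
          = (Finset.univ.filter fun i : Fin (k + 1) => v ∉ ymap x f i).image
              (fun i : Fin (k + 1) => ymap x f i) := by
        rw [hcdef, Finset.filter_image]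
      have h2 : (Finset.univ.filter fun i : Fin (k + 1) => v ∉ ymap x f i)
          = Finset.Iio (f ⟨v, hvx⟩) := by
        ext i
        simp only [Finset.mem_filter, Finset.mem_univ, true_and, Finset.mem_Iio]
        rw [mem_ymap_iff hvx, not_le]
      unfold lev
      rw [h1, Finset.card_image_of_injective _ (ymap_inj hf), h2, Fin.card_Iio]
  refine ⟨key, fun m hm => ?_⟩
  rw [key]
  have hstep : ∀ x ∈ G,
      Nat.card {f : {v : V // v ∈ x} → Fin (k + 1) // Function.Surjective f}
        = (k + 1).factorial * stirling2 x.card (k + 1) := by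
    intro x _
    rw [natCard_surj_congr (Finset.equivFin x) (Equiv.refl (Fin (k + 1)))]
    exact surjCard_eq' x.card (k + 1)
  rw [Finset.sum_congr rfl hstep]
  have hmap : ∀ x ∈ G, x.card - 1 ∈ Finset.range m := by
    intro x hx
    have h1 := Finset.card_pos.2 (hne x hx)
    have h2 := hm x hx
    exact Finset.mem_range.2 (by omega)
  rw [← Finset.sum_fiberwise_of_maps_to hmap
    (fun x => (k + 1).factorial * stirling2 x.card (k + 1))]
  refine Finset.sum_congr rfl fun j hj => ?_
  have hfe : (G.filter fun x => x.card - 1 = j) = G.filter fun x => x.card = j + 1 :=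
    Finset.filter_congr fun x hx => by
      have h1 := Finset.card_pos.2 (hne x hx)
      omega
  rw [hfe]
  rw [Finset.sum_congr rfl (fun x hx => by rw [(Finset.mem_filter.1 hx).2])]
  rw [Finset.sum_const, smul_eq_mul, mul_comm]
  rfl
end

section
/- Let G be a finite simple graph that is an m-manifold, let k ≤ m, and let f : V(G) → {0, 1, …, k} be any function. Let G_f be the finite simple graph whose vertices are the nonempty cliques x of G on which f attains all k+1 values (i.e. f(x) = {0,…,k}), with two such cliques adjacent if and only if one is strictly contained in the other. Then G_f is either the empty graph or an (m−k)-manifold. -/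
universe u

/-- The unit sphere of a vertex: the subgraph induced on the neighbors of `v`. -/
def SimpleGraph.unitSphere {V : Type u} (G : SimpleGraph V) (v : V) :
    SimpleGraph {u : V // G.Adj v u} :=
  SimpleGraph.induce {u : V | G.Adj v u} G

/-- The graph obtained by deleting the vertex `v`. -/
def SimpleGraph.deleteVert {V : Type u} (G : SimpleGraph V) (v : V) :
    SimpleGraph {u : V // u ≠ v} :=
  SimpleGraph.induce {u : V | u ≠ v} G

/-- Inductive notion of contractibility for graphs: the one-vertex graph is
contractible, and `G` is contractible if for some vertex `v` both the unit sphere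
`S(v)` and the deletion `G ∖ v` are contractible. -/
inductive GraphContractible : ∀ {V : Type u}, SimpleGraph V → Prop
  | single {V : Type u} (G : SimpleGraph V) (h1 : Nonempty V) (h2 : Subsingleton V) :
      GraphContractible G
  | step {V : Type u} (G : SimpleGraph V) (v : V)
      (hS : GraphContractible (G.unitSphere v))
      (hD : GraphContractible (G.deleteVert v)) : GraphContractible G

/-- Inductive notion of a `q`-sphere: the empty graph is the `(-1)`-sphere, and for
`q ≥ 0` a graph is a `q`-sphere if every unit sphere is a `(q-1)`-sphere and deleting
some vertex leaves a contractible graph. -/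
inductive GraphSphere : ℤ → ∀ {V : Type u}, SimpleGraph V → Prop
  | empty {V : Type u} (G : SimpleGraph V) (h : IsEmpty V) : GraphSphere (-1) G
  | succ {V : Type u} (G : SimpleGraph V) (q : ℤ) (hq : 0 ≤ q)
      (hS : ∀ v : V, GraphSphere (q - 1) (G.unitSphere v))
      (hv : ∃ v : V, GraphContractible (G.deleteVert v)) : GraphSphere q G

/-- A graph is a `q`-manifold if every unit sphere is a `(q-1)`-sphere. -/
def IsGraphManifold (q : ℤ) {V : Type u} (G : SimpleGraph V) : Prop :=
  ∀ v : V, GraphSphere (q - 1) (G.unitSphere v)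

/-- The join of two graphs: keep all edges and connect every vertex of `G` to every
vertex of `H`. -/
def graphJoin {V W : Type u} (G : SimpleGraph V) (H : SimpleGraph W) :
    SimpleGraph (V ⊕ W) where
  Adj x y := match x, y with
    | Sum.inl a, Sum.inl b => G.Adj a b
    | Sum.inr a, Sum.inr b => H.Adj a b
    | Sum.inl _, Sum.inr _ => True
    | Sum.inr _, Sum.inl _ => True
  symm := ⟨by rintro (a | a) (b | b) h <;> simp_all [SimpleGraph.adj_comm]⟩
  loopless := ⟨by rintro (a | a) h <;> exact SimpleGraph.irrefl _ h⟩

open Classical in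
/-- `f_k(G)`: the number of cliques of `G` with exactly `k+1` vertices. -/
noncomputable def graphFVec {V : Type u} [Fintype V] (G : SimpleGraph V) (k : ℕ) : ℕ :=
  (Finset.univ.filter fun x : Finset V => x.card = k + 1 ∧ G.IsClique (↑x : Set V)).card

/-- The Euler characteristic `χ(G) = Σ_k (-1)^k f_k(G)`. -/
noncomputable def graphEulerChar {V : Type u} [Fintype V] (G : SimpleGraph V) : ℤ :=
  ∑ k ∈ Finset.range (Fintype.card V + 1), (-1 : ℤ) ^ k * graphFVec G k

open Classical in
/-- The curvature of a vertex: `K(v) = Σ_{x ∋ v} (-1)^(|x|-1)/|x|`, summing over the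
cliques of `G` containing `v`. -/
noncomputable def graphCurvature {V : Type u} [Fintype V] (G : SimpleGraph V) (v : V) : ℚ :=
  ∑ x ∈ Finset.univ.filter
      (fun x : Finset V => x.Nonempty ∧ G.IsClique (↑x : Set V) ∧ v ∈ x),
    (-1 : ℚ) ^ (x.card - 1) / (x.card : ℚ)

open SimpleGraph

universe v

section Iso
variable {V W : Type u} {G : SimpleGraph V} {H : SimpleGraph W}

@[simp] lemma unitSphere_adj (v : V) (a b : {u : V // G.Adj v u}) :
    (G.unitSphere v).Adj a b ↔ G.Adj a.1 b.1 := Iff.rfl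

@[simp] lemma deleteVert_adj (v : V) (a b : {u : V // u ≠ v}) :
    (G.deleteVert v).Adj a b ↔ G.Adj a.1 b.1 := Iff.rfl

def isoUnitSphere (φ : G ≃g H) (v : V) : G.unitSphere v ≃g H.unitSphere (φ v) where
  toEquiv := Equiv.subtypeEquiv φ.toEquiv (fun u => by
    constructor
    · intro h; exact φ.map_adj_iff.2 h
    · intro h; exact φ.map_adj_iff.1 h)
  map_rel_iff' := by
    intro a b
    simp only [unitSphere_adj, Equiv.subtypeEquiv_apply]
    exact φ.map_adj_iff

def isoDeleteVert (φ : G ≃g H) (v : V) : G.deleteVert v ≃g H.deleteVert (φ v) where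
  toEquiv := Equiv.subtypeEquiv φ.toEquiv (fun u => by
    simp [EmbeddingLike.apply_eq_iff_eq])
  map_rel_iff' := by
    intro a b
    simp only [deleteVert_adj, Equiv.subtypeEquiv_apply]
    exact φ.map_adj_iff

theorem GraphContractible.of_iso :
    ∀ {V : Type u} {G : SimpleGraph V}, GraphContractible G →
      ∀ {W : Type u} (H : SimpleGraph W), (G ≃g H) → GraphContractible H := by
  intro V G h
  induction h with
  | single G h1 h2 =>
    intro W H φ
    haveI := h2
    exact .single H (h1.map φ.toEquiv) (φ.toEquiv.symm.subsingleton)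
  | step G v hS hD ihS ihD =>
    intro W H φ
    exact .step H (φ v) (ihS _ (isoUnitSphere φ v)) (ihD _ (isoDeleteVert φ v))

theorem GraphSphere.of_iso :
    ∀ {q : ℤ} {V : Type u} {G : SimpleGraph V}, GraphSphere q G →
      ∀ {W : Type u} (H : SimpleGraph W), (G ≃g H) → GraphSphere q H := by
  intro q V G h
  induction h with
  | empty G h =>
    intro W H φ
    exact .empty H (φ.toEquiv.symm.isEmpty)
  | succ G q hq hS hv ih =>
    intro W H φ
    refine .succ H q hq (fun w => ?_) ?_
    · have h2 := ih (φ.symm w) _ (isoUnitSphere φ (φ.symm w))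
      rwa [RelIso.apply_symm_apply] at h2
    · obtain ⟨v, hv⟩ := hv
      exact ⟨φ v, hv.of_iso _ (isoDeleteVert φ v)⟩
end Iso

section Basics
variable {V : Type u} {G : SimpleGraph V} {q : ℤ}

theorem GraphSphere.unitSphere_sphere (h : GraphSphere q G) (v : V) :
    GraphSphere (q - 1) (G.unitSphere v) := by
  cases h with
  | empty G h => exact (h.false v).elim
  | succ G q hq hS hv => exact hS v

theorem GraphSphere.eq_neg_one (h : GraphSphere q G) (hV : IsEmpty V) : q = -1 := by
  cases h with
  | empty => rfl
  | succ G q hq hS hv => obtain ⟨v, _⟩ := hv; exact (hV.false v).elim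

theorem GraphSphere.isEmpty (h : GraphSphere (-1) G) : IsEmpty V := by
  cases h with
  | empty G h => exact h
  | succ G q hq hS hv => exact absurd hq (by norm_num)

/-- A finite graph with a dominating vertex is contractible. -/
theorem contractible_of_dominating :
    ∀ (n : ℕ) {V : Type u} [Fintype V] (G : SimpleGraph V), Fintype.card V ≤ n →
    ∀ d : V, (∀ w, w ≠ d → G.Adj d w) → GraphContractible G := by
  intro n
  induction n with
  | zero =>
    intro V _ G hc d hd
    have : 0 < Fintype.card V := Fintype.card_pos_iff.2 ⟨d⟩
    omega
  | succ n ih =>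
    intro V _ G hc d hd
    classical
    by_cases hsub : ∀ w : V, w = d
    · exact .single G ⟨d⟩ ⟨fun a b => (hsub a).trans (hsub b).symm⟩
    · push_neg at hsub
      obtain ⟨w, hw⟩ := hsub
      refine .step G w ?_ ?_
      · refine ih (G.unitSphere w) ?_ ⟨d, (hd w hw).symm⟩ ?_
        · have : Fintype.card {u // G.Adj w u} < Fintype.card V :=
            Fintype.card_subtype_lt (x := w) (by simp)
          omega
        · rintro ⟨u, hu⟩ hne
          exact hd u (fun h => hne (Subtype.ext h))
      · refine ih (G.deleteVert w) ?_ ⟨d, fun h => hw h.symm⟩ ?_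
        · have : Fintype.card {u // u ≠ w} < Fintype.card V :=
            Fintype.card_subtype_lt (x := w) (by simp)
          omega
        · rintro ⟨u, hu⟩ hne
          exact hd u (fun h => hne (Subtype.ext h))

theorem GraphContractible.of_dominating {V : Type u} [Fintype V] (G : SimpleGraph V)
    (d : V) (hd : ∀ w, w ≠ d → G.Adj d w) : GraphContractible G :=
  contractible_of_dominating (Fintype.card V) G le_rfl d hd

end Basics

section Join
variable {V W : Type u} (A : SimpleGraph V) (B : SimpleGraph W)

@[simp] lemma graphJoin_adj_ll (a b : V) : (graphJoin A B).Adj (.inl a) (.inl b) ↔ A.Adj a b := Iff.rfl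
@[simp] lemma graphJoin_adj_rr (a b : W) : (graphJoin A B).Adj (.inr a) (.inr b) ↔ B.Adj a b := Iff.rfl
@[simp] lemma graphJoin_adj_lr (a : V) (b : W) : (graphJoin A B).Adj (.inl a) (.inr b) := trivial
@[simp] lemma graphJoin_adj_rl (a : W) (b : V) : (graphJoin A B).Adj (.inr a) (.inl b) := trivial

def joinSphereLeft (a : V) :
    (graphJoin A B).unitSphere (Sum.inl a) ≃g graphJoin (A.unitSphere a) B where
  toEquiv :=
    { toFun := fun z => match z with
        | ⟨Sum.inl b, h⟩ => Sum.inl ⟨b, h⟩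
        | ⟨Sum.inr w, _⟩ => Sum.inr w
      invFun := fun z => match z with
        | Sum.inl ⟨b, h⟩ => ⟨Sum.inl b, h⟩
        | Sum.inr w => ⟨Sum.inr w, trivial⟩
      left_inv := by rintro ⟨(b|w), h⟩ <;> rfl
      right_inv := by rintro (⟨b, h⟩|w) <;> rfl }
  map_rel_iff' := by rintro ⟨(b|w), h⟩ ⟨(b'|w'), h'⟩ <;> exact Iff.rfl

def joinSphereRight (w : W) :
    (graphJoin A B).unitSphere (Sum.inr w) ≃g graphJoin A (B.unitSphere w) where
  toEquiv :=
    { toFun := fun z => match z with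
        | ⟨Sum.inl v, _⟩ => Sum.inl v
        | ⟨Sum.inr b, h⟩ => Sum.inr ⟨b, h⟩
      invFun := fun z => match z with
        | Sum.inl v => ⟨Sum.inl v, trivial⟩
        | Sum.inr ⟨b, h⟩ => ⟨Sum.inr b, h⟩
      left_inv := by rintro ⟨(v|b), h⟩ <;> rfl
      right_inv := by rintro (v|⟨b, h⟩) <;> rfl }
  map_rel_iff' := by rintro ⟨(b|w₁), h⟩ ⟨(b'|w₂), h'⟩ <;> exact Iff.rfl

def joinDeleteLeft (a : V) :
    (graphJoin A B).deleteVert (Sum.inl a) ≃g graphJoin (A.deleteVert a) B where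
  toEquiv :=
    { toFun := fun z => match z with
        | ⟨Sum.inl b, h⟩ => Sum.inl ⟨b, fun hh => h (by rw [hh])⟩
        | ⟨Sum.inr w, _⟩ => Sum.inr w
      invFun := fun z => match z with
        | Sum.inl ⟨b, h⟩ => ⟨Sum.inl b, fun hh => h (Sum.inl_injective hh)⟩
        | Sum.inr w => ⟨Sum.inr w, fun hh => by simp at hh⟩
      left_inv := by rintro ⟨(b|w), h⟩ <;> rfl
      right_inv := by rintro (⟨b, h⟩|w) <;> rfl }
  map_rel_iff' := by rintro ⟨(b|w), h⟩ ⟨(b'|w'), h'⟩ <;> exact Iff.rfl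

def joinEmptyRight [IsEmpty W] : graphJoin A B ≃g A where
  toEquiv := Equiv.sumEmpty V W
  map_rel_iff' := by
    rintro (a|w) (b|w')
    · exact Iff.rfl
    · exact (IsEmpty.false w').elim
    · exact (IsEmpty.false w).elim
    · exact (IsEmpty.false w).elim

def joinEmptyLeft [IsEmpty V] : graphJoin A B ≃g B where
  toEquiv := Equiv.emptySum V W
  map_rel_iff' := by
    rintro (a|w) (b|w')
    · exact (IsEmpty.false a).elim
    · exact (IsEmpty.false a).elim
    · exact (IsEmpty.false b).elim
    · exact Iff.rfl

theorem joinContractibleLeft :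
    ∀ {V : Type u} {A : SimpleGraph V}, GraphContractible A →
    ∀ {W : Type u} [Fintype W] (B : SimpleGraph W), GraphContractible (graphJoin A B) := by
  intro V A h
  induction h with
  | @single V' A h1 h2 =>
    intro W _ B
    classical
    obtain ⟨a⟩ := h1
    haveI : Finite V' := @Finite.of_subsingleton V' h2
    haveI : Fintype V' := Fintype.ofFinite V'
    refine GraphContractible.of_dominating _ (Sum.inl a) ?_
    rintro (b|w) hne
    · exact absurd (congrArg Sum.inl (h2.elim b a)) hne
    · exact trivial
  | step A v hS hD ihS ihD =>
    intro W _ B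
    exact .step _ (Sum.inl v)
      ((ihS B).of_iso _ (joinSphereLeft A B v).symm)
      ((ihD B).of_iso _ (joinDeleteLeft A B v).symm)

theorem joinSphere :
    ∀ {q : ℤ} {W : Type u} {B : SimpleGraph W}, GraphSphere q B →
    ∀ {p : ℤ} {V : Type u} {A : SimpleGraph V}, GraphSphere p A →
    ∀ [Fintype V] [Fintype W], GraphSphere (p + q + 1) (graphJoin A B) := by
  intro q W B hB
  induction hB with
  | empty B hW =>
    intro p V A hA _ _
    rw [show p + (-1) + 1 = p by ring]
    exact hA.of_iso _ (joinEmptyRight A B).symm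
  | succ B qb hqb hSB hvB ihB =>
    intro p V A hA
    induction hA with
    | empty A hV =>
      intro _ _
      rw [show (-1) + qb + 1 = qb by ring]
      exact (GraphSphere.succ B qb hqb hSB hvB).of_iso _ (joinEmptyLeft A B).symm
    | succ A pa hpa hSA hvA ihA =>
      intro _ _
      classical
      refine .succ _ (pa + qb + 1) (by omega) ?_ ?_
      · rintro (a|w)
        · have h2 := ihA a
          have h3 := h2.of_iso _ (joinSphereLeft A B a).symm
          rw [show pa - 1 + qb + 1 = pa + qb + 1 - 1 by ring] at h3
          exact h3
        · have h2 := ihB w (GraphSphere.succ A pa hpa hSA hvA)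
          have h3 := h2.of_iso _ (joinSphereRight A B w).symm
          rw [show pa + (qb - 1) + 1 = pa + qb + 1 - 1 by ring] at h3
          exact h3
      · obtain ⟨a, ha⟩ := hvA
        exact ⟨Sum.inl a, (joinContractibleLeft ha B).of_iso _ (joinDeleteLeft A B a).symm⟩

end Join

section Flatten
variable {S : Type u} (G : SimpleGraph S)

@[simp] lemma induce_adj' (P : Set S) (a b : ↑P) :
    (G.induce P).Adj a b ↔ G.Adj a.1 b.1 := Iff.rfl

def flattenSphere (P : Set S) (v : ↑P) :
    (G.induce P).unitSphere v ≃g G.induce {w | P w ∧ G.Adj v.1 w} where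
  toEquiv :=
    { toFun := fun u => ⟨u.1.1, u.1.2, u.2⟩
      invFun := fun w => ⟨⟨w.1, w.2.1⟩, w.2.2⟩
      left_inv := fun u => rfl
      right_inv := fun w => rfl }
  map_rel_iff' := Iff.rfl

def flattenDelete (P : Set S) (v : ↑P) :
    (G.induce P).deleteVert v ≃g G.induce {w | P w ∧ w ≠ v.1} where
  toEquiv :=
    { toFun := fun u => ⟨u.1.1, u.1.2, fun h => u.2 (Subtype.ext h)⟩
      invFun := fun w => ⟨⟨w.1, w.2.1⟩, fun h => w.2.2 (congrArg Subtype.val h)⟩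
      left_inv := fun u => rfl
      right_inv := fun w => rfl }
  map_rel_iff' := Iff.rfl

def induceCongr {P Q : Set S} (h : P = Q) : G.induce P ≃g G.induce Q where
  toEquiv := Equiv.setCongr h
  map_rel_iff' := by subst h; exact Iff.rfl

open Classical in
noncomputable def splitJoin (P₁ P₂ : Set S) (hd : Disjoint P₁ P₂)
    (hadj : ∀ a ∈ P₁, ∀ b ∈ P₂, G.Adj a b) :
    G.induce (P₁ ∪ P₂) ≃g graphJoin (G.induce P₁) (G.induce P₂) where
  toEquiv := Equiv.Set.union hd
  map_rel_iff' := by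
    intro a b
    by_cases ha : a.1 ∈ P₁ <;> by_cases hb : b.1 ∈ P₁
    · rw [Equiv.Set.union_apply_left _ ha, Equiv.Set.union_apply_left _ hb]
      exact Iff.rfl
    · have hb2 : b.1 ∈ P₂ := b.2.resolve_left hb
      rw [Equiv.Set.union_apply_left _ ha, Equiv.Set.union_apply_right _ hb2]
      exact iff_of_true trivial (hadj _ ha _ hb2)
    · have ha2 : a.1 ∈ P₂ := a.2.resolve_left ha
      rw [Equiv.Set.union_apply_right _ ha2, Equiv.Set.union_apply_left _ hb]
      exact iff_of_true trivial (hadj _ hb _ ha2).symm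
    · have ha2 : a.1 ∈ P₂ := a.2.resolve_left ha
      have hb2 : b.1 ∈ P₂ := b.2.resolve_left hb
      rw [Equiv.Set.union_apply_right _ ha2, Equiv.Set.union_apply_right _ hb2]
      exact Iff.rfl

/-- Generic peeling lemma: delete the vertices of `D` from `A` one by one, in order of
increasing `ρ`. -/
theorem peel_aux [Fintype S] :
    ∀ (n : ℕ) (A D : Finset S), D.card ≤ n → D ⊆ A → ∀ ρ : S → ℕ,
    (∀ v ∈ D, ∀ w ∈ D, G.Adj v w → ρ v ≠ ρ w) →
    (∀ v ∈ D, GraphContractible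
      (G.induce {w | w ∈ A ∧ G.Adj v w ∧ (w ∉ D ∨ ρ v < ρ w)})) →
    GraphContractible (G.induce {w | w ∈ A ∧ w ∉ D}) →
    GraphContractible (G.induce {w | w ∈ A}) := by
  intro n
  induction n with
  | zero =>
    intro A D hc hDA ρ hρ hS hcore
    have hD : D = ∅ := Finset.card_eq_zero.1 (le_antisymm hc (Nat.zero_le _))
    subst hD
    exact hcore.of_iso _ (induceCongr G (by ext w; simp))
  | succ n ih =>
    intro A D hc hDA ρ hρ hS hcore
    classical
    rcases Finset.eq_empty_or_nonempty D with hD | hD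
    · subst hD
      exact hcore.of_iso _ (induceCongr G (by ext w; simp))
    · obtain ⟨v, hvD, hmin⟩ := Finset.exists_min_image D ρ hD
      refine GraphContractible.step _ (⟨v, hDA hvD⟩ : {w | w ∈ A}) ?_ ?_
      · have hset : ({w | (w ∈ A : Prop) ∧ G.Adj v w} : Set S) =
            {w | w ∈ A ∧ G.Adj v w ∧ (w ∉ D ∨ ρ v < ρ w)} := by
          ext w
          simp only [Set.mem_setOf_eq]
          constructor
          · rintro ⟨hwA, hadj⟩
            refine ⟨hwA, hadj, ?_⟩
            by_cases hwD : w ∈ D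
            · exact Or.inr (lt_of_le_of_ne (hmin w hwD) (hρ v hvD w hwD hadj))
            · exact Or.inl hwD
          · rintro ⟨hwA, hadj, _⟩
            exact ⟨hwA, hadj⟩
        exact (hS v hvD).of_iso _
          (((flattenSphere G _ _).trans (induceCongr G hset)).symm)
      · have hset : ({w | (w ∈ A : Prop) ∧ w ≠ v} : Set S) = {w | w ∈ A.erase v} := by
          ext w
          simp only [Set.mem_setOf_eq, Finset.mem_erase]
          tauto
        have hmain : GraphContractible (G.induce {w | w ∈ A.erase v}) := by
          refine ih (A.erase v) (D.erase v) ?_ (Finset.erase_subset_erase v hDA) ρ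
            (fun a ha b hb => hρ a (Finset.mem_of_mem_erase ha) b (Finset.mem_of_mem_erase hb))
            (fun u huD => ?_) ?_
          · have := Finset.card_erase_of_mem hvD
            omega
          · refine (hS u (Finset.mem_of_mem_erase huD)).of_iso _ (induceCongr G ?_)
            have huD' := Finset.mem_of_mem_erase huD
            ext w
            simp only [Set.mem_setOf_eq, Finset.mem_erase]
            constructor
            · rintro ⟨hwA, hadj, hor⟩
              have hwv : w ≠ v := by
                rintro rfl
                rcases hor with h | h
                · exact h hvD
                · exact absurd (hmin u huD') (not_le.2 h)
              refine ⟨⟨hwv, hwA⟩, hadj, ?_⟩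
              rcases hor with h | h
              · exact Or.inl (fun hh => h hh.2)
              · exact Or.inr h
            · rintro ⟨⟨hwv, hwA⟩, hadj, hor⟩
              refine ⟨hwA, hadj, ?_⟩
              rcases hor with h | h
              · exact Or.inl (fun hh => h ⟨hwv, hh⟩)
              · exact Or.inr h
          · refine hcore.of_iso _ (induceCongr G ?_)
            ext w
            simp only [Set.mem_setOf_eq, Finset.mem_erase]
            constructor
            · rintro ⟨hwA, hwD⟩
              have hwv : w ≠ v := fun h => hwD (h ▸ hvD)
              exact ⟨⟨hwv, hwA⟩, fun hh => hwD hh.2⟩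
            · rintro ⟨⟨hwv, hwA⟩, hwD⟩
              exact ⟨hwA, fun hh => hwD ⟨hwv, hh⟩⟩
        exact hmain.of_iso _
          (((flattenDelete G _ _).trans (induceCongr G hset)).symm)

theorem peel [Fintype S] (A D : Finset S) (hDA : D ⊆ A) (ρ : S → ℕ)
    (hρ : ∀ v ∈ D, ∀ w ∈ D, G.Adj v w → ρ v ≠ ρ w)
    (hS : ∀ v ∈ D, GraphContractible
      (G.induce {w | w ∈ A ∧ G.Adj v w ∧ (w ∉ D ∨ ρ v < ρ w)}))
    (hcore : GraphContractible (G.induce {w | w ∈ A ∧ w ∉ D})) :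
    GraphContractible (G.induce {w | w ∈ A}) :=
  peel_aux G D.card A D le_rfl hDA ρ hρ hS hcore

end Flatten

section SubsetGraphs
variable {α β : Type u}

def ssubGraph (α : Type u) : SimpleGraph (Finset α) := SimpleGraph.fromRel (· ⊂ ·)

lemma ssub_adj (s t : Finset α) : (ssubGraph α).Adj s t ↔ s ⊂ t ∨ t ⊂ s := by
  rw [ssubGraph, SimpleGraph.fromRel_adj]
  constructor
  · rintro ⟨-, h⟩; exact h
  · rintro (h | h)
    · exact ⟨h.ne, Or.inl h⟩
    · exact ⟨h.ne', Or.inr h⟩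

/-- Transport of induced subset-graphs along inclusion-preserving bijections. -/
def ssubIso' (P : Set (Finset α)) (Q : Set (Finset β))
    (f : Finset α → Finset β) (g : Finset β → Finset α)
    (hf : ∀ s, P s → Q (f s)) (hg : ∀ t, Q t → P (g t))
    (hgf : ∀ s, P s → g (f s) = s) (hfg : ∀ t, Q t → f (g t) = t)
    (hmono : ∀ s t, P s → P t → (s ⊂ t ↔ f s ⊂ f t)) :
    (ssubGraph α).induce P ≃g (ssubGraph β).induce Q where
  toEquiv :=
    { toFun := fun s => ⟨f s.1, hf s.1 s.2⟩
      invFun := fun t => ⟨g t.1, hg t.1 t.2⟩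
      left_inv := fun s => Subtype.ext (hgf s.1 s.2)
      right_inv := fun t => Subtype.ext (hfg t.1 t.2) }
  map_rel_iff' := by
    intro s t
    simp only [induce_adj', ssub_adj, Equiv.coe_fn_mk]
    exact or_congr (hmono s.1 t.1 s.2 t.2).symm (hmono t.1 s.1 t.2 s.2).symm

variable [DecidableEq α]

lemma sdiff_subset_iff {y s t : Finset α} (hs : y ⊆ s) (ht : y ⊆ t) :
    s \ y ⊆ t \ y ↔ s ⊆ t := by
  constructor
  · intro h
    intro a ha
    by_cases hay : a ∈ y
    · exact ht hay
    · have : a ∈ s \ y := Finset.mem_sdiff.2 ⟨ha, hay⟩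
      exact (Finset.mem_sdiff.1 (h this)).1
  · intro h
    exact Finset.sdiff_subset_sdiff h le_rfl

lemma sdiff_ssubset_iff {y s t : Finset α} (hs : y ⊆ s) (ht : y ⊆ t) :
    s \ y ⊂ t \ y ↔ s ⊂ t := by
  rw [Finset.ssubset_def, Finset.ssubset_def, sdiff_subset_iff hs ht, sdiff_subset_iff ht hs]

end SubsetGraphs

section Bd
variable {α : Type u} [Fintype α] [DecidableEq α]

lemma not_ssubset_singleton {a : α} {w : Finset α} (hne : w.Nonempty) :
    ¬ w ⊂ ({a} : Finset α) := by
  intro h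
  have h1 := Finset.card_lt_card h
  have h2 := Finset.card_pos.2 hne
  simp only [Finset.card_singleton] at h1
  omega

lemma sdiff_singleton_ne_nonempty {a : α} {s : Finset α} (ha : a ∈ s) (hne : s ≠ {a}) :
    (s \ {a}).Nonempty := by
  rw [Finset.sdiff_nonempty]
  intro hsub
  exact hne (le_antisymm hsub (Finset.singleton_subset_iff.2 ha))

lemma union_singleton_ssubset_iff {a : α} {t t' : Finset α} (hat : a ∉ t) (hat' : a ∉ t') :
    t ⊂ t' ↔ t ∪ {a} ⊂ t' ∪ {a} := by
  have h := sdiff_ssubset_iff (y := {a}) (s := t ∪ {a}) (t := t' ∪ {a})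
    (Finset.subset_union_right) (Finset.subset_union_right)
  rw [Finset.union_sdiff_cancel_right (Finset.disjoint_singleton_right.2 hat),
    Finset.union_sdiff_cancel_right (Finset.disjoint_singleton_right.2 hat')] at h
  exact h

/-- Punctured boundary complexes of simplices are contractible. -/
theorem bd_punct :
    ∀ (n : ℕ) (x : Finset α), x.card ≤ n → ∀ y₀ : Finset α, y₀.Nonempty → y₀ ⊂ x →
    GraphContractible ((ssubGraph α).induce {s | (s.Nonempty ∧ s ⊂ x) ∧ s ≠ y₀}) := by
  intro n
  induction n with
  | zero =>
    intro x hc y₀ h1 h2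
    have := Finset.card_lt_card h2
    have := Finset.card_pos.2 h1
    omega
  | succ n ih =>
    intro x hxc y₀ hy₀ hy₀x
    classical
    obtain ⟨a, ha⟩ := hy₀
    have hax : a ∈ x := hy₀x.1 ha
    set A : Finset (Finset α) :=
      Finset.univ.filter (fun s => (s.Nonempty ∧ s ⊂ x) ∧ s ≠ y₀) with hA
    set D : Finset (Finset α) := A.filter (fun s => a ∈ s) with hD
    have hmemA : ∀ s : Finset α, s ∈ A ↔ ((s.Nonempty ∧ s ⊂ x) ∧ s ≠ y₀) := by
      intro s; simp [hA]
    have hmemD : ∀ s : Finset α, s ∈ D ↔ (((s.Nonempty ∧ s ⊂ x) ∧ s ≠ y₀) ∧ a ∈ s) := by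
      intro s; simp only [hD, Finset.mem_filter, hmemA]
    have hρ : ∀ v ∈ D, ∀ w ∈ D, (ssubGraph α).Adj v w → Finset.card v ≠ Finset.card w := by
      intro v _ w _ hadj
      rcases (ssub_adj v w).1 hadj with h | h
      · exact Nat.ne_of_lt (Finset.card_lt_card h)
      · exact Nat.ne_of_gt (Finset.card_lt_card h)
    have hcore : GraphContractible ((ssubGraph α).induce {w | w ∈ A ∧ w ∉ D}) := by
      have hset : {w | w ∈ A ∧ w ∉ D} = {s : Finset α | s.Nonempty ∧ s ⊆ x \ {a}} := by
        ext s
        simp only [Set.mem_setOf_eq, hmemA, hmemD]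
        constructor
        · rintro ⟨⟨⟨hne, hsx⟩, hsy⟩, hnd⟩
          have has : a ∉ s := fun h => hnd ⟨⟨⟨hne, hsx⟩, hsy⟩, h⟩
          exact ⟨hne, Finset.subset_sdiff.2 ⟨hsx.1, Finset.disjoint_singleton_right.2 has⟩⟩
        · rintro ⟨hne, hsub⟩
          have has : a ∉ s := fun h => (Finset.mem_sdiff.1 (hsub h)).2 (Finset.mem_singleton_self a)
          have hsx : s ⊂ x := by
            rw [Finset.ssubset_def]
            refine ⟨hsub.trans Finset.sdiff_subset, fun h => has ?_⟩
            have hsx2 : s = x := le_antisymm (hsub.trans Finset.sdiff_subset) h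
            rw [hsx2]; exact hax
          exact ⟨⟨⟨hne, hsx⟩, fun h => has (h ▸ ha)⟩, fun hd => has hd.2⟩
      rw [hset]
      have hxane : (x \ {a}).Nonempty := by
        rw [Finset.sdiff_nonempty]
        intro hsub
        have h2 := Finset.card_lt_card hy₀x
        have h3 := Finset.card_le_card hsub
        have h4 := Finset.card_pos.2 ⟨a, ha⟩
        simp only [Finset.card_singleton] at h3
        omega
      refine GraphContractible.of_dominating _ (⟨x \ {a}, hxane, le_rfl⟩ :
        ↑{s : Finset α | s.Nonempty ∧ s ⊆ x \ {a}}) ?_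
      rintro ⟨w, hwne, hwsub⟩ hne
      have hne' : w ≠ x \ {a} := fun h => hne (Subtype.ext h)
      exact (ssub_adj _ _).2 (Or.inr (Finset.ssubset_def.2
        ⟨hwsub, fun h => hne' (le_antisymm hwsub h)⟩))
    have hS : ∀ v ∈ D, GraphContractible ((ssubGraph α).induce
        {w | w ∈ A ∧ (ssubGraph α).Adj v w ∧ (w ∉ D ∨ Finset.card v < Finset.card w)}) := by
      intro v hv
      obtain ⟨⟨⟨hvne, hvx⟩, hvy⟩, hav⟩ := (hmemD v).1 hv
      by_cases hva : v = {a}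
      · -- peel the singleton {a}: its sphere is a punctured smaller boundary complex
        subst hva
        have hset : {w | w ∈ A ∧ (ssubGraph α).Adj {a} w ∧
              (w ∉ D ∨ Finset.card ({a} : Finset α) < Finset.card w)}
            = {w : Finset α | ({a} : Finset α) ⊂ w ∧ w ⊂ x ∧ w ≠ y₀} := by
          ext w
          simp only [Set.mem_setOf_eq, hmemA, hmemD, ssub_adj]
          constructor
          · rintro ⟨⟨⟨hne, hwx⟩, hwy⟩, hor, -⟩
            rcases hor with h | h
            · exact ⟨h, hwx, hwy⟩
            · exact absurd h (not_ssubset_singleton hne)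
          · rintro ⟨hsw, hwx, hwy⟩
            have hne : w.Nonempty := ⟨a, hsw.1 (Finset.mem_singleton_self a)⟩
            refine ⟨⟨⟨hne, hwx⟩, hwy⟩, Or.inl hsw, Or.inr ?_⟩
            have := Finset.card_lt_card hsw
            simpa using this
        rw [hset]
        have hyane : (y₀ \ {a}).Nonempty :=
          sdiff_singleton_ne_nonempty ha (fun h => hvy h.symm)
        have hyax : y₀ \ {a} ⊂ x \ {a} := (sdiff_ssubset_iff
          (Finset.singleton_subset_iff.2 ha) (Finset.singleton_subset_iff.2 hax)).2 hy₀x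
        have hcard : (x \ {a}).card ≤ n := by
          have h5 := Finset.card_sdiff_of_subset (Finset.singleton_subset_iff.2 hax)
          have h6 := Finset.card_pos.2 ⟨a, hax⟩
          simp only [Finset.card_singleton] at h5
          omega
        refine (ih (x \ {a}) hcard (y₀ \ {a}) hyane hyax).of_iso _
          (ssubIso' _ _ (fun t => t ∪ {a}) (fun s => s \ {a}) ?_ ?_ ?_ ?_ ?_)
        · -- hf
          rintro t ⟨⟨htne, htx⟩, hty⟩
          have hat : a ∉ t := fun h => (Finset.mem_sdiff.1 (htx.1 h)).2 (Finset.mem_singleton_self a)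
          obtain ⟨b, hb⟩ := htne
          have hbx := htx.1 hb
          have hba : b ≠ a := (Finset.mem_sdiff.1 hbx).2 ∘ (by simp +contextual)
          refine ⟨Finset.ssubset_def.2 ⟨by simp, fun h => hba (by simpa using h (Finset.mem_union_left _ hb))⟩, ?_, ?_⟩
          · rw [Finset.ssubset_def]
            constructor
            · exact Finset.union_subset (htx.1.trans Finset.sdiff_subset)
                (Finset.singleton_subset_iff.2 hax)
            · intro h
              obtain ⟨c, hcx, hct⟩ := Finset.exists_of_ssubset htx
              have hc2 := h (Finset.mem_sdiff.1 hcx).1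
              rcases Finset.mem_union.1 hc2 with h2 | h2
              · exact hct h2
              · exact (Finset.mem_sdiff.1 hcx).2 h2
          · intro h
            apply hty
            replace h : t ∪ {a} = y₀ := h
            have h3 : (t ∪ {a}) \ {a} = y₀ \ {a} := by rw [h]
            rwa [Finset.union_sdiff_cancel_right (Finset.disjoint_singleton_right.2 hat)] at h3
        · -- hg
          rintro s ⟨has, hsx, hsy⟩
          have ha1 : a ∈ s := has.1 (Finset.mem_singleton_self a)
          refine ⟨⟨Finset.sdiff_nonempty.2 has.2, (sdiff_ssubset_iff
            (Finset.singleton_subset_iff.2 ha1) (Finset.singleton_subset_iff.2 hax)).2 hsx⟩, ?_⟩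
          intro h
          apply hsy
          replace h : s \ {a} = y₀ \ {a} := h
          have h2 : s \ {a} ∪ {a} = y₀ \ {a} ∪ {a} := by rw [h]
          rwa [Finset.sdiff_union_of_subset (Finset.singleton_subset_iff.2 ha1),
            Finset.sdiff_union_of_subset (Finset.singleton_subset_iff.2 ha)] at h2
        · -- hgf
          rintro t ⟨⟨htne, htx⟩, hty⟩
          have hat : a ∉ t := fun h => (Finset.mem_sdiff.1 (htx.1 h)).2 (Finset.mem_singleton_self a)
          exact Finset.union_sdiff_cancel_right (Finset.disjoint_singleton_right.2 hat)
        · -- hfg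
          rintro s ⟨has, hsx, hsy⟩
          exact Finset.sdiff_union_of_subset (has.1)
        · -- hmono
          rintro t t' ⟨⟨htne, htx⟩, -⟩ ⟨⟨htne', htx'⟩, -⟩
          exact union_singleton_ssubset_iff
            (fun h => (Finset.mem_sdiff.1 (htx.1 h)).2 (Finset.mem_singleton_self a))
            (fun h => (Finset.mem_sdiff.1 (htx'.1 h)).2 (Finset.mem_singleton_self a))
      · -- v ≠ {a} : the sphere is (cone over subsets of v\{a}) * (something)
        set P₁ : Set (Finset α) := {w | w.Nonempty ∧ w ⊆ v \ {a}} with hP₁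
        set P₂ : Set (Finset α) := {w | v ⊂ w ∧ w ⊂ x ∧ w ≠ y₀} with hP₂
        have hset : {w | w ∈ A ∧ (ssubGraph α).Adj v w ∧
            (w ∉ D ∨ Finset.card v < Finset.card w)} = P₁ ∪ P₂ := by
          ext w
          simp only [Set.mem_setOf_eq, Set.mem_union, hmemA, hmemD, hP₁, hP₂, ssub_adj]
          constructor
          · rintro ⟨⟨⟨hwne, hwx⟩, hwy⟩, hor, hcond⟩
            rcases hor with h | h
            · exact Or.inr ⟨h, hwx, hwy⟩
            · left
              have hcards := Finset.card_lt_card h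
              have haw : a ∉ w := by
                rcases hcond with h2 | h2
                · exact fun hh => h2 ⟨⟨⟨hwne, hwx⟩, hwy⟩, hh⟩
                · omega
              exact ⟨hwne, Finset.subset_sdiff.2 ⟨h.1, Finset.disjoint_singleton_right.2 haw⟩⟩
          · rintro (⟨hwne, hwsub⟩ | ⟨hvw, hwx, hwy⟩)
            · have haw : a ∉ w := fun h => (Finset.mem_sdiff.1 (hwsub h)).2 (Finset.mem_singleton_self a)
              have hwv : w ⊂ v := Finset.ssubset_of_subset_of_ssubset hwsub
                (Finset.sdiff_ssubset (Finset.singleton_subset_iff.2 hav)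
                  (Finset.singleton_nonempty a))
              refine ⟨⟨⟨hwne, hwv.trans hvx⟩, fun h => haw (h ▸ ha)⟩, Or.inr hwv,
                Or.inl (fun hd => haw hd.2)⟩
            · exact ⟨⟨⟨hvne.mono hvw.1, hwx⟩, hwy⟩, Or.inl hvw,
                Or.inr (Finset.card_lt_card hvw)⟩
        rw [hset]
        have hd : Disjoint P₁ P₂ := by
          rw [Set.disjoint_left]
          rintro w ⟨hwne, hwsub⟩ ⟨hvw, -, -⟩
          exact (Finset.mem_sdiff.1 (hwsub (hvw.1 hav))).2 (Finset.mem_singleton_self a)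
        have hadj : ∀ w₁ ∈ P₁, ∀ w₂ ∈ P₂, (ssubGraph α).Adj w₁ w₂ := by
          rintro w₁ ⟨h1ne, h1sub⟩ w₂ ⟨hvw₂, -, -⟩
          refine (ssub_adj _ _).2 (Or.inl ?_)
          exact (Finset.ssubset_of_subset_of_ssubset h1sub
            (Finset.sdiff_ssubset (Finset.singleton_subset_iff.2 hav)
              (Finset.singleton_nonempty a))).trans hvw₂
        have hdom : GraphContractible ((ssubGraph α).induce P₁) := by
          have hvane : (v \ {a}).Nonempty := sdiff_singleton_ne_nonempty hav hva
          refine GraphContractible.of_dominating _ (⟨v \ {a}, hvane, le_rfl⟩ : ↑P₁) ?_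
          rintro ⟨w, hwne, hwsub⟩ hne
          have hne' : w ≠ v \ {a} := fun h => hne (Subtype.ext h)
          exact (ssub_adj _ _).2 (Or.inr (Finset.ssubset_def.2
            ⟨hwsub, fun h => hne' (le_antisymm hwsub h)⟩))
        exact (joinContractibleLeft hdom ((ssubGraph α).induce P₂)).of_iso _
          (splitJoin _ P₁ P₂ hd hadj).symm
    exact (peel (ssubGraph α) A D (Finset.filter_subset _ _) Finset.card hρ hS hcore).of_iso _
      (induceCongr _ (by ext s; simp only [Set.mem_setOf_eq, hmemA]))
end Bd

section BdSphere
variable {α : Type u} [Fintype α] [DecidableEq α]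

/-- The iso between the strict intermediate sets `y ⊂ s ⊂ x` and the boundary
complex of `x \ y`. -/
noncomputable def intervalIso (x y : Finset α) (hyx : y ⊂ x) :
    (ssubGraph α).induce {s | y ⊂ s ∧ s ⊂ x} ≃g
      (ssubGraph α).induce {s | s.Nonempty ∧ s ⊂ x \ y} :=
  ssubIso' _ _ (fun s => s \ y) (fun t => t ∪ y)
    (by
      rintro s ⟨hys, hsx⟩
      exact ⟨Finset.sdiff_nonempty.2 (Finset.ssubset_def.1 hys).2,
        (sdiff_ssubset_iff hys.1 hyx.1).2 hsx⟩)
    (by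
      rintro t ⟨htne, htx⟩
      have hdisj : Disjoint t y := Finset.disjoint_left.2
        (fun {b} hb hby => (Finset.mem_sdiff.1 (htx.1 hb)).2 hby)
      constructor
      · rw [Finset.ssubset_def]
        refine ⟨Finset.subset_union_right, fun h => ?_⟩
        obtain ⟨b, hb⟩ := htne
        have := h (Finset.mem_union_left _ hb)
        exact Finset.disjoint_left.1 hdisj hb this
      · rw [Finset.ssubset_def]
        constructor
        · exact Finset.union_subset (htx.1.trans Finset.sdiff_subset) hyx.1
        · intro h
          obtain ⟨c, hcx, hct⟩ := Finset.exists_of_ssubset htx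
          have hc2 := h (Finset.mem_sdiff.1 hcx).1
          rcases Finset.mem_union.1 hc2 with h2 | h2
          · exact hct h2
          · exact (Finset.mem_sdiff.1 hcx).2 h2)
    (by rintro s ⟨hys, hsx⟩; exact Finset.sdiff_union_of_subset hys.1)
    (by
      rintro t ⟨htne, htx⟩
      exact Finset.union_sdiff_cancel_right (Finset.disjoint_left.2
        (fun {b} hb hby => (Finset.mem_sdiff.1 (htx.1 hb)).2 hby)))
    (by
      rintro s t ⟨hys, -⟩ ⟨hyt, -⟩
      exact (sdiff_ssubset_iff hys.1 hyt.1).symm)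

/-- Boundary complexes of simplices are spheres. -/
theorem bd_sphere :
    ∀ (n : ℕ) (x : Finset α), x.card ≤ n → x.Nonempty →
    GraphSphere ((x.card : ℤ) - 2) ((ssubGraph α).induce {s | s.Nonempty ∧ s ⊂ x}) := by
  intro n
  induction n with
  | zero =>
    intro x hc hx
    have := Finset.card_pos.2 hx
    omega
  | succ n ih =>
    intro x hxc hx
    classical
    by_cases h1 : x.card = 1
    · rw [show ((x.card : ℤ) - 2) = -1 by rw [h1]; norm_num]
      refine GraphSphere.empty _ ⟨?_⟩
      rintro ⟨s, hsne, hsx⟩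
      have := Finset.card_lt_card hsx
      have := Finset.card_pos.2 hsne
      omega
    · have hx1 : 1 ≤ x.card := Finset.card_pos.2 hx
      have hx2 : 2 ≤ x.card := by omega
      refine GraphSphere.succ _ _ (by push_cast; omega) ?_ ?_
      · rintro ⟨s, hsne, hsx⟩
        have hslt := Finset.card_lt_card hsx
        have hs1 := Finset.card_pos.2 hsne
        set P₁ : Set (Finset α) := {w | w.Nonempty ∧ w ⊂ s} with hP₁
        set P₂ : Set (Finset α) := {w | s ⊂ w ∧ w ⊂ x} with hP₂
        have hsplit : {w | ({w | w.Nonempty ∧ w ⊂ x} : Set (Finset α)) w ∧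
            (ssubGraph α).Adj s w} = P₁ ∪ P₂ := by
          ext w
          simp only [Set.mem_setOf_eq, Set.mem_union, hP₁, hP₂, ssub_adj]
          constructor
          · rintro ⟨⟨hwne, hwx⟩, h | h⟩
            · exact Or.inr ⟨h, hwx⟩
            · exact Or.inl ⟨hwne, h⟩
          · rintro (⟨hwne, hws⟩ | ⟨hsw, hwx⟩)
            · exact ⟨⟨hwne, hws.trans hsx⟩, Or.inr hws⟩
            · exact ⟨⟨hsne.mono hsw.1, hwx⟩, Or.inl hsw⟩
        have hd : Disjoint P₁ P₂ := by
          rw [Set.disjoint_left]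
          rintro w ⟨-, hws⟩ ⟨hsw, -⟩
          exact ssubset_irrefl _ (hws.trans hsw)
        have hadj : ∀ w₁ ∈ P₁, ∀ w₂ ∈ P₂, (ssubGraph α).Adj w₁ w₂ := by
          rintro w₁ ⟨-, h1⟩ w₂ ⟨h2, -⟩
          exact (ssub_adj _ _).2 (Or.inl (h1.trans h2))
        -- P₁ is a sphere of dimension |s| - 2
        have hsph1 : GraphSphere ((s.card : ℤ) - 2) ((ssubGraph α).induce P₁) :=
          ih s (by omega) hsne
        -- P₂ is a sphere of dimension |x \ s| - 2 = |x| - |s| - 2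
        have hsph2 : GraphSphere (((x \ s).card : ℤ) - 2) ((ssubGraph α).induce P₂) := by
          have hne : (x \ s).Nonempty := Finset.sdiff_nonempty.2 (Finset.ssubset_def.1 hsx).2
          have hcard : (x \ s).card ≤ n := by
            have := Finset.card_sdiff_of_subset hsx.1
            omega
          exact (ih (x \ s) hcard hne).of_iso _ (intervalIso x s hsx).symm
        have hj := joinSphere hsph2 hsph1
        have harith : (s.card : ℤ) - 2 + (((x \ s).card : ℤ) - 2) + 1
            = (x.card : ℤ) - 2 - 1 := by
          have := Finset.card_sdiff_of_subset hsx.1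
          push_cast [this]
          omega
        rw [harith] at hj
        have e1 : (((ssubGraph α).induce {s | s.Nonempty ∧ s ⊂ x}).unitSphere
            ⟨s, hsne, hsx⟩) ≃g
            graphJoin ((ssubGraph α).induce P₁) ((ssubGraph α).induce P₂) :=
          (flattenSphere (ssubGraph α) _ _).trans
            ((induceCongr _ hsplit).trans (splitJoin _ P₁ P₂ hd hadj))
        exact hj.of_iso _ e1.symm
      · -- deleting a singleton leaves a punctured boundary complex
        obtain ⟨a, ha⟩ := hx
        have hax : ({a} : Finset α) ⊂ x := by
          rw [Finset.ssubset_def]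
          refine ⟨Finset.singleton_subset_iff.2 ha, fun h => ?_⟩
          have := Finset.card_le_card h
          simp only [Finset.card_singleton] at this
          omega
        refine ⟨⟨{a}, Finset.singleton_nonempty a, hax⟩, ?_⟩
        refine (bd_punct x.card x le_rfl {a} (Finset.singleton_nonempty a) hax).of_iso _ ?_
        refine ((flattenDelete (ssubGraph α) _ _).trans (induceCongr _ ?_)).symm
        ext s
        simp only [Set.mem_setOf_eq]
        constructor
        · rintro ⟨⟨h1, h2⟩, h3⟩
          exact ⟨⟨h1, h2⟩, h3⟩
        · rintro ⟨⟨h1, h2⟩, h3⟩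
          exact ⟨⟨h1, h2⟩, h3⟩
end BdSphere

section Sub
variable {α : Type u} [Fintype α] [DecidableEq α]

/-- Punctured interval iso, keeping track of a removed vertex. -/
noncomputable def intervalIsoNe (x y z : Finset α) (hyx : y ⊂ x) (hyz : y ⊆ z) :
    (ssubGraph α).induce {s | (y ⊂ s ∧ s ⊂ x) ∧ s ≠ z} ≃g
      (ssubGraph α).induce {t | (t.Nonempty ∧ t ⊂ x \ y) ∧ t ≠ z \ y} :=
  ssubIso' _ _ (fun s => s \ y) (fun t => t ∪ y)
    (by
      rintro s ⟨⟨hys, hsx⟩, hsz⟩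
      refine ⟨⟨Finset.sdiff_nonempty.2 (Finset.ssubset_def.1 hys).2,
        (sdiff_ssubset_iff hys.1 hyx.1).2 hsx⟩, fun h => hsz ?_⟩
      replace h : s \ y = z \ y := h
      have h2 : s \ y ∪ y = z \ y ∪ y := by rw [h]
      rwa [Finset.sdiff_union_of_subset hys.1, Finset.sdiff_union_of_subset hyz] at h2)
    (by
      rintro t ⟨⟨htne, htx⟩, htz⟩
      have hdisj : Disjoint t y := Finset.disjoint_left.2
        (fun {b} hb hby => (Finset.mem_sdiff.1 (htx.1 hb)).2 hby)
      refine ⟨⟨?_, ?_⟩, fun h => htz ?_⟩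
      · rw [Finset.ssubset_def]
        refine ⟨Finset.subset_union_right, fun h => ?_⟩
        obtain ⟨b, hb⟩ := htne
        exact Finset.disjoint_left.1 hdisj hb (h (Finset.mem_union_left _ hb))
      · rw [Finset.ssubset_def]
        constructor
        · exact Finset.union_subset (htx.1.trans Finset.sdiff_subset) hyx.1
        · intro h
          obtain ⟨c, hcx, hct⟩ := Finset.exists_of_ssubset htx
          have hc2 := h (Finset.mem_sdiff.1 hcx).1
          rcases Finset.mem_union.1 hc2 with h2 | h2
          · exact hct h2
          · exact (Finset.mem_sdiff.1 hcx).2 h2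
      · have h2 : (t ∪ y) \ y = z \ y := by
          replace h : t ∪ y = z := h
          rw [h]
        rwa [Finset.union_sdiff_cancel_right hdisj] at h2)
    (by
      rintro s ⟨⟨hys, hsx⟩, -⟩
      exact Finset.sdiff_union_of_subset hys.1)
    (by
      rintro t ⟨⟨htne, htx⟩, -⟩
      exact Finset.union_sdiff_cancel_right (Finset.disjoint_left.2
        (fun {b} hb hby => (Finset.mem_sdiff.1 (htx.1 hb)).2 hby)))
    (by
      rintro s t ⟨⟨hys, -⟩, -⟩ ⟨⟨hyt, -⟩, -⟩
      exact (sdiff_ssubset_iff hys.1 hyt.1).symm)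

variable {k : ℕ} (f : α → Fin (k + 1))

lemma hits_card {s : Finset α} (hs : ∀ c, ∃ u ∈ s, f u = c) : k + 1 ≤ s.card := by
  have himg : s.image f = Finset.univ := by
    ext c
    simp only [Finset.mem_image, Finset.mem_univ, iff_true]
    exact hs c
  calc k + 1 = (Finset.univ : Finset (Fin (k+1))).card := by simp
    _ = (s.image f).card := by rw [himg]
    _ ≤ s.card := Finset.card_image_le

lemma hits_nonempty {s : Finset α} (hs : ∀ c, ∃ u ∈ s, f u = c) : s.Nonempty := by
  obtain ⟨u, hu, -⟩ := hs 0
  exact ⟨u, hu⟩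

lemma hits_mono {s t : Finset α} (hst : s ⊆ t) (hs : ∀ c, ∃ u ∈ s, f u = c) :
    ∀ c, ∃ u ∈ t, f u = c := fun c => by
  obtain ⟨u, hu, hc⟩ := hs c
  exact ⟨u, hst hu, hc⟩


lemma ssubset_of_subset_sdiff_singleton {a : α} {s x : Finset α} (hax : a ∈ x)
    (h : s ⊆ x \ {a}) : s ⊂ x := by
  rw [Finset.ssubset_def]
  refine ⟨h.trans Finset.sdiff_subset, fun h2 => ?_⟩
  exact (Finset.mem_sdiff.1 (h (h2 hax))).2 (Finset.mem_singleton_self a)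

/-- The punctured graph of valid proper subsets is contractible (the key `Sard` peel). -/
theorem sub_punct (x : Finset α) (a b : α) (hax : a ∈ x) (hbx : b ∈ x) (hab : a ≠ b)
    (hfab : f a = f b) (hx : ∀ c, ∃ u ∈ x, f u = c) :
    GraphContractible ((ssubGraph α).induce
      {s | (s ⊂ x ∧ ∀ c, ∃ u ∈ s, f u = c) ∧ s ≠ x \ {b}}) := by
  classical
  have hamem : a ∈ x \ {b} := Finset.mem_sdiff.2 ⟨hax, by simp [hab]⟩
  have hbmem : b ∈ x \ {a} := Finset.mem_sdiff.2 ⟨hbx, by simp [Ne.symm hab]⟩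
  set N := x.card + 1 with hN
  set A : Finset (Finset α) :=
    Finset.univ.filter (fun s => (s ⊂ x ∧ ∀ c, ∃ u ∈ s, f u = c) ∧ s ≠ x \ {b}) with hA
  set D : Finset (Finset α) := A.filter (fun s => a ∈ s) with hD
  have hmemA : ∀ s : Finset α, s ∈ A ↔ ((s ⊂ x ∧ ∀ c, ∃ u ∈ s, f u = c) ∧ s ≠ x \ {b}) := by
    intro s; simp [hA]
  have hmemD : ∀ s : Finset α,
      s ∈ D ↔ (((s ⊂ x ∧ ∀ c, ∃ u ∈ s, f u = c) ∧ s ≠ x \ {b}) ∧ a ∈ s) := by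
    intro s; simp only [hD, Finset.mem_filter, hmemA]
  set prob : Finset α → Prop := fun s => ∀ u ∈ s, f u = f a → u = a with hprobdef
  set ρ : Finset α → ℕ := fun s => s.card + (if prob s then 0 else N) with hρdef
  have hρ : ∀ v ∈ D, ∀ w ∈ D, (ssubGraph α).Adj v w → ρ v ≠ ρ w := by
    intro v hv w hw hadj
    have hcards : v.card ≠ w.card := by
      rcases (ssub_adj v w).1 hadj with h | h
      · exact Nat.ne_of_lt (Finset.card_lt_card h)
      · exact Nat.ne_of_gt (Finset.card_lt_card h)
    have hvc : v.card ≤ x.card := Finset.card_le_card (((hmemD v).1 hv).1.1.1.1)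
    have hwc : w.card ≤ x.card := Finset.card_le_card (((hmemD w).1 hw).1.1.1.1)
    simp only [hρdef, hN]
    by_cases h1 : prob v <;> by_cases h2 : prob w
    · rw [if_pos h1, if_pos h2]; omega
    · rw [if_pos h1, if_neg h2]; omega
    · rw [if_neg h1, if_pos h2]; omega
    · rw [if_neg h1, if_neg h2]; omega
  have hcore : GraphContractible ((ssubGraph α).induce {w | w ∈ A ∧ w ∉ D}) := by
    have hset : {w | w ∈ A ∧ w ∉ D} =
        {s : Finset α | (∀ c, ∃ u ∈ s, f u = c) ∧ s ⊆ x \ {a}} := by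
      ext s
      simp only [Set.mem_setOf_eq, hmemA, hmemD]
      constructor
      · rintro ⟨⟨⟨hsx, hsh⟩, hsb⟩, hnd⟩
        have has : a ∉ s := fun h => hnd ⟨⟨⟨hsx, hsh⟩, hsb⟩, h⟩
        exact ⟨hsh, Finset.subset_sdiff.2 ⟨hsx.1, Finset.disjoint_singleton_right.2 has⟩⟩
      · rintro ⟨hsh, hsub⟩
        have has : a ∉ s := fun h =>
          (Finset.mem_sdiff.1 (hsub h)).2 (Finset.mem_singleton_self a)
        exact ⟨⟨⟨ssubset_of_subset_sdiff_singleton hax hsub, hsh⟩,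
          fun h => has (h ▸ hamem)⟩, fun hd => has hd.2⟩
    rw [hset]
    have hdh : ∀ c, ∃ u ∈ x \ {a}, f u = c := by
      intro c
      by_cases hc : c = f a
      · exact ⟨b, hbmem, hfab.symm.trans hc.symm⟩
      · obtain ⟨u, hu, hfu⟩ := hx c
        exact ⟨u, Finset.mem_sdiff.2 ⟨hu, by simp; rintro rfl; exact hc hfu.symm⟩, hfu⟩
    refine GraphContractible.of_dominating _ (⟨x \ {a}, hdh, le_rfl⟩ :
      ↑{s : Finset α | (∀ c, ∃ u ∈ s, f u = c) ∧ s ⊆ x \ {a}}) ?_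
    rintro ⟨w, hwh, hwsub⟩ hne
    have hne' : w ≠ x \ {a} := fun h => hne (Subtype.ext h)
    exact (ssub_adj _ _).2 (Or.inr (Finset.ssubset_def.2
      ⟨hwsub, fun h => hne' (le_antisymm hwsub h)⟩))
  have hS : ∀ v ∈ D, GraphContractible ((ssubGraph α).induce
      {w | w ∈ A ∧ (ssubGraph α).Adj v w ∧ (w ∉ D ∨ ρ v < ρ w)}) := by
    intro v hv
    obtain ⟨⟨⟨hvx, hvh⟩, hvb⟩, hav⟩ := (hmemD v).1 hv
    by_cases hprobv : prob v
    · -- v is problematic: its current sphere is a punctured boundary complex of x \ v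
      have hbv : b ∉ v := fun h => hab (hprobv b h hfab.symm).symm
      have hvsub : v ⊆ x \ {b} :=
        Finset.subset_sdiff.2 ⟨hvx.1, Finset.disjoint_singleton_right.2 hbv⟩
      have hset : {w | w ∈ A ∧ (ssubGraph α).Adj v w ∧ (w ∉ D ∨ ρ v < ρ w)} =
          {w : Finset α | (v ⊂ w ∧ w ⊂ x) ∧ w ≠ x \ {b}} := by
        ext w
        simp only [Set.mem_setOf_eq, hmemA, hmemD, ssub_adj]
        constructor
        · rintro ⟨⟨⟨hwx, hwh⟩, hwb⟩, hor, hcond⟩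
          rcases hor with h | h
          · exact ⟨⟨h, hwx⟩, hwb⟩
          · exfalso
            rcases hcond with h2 | h2
            · obtain ⟨u, hu, hfu⟩ := hwh (f a)
              have := hprobv u (h.1 hu) hfu
              subst this
              exact h2 ⟨⟨⟨hwx, hwh⟩, hwb⟩, hu⟩
            · have hprobw : prob w := fun u hu hfu => hprobv u (h.1 hu) hfu
              have hcards := Finset.card_lt_card h
              simp only [hρdef, if_pos hprobv, if_pos hprobw] at h2
              omega
        · rintro ⟨⟨hvw, hwx⟩, hwb⟩
          have hwh := hits_mono f hvw.1 hvh
          refine ⟨⟨⟨hwx, hwh⟩, hwb⟩, Or.inl hvw, Or.inr ?_⟩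
          have hcards := Finset.card_lt_card hvw
          simp only [hρdef, if_pos hprobv]
          split <;> omega
      rw [hset]
      have hbne : ((x \ {b}) \ v).Nonempty := by
        rw [Finset.sdiff_nonempty]
        intro hsub
        exact hvb (le_antisymm hvsub hsub)
      have hbss : (x \ {b}) \ v ⊂ x \ v := by
        rw [Finset.ssubset_def]
        constructor
        · intro c hc
          have := Finset.mem_sdiff.1 hc
          have := Finset.mem_sdiff.1 this.1
          exact Finset.mem_sdiff.2 ⟨this.1, (Finset.mem_sdiff.1 hc).2⟩
        · intro h
          have hb2 : b ∈ x \ v := Finset.mem_sdiff.2 ⟨hbx, hbv⟩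
          have := h hb2
          exact (Finset.mem_sdiff.1 (Finset.mem_sdiff.1 this).1).2 (Finset.mem_singleton_self b)
      exact (bd_punct ((x \ v).card) (x \ v) le_rfl ((x \ {b}) \ v) hbne hbss).of_iso _
        (intervalIsoNe x v (x \ {b}) hvx hvsub).symm
    · -- v is not problematic: its sphere is a cone joined with something
      obtain ⟨u₀, hu₀v, hfu₀, hu₀a⟩ : ∃ u ∈ v, f u = f a ∧ u ≠ a := by
        by_contra hcon
        push_neg at hcon
        exact hprobv hcon
      set P₁ : Set (Finset α) := {w | (∀ c, ∃ u ∈ w, f u = c) ∧ w ⊆ v \ {a}} with hP₁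
      set P₂ : Set (Finset α) := {w | (v ⊂ w ∧ w ⊂ x) ∧ w ≠ x \ {b}} with hP₂
      have hva' : ∀ c, ∃ u ∈ v \ {a}, f u = c := by
        intro c
        by_cases hc : c = f a
        · exact ⟨u₀, Finset.mem_sdiff.2 ⟨hu₀v, by simp [hu₀a]⟩, hfu₀.trans hc.symm⟩
        · obtain ⟨u, hu, hfu⟩ := hvh c
          exact ⟨u, Finset.mem_sdiff.2 ⟨hu, by simp; rintro rfl; exact hc hfu.symm⟩, hfu⟩
      have hset : {w | w ∈ A ∧ (ssubGraph α).Adj v w ∧ (w ∉ D ∨ ρ v < ρ w)} = P₁ ∪ P₂ := by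
        ext w
        simp only [Set.mem_setOf_eq, Set.mem_union, hmemA, hmemD, hP₁, hP₂, ssub_adj]
        constructor
        · rintro ⟨⟨⟨hwx, hwh⟩, hwb⟩, hor, hcond⟩
          rcases hor with h | h
          · exact Or.inr ⟨⟨h, hwx⟩, hwb⟩
          · left
            have haw : a ∉ w := by
              rcases hcond with h2 | h2
              · exact fun hh => h2 ⟨⟨⟨hwx, hwh⟩, hwb⟩, hh⟩
              · exfalso
                have hcards := Finset.card_lt_card h
                simp only [hρdef, if_neg hprobv] at h2
                split at h2 <;> omega
            exact ⟨hwh, Finset.subset_sdiff.2 ⟨h.1, Finset.disjoint_singleton_right.2 haw⟩⟩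
        · rintro (⟨hwh, hwsub⟩ | ⟨⟨hvw, hwx⟩, hwb⟩)
          · have haw : a ∉ w := fun h =>
              (Finset.mem_sdiff.1 (hwsub h)).2 (Finset.mem_singleton_self a)
            have hwv : w ⊂ v := Finset.ssubset_of_subset_of_ssubset hwsub
              (Finset.sdiff_ssubset (Finset.singleton_subset_iff.2 hav)
                (Finset.singleton_nonempty a))
            exact ⟨⟨⟨hwv.trans hvx, hwh⟩, fun h => haw (h ▸ hamem)⟩, Or.inr hwv,
              Or.inl (fun hd => haw hd.2)⟩
          · have hprobw : ¬ prob w := by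
              intro hp
              exact hu₀a (hp u₀ (hvw.1 hu₀v) hfu₀)
            refine ⟨⟨⟨hwx, hits_mono f hvw.1 hvh⟩, hwb⟩, Or.inl hvw, Or.inr ?_⟩
            have hcards := Finset.card_lt_card hvw
            simp only [hρdef, if_neg hprobv, if_neg hprobw]
            omega
      rw [hset]
      have hd : Disjoint P₁ P₂ := by
        rw [Set.disjoint_left]
        rintro w ⟨-, hwsub⟩ ⟨⟨hvw, -⟩, -⟩
        exact (Finset.mem_sdiff.1 (hwsub (hvw.1 hav))).2 (Finset.mem_singleton_self a)
      have hadj : ∀ w₁ ∈ P₁, ∀ w₂ ∈ P₂, (ssubGraph α).Adj w₁ w₂ := by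
        rintro w₁ ⟨-, h1sub⟩ w₂ ⟨⟨hvw₂, -⟩, -⟩
        refine (ssub_adj _ _).2 (Or.inl ?_)
        exact (Finset.ssubset_of_subset_of_ssubset h1sub
          (Finset.sdiff_ssubset (Finset.singleton_subset_iff.2 hav)
            (Finset.singleton_nonempty a))).trans hvw₂
      have hdom : GraphContractible ((ssubGraph α).induce P₁) := by
        refine GraphContractible.of_dominating _ (⟨v \ {a}, hva', le_rfl⟩ : ↑P₁) ?_
        rintro ⟨w, hwh, hwsub⟩ hne
        have hne' : w ≠ v \ {a} := fun h => hne (Subtype.ext h)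
        exact (ssub_adj _ _).2 (Or.inr (Finset.ssubset_def.2
          ⟨hwsub, fun h => hne' (le_antisymm hwsub h)⟩))
      exact (joinContractibleLeft hdom ((ssubGraph α).induce P₂)).of_iso _
        (splitJoin _ P₁ P₂ hd hadj).symm
  exact (peel (ssubGraph α) A D (Finset.filter_subset _ _) ρ hρ hS hcore).of_iso _
    (induceCongr _ (by ext s; simp only [Set.mem_setOf_eq, hmemA]))

/-- The graph of valid proper subsets of a valid set is a sphere. -/
theorem sub_sphere :
    ∀ (n : ℕ) (x : Finset α), x.card ≤ n → (∀ c, ∃ u ∈ x, f u = c) →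
    GraphSphere ((x.card : ℤ) - k - 2)
      ((ssubGraph α).induce {s | s ⊂ x ∧ ∀ c, ∃ u ∈ s, f u = c}) := by
  intro n
  induction n with
  | zero =>
    intro x hc hx
    have := hits_card f hx
    omega
  | succ n ih =>
    intro x hxc hx
    classical
    have hk1 : k + 1 ≤ x.card := hits_card f hx
    by_cases hcard : x.card = k + 1
    · rw [show (x.card : ℤ) - k - 2 = -1 by rw [hcard]; push_cast; ring]
      refine GraphSphere.empty _ ⟨?_⟩
      rintro ⟨s, hsx, hsh⟩
      have := hits_card f hsh
      have := Finset.card_lt_card hsx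
      omega
    · refine GraphSphere.succ _ _ (by push_cast; omega) ?_ ?_
      · rintro ⟨s, hsx, hsh⟩
        have hslt := Finset.card_lt_card hsx
        have hsk := hits_card f hsh
        set P₁ : Set (Finset α) := {w | w ⊂ s ∧ ∀ c, ∃ u ∈ w, f u = c} with hP₁
        set P₂ : Set (Finset α) := {w | s ⊂ w ∧ w ⊂ x} with hP₂
        have hsplit : {w | ({w | w ⊂ x ∧ ∀ c, ∃ u ∈ w, f u = c} : Set (Finset α)) w ∧
            (ssubGraph α).Adj s w} = P₁ ∪ P₂ := by
          ext w
          simp only [Set.mem_setOf_eq, Set.mem_union, hP₁, hP₂, ssub_adj]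
          constructor
          · rintro ⟨⟨hwx, hwh⟩, h | h⟩
            · exact Or.inr ⟨h, hwx⟩
            · exact Or.inl ⟨h, hwh⟩
          · rintro (⟨hws, hwh⟩ | ⟨hsw, hwx⟩)
            · exact ⟨⟨hws.trans hsx, hwh⟩, Or.inr hws⟩
            · exact ⟨⟨hwx, hits_mono f hsw.1 hsh⟩, Or.inl hsw⟩
        have hd : Disjoint P₁ P₂ := by
          rw [Set.disjoint_left]
          rintro w ⟨hws, -⟩ ⟨hsw, -⟩
          exact ssubset_irrefl _ (hws.trans hsw)
        have hadj : ∀ w₁ ∈ P₁, ∀ w₂ ∈ P₂, (ssubGraph α).Adj w₁ w₂ := by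
          rintro w₁ ⟨h1, -⟩ w₂ ⟨h2, -⟩
          exact (ssub_adj _ _).2 (Or.inl (h1.trans h2))
        have hsph1 : GraphSphere ((s.card : ℤ) - k - 2) ((ssubGraph α).induce P₁) :=
          ih s (by omega) hsh
        have hsph2 : GraphSphere (((x \ s).card : ℤ) - 2) ((ssubGraph α).induce P₂) := by
          have hne : (x \ s).Nonempty := Finset.sdiff_nonempty.2 (Finset.ssubset_def.1 hsx).2
          have hcard2 : (x \ s).card ≤ n := by
            have := Finset.card_sdiff_of_subset hsx.1
            omega
          exact (bd_sphere _ (x \ s) hcard2 hne).of_iso _ (intervalIso x s hsx).symm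
        have hj := joinSphere hsph2 hsph1
        have harith : (s.card : ℤ) - k - 2 + (((x \ s).card : ℤ) - 2) + 1
            = (x.card : ℤ) - k - 2 - 1 := by
          have := Finset.card_sdiff_of_subset hsx.1
          push_cast [this]
          omega
        rw [harith] at hj
        have e1 : (((ssubGraph α).induce {s | s ⊂ x ∧ ∀ c, ∃ u ∈ s, f u = c}).unitSphere
            ⟨s, hsx, hsh⟩) ≃g
            graphJoin ((ssubGraph α).induce P₁) ((ssubGraph α).induce P₂) :=
          (flattenSphere (ssubGraph α) _ _).trans
            ((induceCongr _ hsplit).trans (splitJoin _ P₁ P₂ hd hadj))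
        exact hj.of_iso _ e1.symm
      · obtain ⟨a, hax, b, hbx, hab, hfab⟩ :=
          Finset.exists_ne_map_eq_of_card_lt_of_maps_to
            (show (Finset.univ : Finset (Fin (k+1))).card < x.card by simp; omega)
            (fun u _ => Finset.mem_univ (f u))
        have hxb : x \ {b} ⊂ x :=
          Finset.sdiff_ssubset (Finset.singleton_subset_iff.2 hbx) (Finset.singleton_nonempty b)
        have hxbh : ∀ c, ∃ u ∈ x \ {b}, f u = c := by
          intro c
          by_cases hc : c = f b
          · exact ⟨a, Finset.mem_sdiff.2 ⟨hax, by simp [hab]⟩, hfab.trans hc.symm⟩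
          · obtain ⟨u, hu, hfu⟩ := hx c
            exact ⟨u, Finset.mem_sdiff.2 ⟨hu, by simp; rintro rfl; exact hc hfu.symm⟩, hfu⟩
        refine ⟨⟨x \ {b}, hxb, hxbh⟩, ?_⟩
        refine (sub_punct f x a b hax hbx hab hfab hx).of_iso _ ?_
        have e := flattenDelete (ssubGraph α)
          {s : Finset α | s ⊂ x ∧ ∀ c, ∃ u ∈ s, f u = c} ⟨x \ {b}, hxb, hxbh⟩
        exact (e.trans (induceCongr _ (by ext s; exact Iff.rfl))).symm
end Sub

section Br
variable {W : Type u}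

theorem GraphSphere.neg_one_or_nonneg {q : ℤ} {G : SimpleGraph W} (h : GraphSphere q G) :
    q = -1 ∨ 0 ≤ q := by
  cases h with
  | empty => exact Or.inl rfl
  | succ G q hq => exact Or.inr hq

/-- The set of nonempty cliques of a graph. -/
def brSet (H : SimpleGraph W) : Set (Finset W) := {s | s.Nonempty ∧ H.IsClique (↑s : Set W)}

/-- The barycentric refinement of a graph. -/
noncomputable def br [Fintype W] (H : SimpleGraph W) : SimpleGraph ↑(brSet H) :=
  (ssubGraph W).induce (brSet H)

variable [Fintype W] [DecidableEq W]

lemma subtype_subset_iff (P : Set W) [DecidablePred (· ∈ P)] (s t : Finset W) (hs : ∀ w ∈ s, w ∈ P)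
    (ht : ∀ w ∈ t, w ∈ P) : s ⊆ t ↔
      s.subtype (· ∈ P) ⊆ t.subtype (· ∈ P) := by
  constructor
  · intro h a ha
    rw [Finset.mem_subtype] at ha ⊢
    exact h ha
  · intro h w hw
    have : (⟨w, hs w hw⟩ : {u // u ∈ P}) ∈ s.subtype (· ∈ P) := Finset.mem_subtype.2 hw
    exact Finset.mem_subtype.1 (h this)

/-- Transfer of clique-complexes to induced subgraphs. -/
noncomputable def brRestrict (H : SimpleGraph W) (P : Set W) [DecidablePred (· ∈ P)] :
    (ssubGraph W).induce {s : Finset W | (s.Nonempty ∧ H.IsClique (↑s : Set W)) ∧ ∀ w ∈ s, w ∈ P}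
      ≃g br (H.induce P) := by
  refine ssubIso' _ _ (fun s => s.subtype (· ∈ P))
    (fun t => t.map (Function.Embedding.subtype _)) ?_ ?_ ?_ ?_ ?_
  · rintro s ⟨⟨hne, hcl⟩, hmem⟩
    obtain ⟨w, hw⟩ := hne
    refine ⟨⟨⟨w, hmem w hw⟩, Finset.mem_subtype.2 hw⟩, ?_⟩
    intro a ha b hb hne2
    rw [Finset.mem_coe, Finset.mem_subtype] at ha hb
    exact hcl ha hb (fun h => hne2 (Subtype.ext h))
  · rintro t ⟨hne, hcl⟩
    obtain ⟨a, ha⟩ := hne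
    refine ⟨⟨⟨a.1, Finset.mem_map.2 ⟨a, ha, rfl⟩⟩, ?_⟩, ?_⟩
    · intro b hb c hc hbc
      rw [Finset.mem_coe, Finset.mem_map] at hb hc
      obtain ⟨b', hb', rfl⟩ := hb
      obtain ⟨c', hc', rfl⟩ := hc
      exact hcl hb' hc' (fun h => hbc (congrArg _ h))
    · intro w hw
      rw [Finset.mem_map] at hw
      obtain ⟨w', -, rfl⟩ := hw
      exact w'.2
  · rintro s ⟨⟨hne, hcl⟩, hmem⟩
    exact Finset.subtype_map_of_mem hmem
  · rintro t ⟨hne, hcl⟩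
    ext a
    simp only [Finset.mem_subtype, Finset.mem_map, Function.Embedding.coe_subtype]
    constructor
    · rintro ⟨b, hb, hba⟩
      rwa [Subtype.ext hba] at hb
    · intro ha
      exact ⟨a, ha, rfl⟩
  · rintro s t ⟨⟨-, -⟩, hmems⟩ ⟨⟨-, -⟩, hmemt⟩
    rw [Finset.ssubset_def, Finset.ssubset_def, subtype_subset_iff P s t hmems hmemt,
      subtype_subset_iff P t s hmemt hmems]

open Classical in
/-- The strict supersets of a clique `z`, as the clique complex of the common
neighbours of `z`. -/
noncomputable def brSup (H : SimpleGraph W) (z : Finset W) (hzne : z.Nonempty)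
    (hzcl : H.IsClique (↑z : Set W)) :
    (ssubGraph W).induce {w : Finset W | (w.Nonempty ∧ H.IsClique (↑w : Set W)) ∧ z ⊂ w}
      ≃g br (H.induce {u | ∀ v ∈ z, H.Adj v u}) := by
  classical
  refine RelIso.trans (ssubIso' _
    {s : Finset W | (s.Nonempty ∧ H.IsClique (↑s : Set W)) ∧ ∀ w ∈ s, w ∈ {u | ∀ v ∈ z, H.Adj v u}}
    (fun s => s \ z) (fun t => t ∪ z) ?_ ?_ ?_ ?_ ?_)
    (brRestrict H {u | ∀ v ∈ z, H.Adj v u})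
  · rintro s ⟨⟨hne, hcl⟩, hzs⟩
    refine ⟨⟨Finset.sdiff_nonempty.2 (Finset.ssubset_def.1 hzs).2,
      hcl.subset (Finset.coe_subset.2 Finset.sdiff_subset)⟩, ?_⟩
    intro u hu v hv
    have hus := (Finset.mem_sdiff.1 hu).1
    have huz := (Finset.mem_sdiff.1 hu).2
    exact hcl (hzs.1 hv) hus (fun h => huz (h ▸ hv))
  · rintro t ⟨⟨hne, hcl⟩, hmem⟩
    have hdisj : Disjoint t z := Finset.disjoint_left.2
      (fun {b} hb hbz => H.irrefl (hmem b hb b hbz))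
    refine ⟨⟨?_, ?_⟩, ?_⟩
    · exact hne.mono Finset.subset_union_left
    · intro a ha b hb hab
      rw [Finset.coe_union, Set.mem_union] at ha hb
      rcases ha with ha | ha <;> rcases hb with hb | hb
      · exact hcl ha hb hab
      · exact (hmem a ha b hb).symm
      · exact hmem b hb a ha
      · exact hzcl ha hb hab
    · rw [Finset.ssubset_def]
      refine ⟨Finset.subset_union_right, fun h => ?_⟩
      obtain ⟨b, hb⟩ := hne
      exact Finset.disjoint_left.1 hdisj hb (h (Finset.mem_union_left _ hb))
  · rintro s ⟨⟨-, -⟩, hzs⟩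
    exact Finset.sdiff_union_of_subset hzs.1
  · rintro t ⟨⟨-, -⟩, hmem⟩
    exact Finset.union_sdiff_cancel_right (Finset.disjoint_left.2
      (fun {b} hb hbz => H.irrefl (hmem b hb b hbz)))
  · rintro s t ⟨⟨-, -⟩, hzs⟩ ⟨⟨-, -⟩, hzt⟩
    exact (sdiff_ssubset_iff hzs.1 hzt.1).symm

end Br

section CliqueSphere
variable {W : Type u}

/-- Iterated unit spheres along a clique, in ambient form. -/
theorem clique_sphere' :
    ∀ (j : ℕ) (H : SimpleGraph W) (Q : Set W) (q : ℤ), GraphSphere q (H.induce Q) →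
    ∀ z : Finset W, z.card = j + 1 → (∀ u ∈ z, u ∈ Q) → H.IsClique (↑z : Set W) →
    GraphSphere (q - (j + 1)) (H.induce {u | u ∈ Q ∧ ∀ v ∈ z, H.Adj v u}) := by
  intro j
  induction j with
  | zero =>
    intro H Q q hQ z hcard hzQ hzcl
    obtain ⟨v, rfl⟩ := Finset.card_eq_one.1 hcard
    have h2 := hQ.unitSphere_sphere ⟨v, hzQ v (Finset.mem_singleton_self v)⟩
    refine (h2.of_iso _ ((flattenSphere H Q _).trans (induceCongr _ ?_)))
    ext u
    simp only [Set.mem_setOf_eq, Finset.mem_singleton]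
    constructor
    · rintro ⟨h1, h2⟩
      exact ⟨h1, fun v' hv' => hv' ▸ h2⟩
    · rintro ⟨h1, h2⟩
      exact ⟨h1, h2 v rfl⟩
  | succ j ih =>
    intro H Q q hQ z hcard hzQ hzcl
    classical
    obtain ⟨v, z', hvz', rfl, hz'c⟩ := Finset.card_eq_succ.1 hcard
    have hvQ : v ∈ Q := hzQ v (Finset.mem_insert_self v z')
    have hsphere : GraphSphere (q - 1) (H.induce {u | u ∈ Q ∧ H.Adj v u}) := by
      have h2 := hQ.unitSphere_sphere ⟨v, hvQ⟩
      exact h2.of_iso _ (flattenSphere H Q _)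
    have hz'Q : ∀ u ∈ z', u ∈ {u | u ∈ Q ∧ H.Adj v u} := by
      intro u hu
      refine ⟨hzQ u (Finset.mem_insert_of_mem hu), ?_⟩
      refine hzcl (Finset.mem_coe.2 (Finset.mem_insert_self v z'))
        (Finset.mem_coe.2 (Finset.mem_insert_of_mem hu)) ?_
      rintro rfl; exact hvz' hu
    have hz'cl : H.IsClique (↑z' : Set W) :=
      hzcl.subset (Finset.coe_subset.2 (Finset.subset_insert v z'))
    have h3 := ih H {u | u ∈ Q ∧ H.Adj v u} (q - 1) hsphere z' hz'c hz'Q hz'cl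
    have h4 : q - 1 - (j + 1) = q - (j + 1 + 1) := by ring
    rw [h4] at h3
    refine h3.of_iso _ (induceCongr _ ?_)
    ext u
    simp only [Set.mem_setOf_eq, Finset.mem_insert]
    constructor
    · rintro ⟨⟨h1, h2⟩, h3⟩
      refine ⟨h1, fun v' hv' => ?_⟩
      rcases hv' with rfl | hv'
      · exact h2
      · exact h3 v' hv'
    · rintro ⟨h1, h2⟩
      exact ⟨⟨h1, h2 v (Or.inl rfl)⟩, fun v' hv' => h2 v' (Or.inr hv')⟩

end CliqueSphere

section BrMain

lemma isClique_coe_singleton {W : Type u} (H : SimpleGraph W) (w : W) :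
    H.IsClique (↑({w} : Finset W) : Set W) := by
  intro a ha b hb hab
  simp only [Finset.coe_singleton, Set.mem_singleton_iff] at ha hb
  subst ha; subst hb
  exact absurd rfl hab

open Classical in
noncomputable def brCongr {W : Type u} [Fintype W] (H : SimpleGraph W) {P Q : Set W}
    (h : P = Q) : br (H.induce P) ≃g br (H.induce Q) := by
  subst h; exact RelIso.refl _

theorem GraphSphere.exists_delete {W : Type u} {q : ℤ} {G : SimpleGraph W}
    (h : GraphSphere q G) (hq : 0 ≤ q) : ∃ v, GraphContractible (G.deleteVert v) := by
  cases h with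
  | empty G hE => omega
  | succ G q hq hS hv => exact hv

/-- Barycentric refinements of contractible graphs are contractible. -/
theorem br_contr :
    ∀ {W : Type u} {H : SimpleGraph W}, GraphContractible H →
    ∀ [Fintype W], GraphContractible (br H) := by
  intro W H h
  induction h with
  | @single W' H' h1 h2 =>
    intro inst
    classical
    obtain ⟨w⟩ := h1
    haveI := h2
    refine .single _ ⟨⟨{w}, Finset.singleton_nonempty w, isClique_coe_singleton H' w⟩⟩ ?_
    refine ⟨fun s t => Subtype.ext ?_⟩
    obtain ⟨b, hb⟩ := s.2.1
    obtain ⟨c, hc⟩ := t.2.1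
    have hs : s.1 = {b} := Finset.eq_singleton_iff_unique_mem.2
      ⟨hb, fun a _ => Subsingleton.elim a b⟩
    have ht : t.1 = {c} := Finset.eq_singleton_iff_unique_mem.2
      ⟨hc, fun a _ => Subsingleton.elim a c⟩
    rw [hs, ht, Subsingleton.elim b c]
  | @step W' H' v hS hD ihS ihD =>
    intro inst
    classical
    set A : Finset (Finset W') :=
      Finset.univ.filter (fun s => s.Nonempty ∧ H'.IsClique (↑s : Set W')) with hA
    set D : Finset (Finset W') := A.filter (fun s => v ∈ s) with hD'
    have hmemA : ∀ s : Finset W', s ∈ A ↔ (s.Nonempty ∧ H'.IsClique (↑s : Set W')) := by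
      intro s; simp [hA]
    have hmemD : ∀ s : Finset W',
        s ∈ D ↔ ((s.Nonempty ∧ H'.IsClique (↑s : Set W')) ∧ v ∈ s) := by
      intro s; simp only [hD', Finset.mem_filter, hmemA]
    have hρ : ∀ s ∈ D, ∀ t ∈ D, (ssubGraph W').Adj s t → Finset.card s ≠ Finset.card t := by
      intro s _ t _ hadj
      rcases (ssub_adj s t).1 hadj with h | h
      · exact Nat.ne_of_lt (Finset.card_lt_card h)
      · exact Nat.ne_of_gt (Finset.card_lt_card h)
    have hcore : GraphContractible ((ssubGraph W').induce {w | w ∈ A ∧ w ∉ D}) := by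
      have hset : {w | w ∈ A ∧ w ∉ D} = {s : Finset W' |
          (s.Nonempty ∧ H'.IsClique (↑s : Set W')) ∧ ∀ u ∈ s, u ∈ ({u | u ≠ v} : Set W')} := by
        ext s
        simp only [Set.mem_setOf_eq, hmemA, hmemD]
        constructor
        · rintro ⟨⟨hne, hcl⟩, hnd⟩
          exact ⟨⟨hne, hcl⟩, fun u hu huv => hnd ⟨⟨hne, hcl⟩, huv ▸ hu⟩⟩
        · rintro ⟨⟨hne, hcl⟩, hall⟩
          exact ⟨⟨hne, hcl⟩, fun hd => hall v hd.2 rfl⟩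
      rw [hset]
      exact (ihD.of_iso _ (brRestrict H' {u | u ≠ v}).symm)
    have hS' : ∀ s ∈ D, GraphContractible ((ssubGraph W').induce
        {w | w ∈ A ∧ (ssubGraph W').Adj s w ∧ (w ∉ D ∨ Finset.card s < Finset.card w)}) := by
      intro s hs
      obtain ⟨⟨hsne, hscl⟩, hvs⟩ := (hmemD s).1 hs
      by_cases hsv : s = {v}
      · subst hsv
        have hset : {w | w ∈ A ∧ (ssubGraph W').Adj {v} w ∧
              (w ∉ D ∨ Finset.card ({v} : Finset W') < Finset.card w)}
            = {w : Finset W' | (w.Nonempty ∧ H'.IsClique (↑w : Set W')) ∧ ({v} : Finset W') ⊂ w} := by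
          ext w
          simp only [Set.mem_setOf_eq, hmemA, hmemD, ssub_adj]
          constructor
          · rintro ⟨⟨hne, hcl⟩, hor, -⟩
            rcases hor with h | h
            · exact ⟨⟨hne, hcl⟩, h⟩
            · exact absurd h (not_ssubset_singleton hne)
          · rintro ⟨⟨hne, hcl⟩, hsw⟩
            refine ⟨⟨hne, hcl⟩, Or.inl hsw, Or.inr ?_⟩
            have := Finset.card_lt_card hsw
            simpa using this
        rw [hset]
        have hcontr : GraphContractible (br (H'.induce {u | ∀ v' ∈ ({v} : Finset W'), H'.Adj v' u})) := by
          have hset2 : {u | ∀ v' ∈ ({v} : Finset W'), H'.Adj v' u} = {u | H'.Adj v u} := by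
            ext u
            simp only [Set.mem_setOf_eq, Finset.mem_singleton]
            constructor
            · intro h; exact h v rfl
            · rintro h v' rfl; exact h
          exact ihS.of_iso _ (brCongr H' hset2.symm)
        exact hcontr.of_iso _
          (brSup H' {v} (Finset.singleton_nonempty v) (isClique_coe_singleton H' v)).symm
      · set P₁ : Set (Finset W') := {w | w.Nonempty ∧ w ⊆ s \ {v}} with hP₁
        set P₂ : Set (Finset W') :=
          {w | (w.Nonempty ∧ H'.IsClique (↑w : Set W')) ∧ s ⊂ w} with hP₂
        have hset : {w | w ∈ A ∧ (ssubGraph W').Adj s w ∧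
            (w ∉ D ∨ Finset.card s < Finset.card w)} = P₁ ∪ P₂ := by
          ext w
          simp only [Set.mem_setOf_eq, Set.mem_union, hmemA, hmemD, hP₁, hP₂, ssub_adj]
          constructor
          · rintro ⟨⟨hne, hcl⟩, hor, hcond⟩
            rcases hor with h | h
            · exact Or.inr ⟨⟨hne, hcl⟩, h⟩
            · left
              have hvw : v ∉ w := by
                rcases hcond with h2 | h2
                · exact fun hh => h2 ⟨⟨hne, hcl⟩, hh⟩
                · have := Finset.card_lt_card h
                  omega
              exact ⟨hne, Finset.subset_sdiff.2 ⟨h.1, Finset.disjoint_singleton_right.2 hvw⟩⟩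
          · rintro (⟨hne, hsub⟩ | ⟨⟨hne, hcl⟩, hsw⟩)
            · have hvw : v ∉ w := fun h =>
                (Finset.mem_sdiff.1 (hsub h)).2 (Finset.mem_singleton_self v)
              have hws : w ⊂ s := Finset.ssubset_of_subset_of_ssubset hsub
                (Finset.sdiff_ssubset (Finset.singleton_subset_iff.2 hvs)
                  (Finset.singleton_nonempty v))
              exact ⟨⟨hne, hscl.subset (Finset.coe_subset.2 hws.1)⟩, Or.inr hws,
                Or.inl (fun hd => hvw hd.2)⟩
            · exact ⟨⟨hne, hcl⟩, Or.inl hsw, Or.inr (Finset.card_lt_card hsw)⟩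
        rw [hset]
        have hd : Disjoint P₁ P₂ := by
          rw [Set.disjoint_left]
          rintro w ⟨-, hwsub⟩ ⟨-, hsw⟩
          exact (Finset.mem_sdiff.1 (hwsub (hsw.1 hvs))).2 (Finset.mem_singleton_self v)
        have hadj : ∀ w₁ ∈ P₁, ∀ w₂ ∈ P₂, (ssubGraph W').Adj w₁ w₂ := by
          rintro w₁ ⟨-, h1⟩ w₂ ⟨-, h2⟩
          refine (ssub_adj _ _).2 (Or.inl ?_)
          exact (Finset.ssubset_of_subset_of_ssubset h1
            (Finset.sdiff_ssubset (Finset.singleton_subset_iff.2 hvs)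
              (Finset.singleton_nonempty v))).trans h2
        have hdom : GraphContractible ((ssubGraph W').induce P₁) := by
          have hvne : (s \ {v}).Nonempty := sdiff_singleton_ne_nonempty hvs hsv
          refine GraphContractible.of_dominating _ (⟨s \ {v}, hvne, le_rfl⟩ : ↑P₁) ?_
          rintro ⟨w, hwne, hwsub⟩ hne
          have hne' : w ≠ s \ {v} := fun h => hne (Subtype.ext h)
          exact (ssub_adj _ _).2 (Or.inr (Finset.ssubset_def.2
            ⟨hwsub, fun h => hne' (le_antisymm hwsub h)⟩))
        exact (joinContractibleLeft hdom ((ssubGraph W').induce P₂)).of_iso _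
          (splitJoin _ P₁ P₂ hd hadj).symm
    exact (peel (ssubGraph W') A D (Finset.filter_subset _ _) Finset.card hρ hS' hcore).of_iso _
      (induceCongr _ (by ext s; simp only [Set.mem_setOf_eq, hmemA, brSet]))

end BrMain

section BrSphere

/-- Barycentric refinements of spheres are spheres. -/
theorem br_sphere :
    ∀ (n : ℕ), ∀ {W : Type u} [Fintype W] (H : SimpleGraph W),
      GraphSphere ((n : ℤ) - 1) H → GraphSphere ((n : ℤ) - 1) (br H) := by
  intro n
  induction n using Nat.strong_induction_on with
  | _ n ih =>
    intro W instW H hH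
    classical
    rcases Nat.eq_zero_or_pos n with hn | hn
    · subst hn
      have hE : IsEmpty W := GraphSphere.isEmpty (by simpa using hH)
      rw [show ((0 : ℕ) : ℤ) - 1 = -1 by norm_num]
      refine GraphSphere.empty _ ⟨?_⟩
      rintro ⟨s, hne, -⟩
      obtain ⟨a, -⟩ := hne
      exact hE.false a
    · refine GraphSphere.succ _ _ (by push_cast; omega) ?_ ?_
      · rintro ⟨s, hsne, hscl⟩
        have hs1 : 1 ≤ s.card := Finset.card_pos.2 hsne
        have hQ : GraphSphere ((n : ℤ) - 1 - s.card) (H.induce {u | ∀ v ∈ s, H.Adj v u}) := by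
          obtain ⟨v, hv⟩ := hsne
          by_cases hsv : s = {v}
          · subst hsv
            have h2 := hH.unitSphere_sphere v
            have hset : {u | H.Adj v u} = {u | ∀ v' ∈ ({v} : Finset W), H.Adj v' u} := by
              ext u
              simp only [Set.mem_setOf_eq, Finset.mem_singleton]
              constructor
              · rintro h v' rfl; exact h
              · intro h; exact h v rfl
            have h3 := h2.of_iso _ (induceCongr H hset)
            rw [show (n : ℤ) - 1 - (({v} : Finset W).card : ℤ) = (n : ℤ) - 1 - 1 by simp]
            exact h3
          · have hs2 : 2 ≤ s.card := by
              by_contra hcon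
              push_neg at hcon
              have h1 : s.card = 1 := by omega
              obtain ⟨u, hu⟩ := Finset.card_eq_one.1 h1
              rw [hu, Finset.mem_singleton] at hv
              exact hsv (by rw [hu, hv])
            set z' := s.erase v with hz'
            have hz'card : z'.card = s.card - 1 := Finset.card_erase_of_mem hv
            have hz'Q : ∀ u ∈ z', u ∈ {u | H.Adj v u} := by
              intro u hu
              have huv : u ≠ v := (Finset.mem_erase.1 hu).1
              exact hscl (Finset.mem_coe.2 hv)
                (Finset.mem_coe.2 (Finset.mem_of_mem_erase hu)) (Ne.symm huv)
            have hz'cl : H.IsClique (↑z' : Set W) :=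
              hscl.subset (Finset.coe_subset.2 (Finset.erase_subset v s))
            have h4 := clique_sphere' (s.card - 2) H {u | H.Adj v u} ((n : ℤ) - 1 - 1)
              (hH.unitSphere_sphere v) z' (by omega) hz'Q hz'cl
            have hset : {u | u ∈ {u | H.Adj v u} ∧ ∀ v' ∈ z', H.Adj v' u}
                = {u | ∀ v' ∈ s, H.Adj v' u} := by
              ext u
              simp only [Set.mem_setOf_eq]
              constructor
              · rintro ⟨h1, h2⟩ v' hv'
                by_cases hvv : v' = v
                · exact hvv ▸ h1
                · exact h2 v' (Finset.mem_erase.2 ⟨hvv, hv'⟩)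
              · intro h
                exact ⟨h v hv, fun v' hv' => h v' (Finset.mem_of_mem_erase hv')⟩
            have h5 := h4.of_iso _ (induceCongr H hset)
            have harith : (n : ℤ) - 1 - 1 - (((s.card - 2 : ℕ) : ℤ) + 1)
                = (n : ℤ) - 1 - s.card := by omega
            rwa [harith] at h5
        have hsn : s.card ≤ n := by
          rcases hQ.neg_one_or_nonneg with h | h <;> omega
        have hQ' : GraphSphere (((n - s.card : ℕ) : ℤ) - 1)
            (H.induce {u | ∀ v ∈ s, H.Adj v u}) := by
          have harith : ((n - s.card : ℕ) : ℤ) - 1 = (n : ℤ) - 1 - s.card := by omega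
          rw [harith]; exact hQ
        have hbr := ih (n - s.card) (by omega) _ hQ'
        have hP₂ : GraphSphere (((n - s.card : ℕ) : ℤ) - 1)
            ((ssubGraph W).induce {w : Finset W | (w.Nonempty ∧ H.IsClique (↑w : Set W)) ∧ s ⊂ w}) :=
          hbr.of_iso _ (brSup H s hsne hscl).symm
        have hP₁ : GraphSphere ((s.card : ℤ) - 2)
            ((ssubGraph W).induce {w : Finset W | w.Nonempty ∧ w ⊂ s}) :=
          bd_sphere s.card s le_rfl hsne
        have hsplit : {w | brSet H w ∧ (ssubGraph W).Adj s w}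
            = {w : Finset W | w.Nonempty ∧ w ⊂ s}
              ∪ {w : Finset W | (w.Nonempty ∧ H.IsClique (↑w : Set W)) ∧ s ⊂ w} := by
          ext w
          simp only [Set.mem_setOf_eq, Set.mem_union, brSet, ssub_adj]
          constructor
          · rintro ⟨⟨hne, hcl⟩, h | h⟩
            · exact Or.inr ⟨⟨hne, hcl⟩, h⟩
            · exact Or.inl ⟨hne, h⟩
          · rintro (⟨hne, hws⟩ | ⟨⟨hne, hcl⟩, hsw⟩)
            · exact ⟨⟨hne, hscl.subset (Finset.coe_subset.2 hws.1)⟩, Or.inr hws⟩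
            · exact ⟨⟨hne, hcl⟩, Or.inl hsw⟩
        have hd : Disjoint ({w : Finset W | w.Nonempty ∧ w ⊂ s})
            ({w : Finset W | (w.Nonempty ∧ H.IsClique (↑w : Set W)) ∧ s ⊂ w}) := by
          rw [Set.disjoint_left]
          rintro w ⟨-, hws⟩ ⟨-, hsw⟩
          exact ssubset_irrefl _ (hws.trans hsw)
        have hadj : ∀ w₁ ∈ {w : Finset W | w.Nonempty ∧ w ⊂ s},
            ∀ w₂ ∈ {w : Finset W | (w.Nonempty ∧ H.IsClique (↑w : Set W)) ∧ s ⊂ w},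
            (ssubGraph W).Adj w₁ w₂ := by
          rintro w₁ ⟨-, h1⟩ w₂ ⟨-, h2⟩
          exact (ssub_adj _ _).2 (Or.inl (h1.trans h2))
        have hj := joinSphere hP₂ hP₁
        have harith : (s.card : ℤ) - 2 + (((n - s.card : ℕ) : ℤ) - 1) + 1
            = (n : ℤ) - 1 - 1 := by omega
        rw [harith] at hj
        have e1 : (br H).unitSphere ⟨s, hsne, hscl⟩ ≃g
            graphJoin ((ssubGraph W).induce {w : Finset W | w.Nonempty ∧ w ⊂ s})
              ((ssubGraph W).induce
                {w : Finset W | (w.Nonempty ∧ H.IsClique (↑w : Set W)) ∧ s ⊂ w}) :=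
          (flattenSphere (ssubGraph W) (brSet H) _).trans
            ((induceCongr _ hsplit).trans (splitJoin _ _ _ hd hadj))
        exact hj.of_iso _ e1.symm
      · -- the contractible-deletion witness: delete the singleton of H's witness
        obtain ⟨v, hv⟩ := hH.exists_delete (by push_cast; omega)
        refine ⟨⟨{v}, Finset.singleton_nonempty v, isClique_coe_singleton H v⟩, ?_⟩
        set A : Finset (Finset W) := Finset.univ.filter
          (fun s => (s.Nonempty ∧ H.IsClique (↑s : Set W)) ∧ s ≠ {v}) with hA
        set D : Finset (Finset W) := A.filter (fun s => v ∈ s) with hD'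
        have hmemA : ∀ s : Finset W,
            s ∈ A ↔ ((s.Nonempty ∧ H.IsClique (↑s : Set W)) ∧ s ≠ {v}) := by
          intro s; simp [hA]
        have hmemD : ∀ s : Finset W,
            s ∈ D ↔ (((s.Nonempty ∧ H.IsClique (↑s : Set W)) ∧ s ≠ {v}) ∧ v ∈ s) := by
          intro s; simp only [hD', Finset.mem_filter, hmemA]
        have hρ : ∀ s ∈ D, ∀ t ∈ D, (ssubGraph W).Adj s t →
            Finset.card s ≠ Finset.card t := by
          intro s _ t _ hadj
          rcases (ssub_adj s t).1 hadj with h | h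
          · exact Nat.ne_of_lt (Finset.card_lt_card h)
          · exact Nat.ne_of_gt (Finset.card_lt_card h)
        have hcore : GraphContractible ((ssubGraph W).induce {w | w ∈ A ∧ w ∉ D}) := by
          have hset : {w | w ∈ A ∧ w ∉ D} = {s : Finset W |
              (s.Nonempty ∧ H.IsClique (↑s : Set W)) ∧ ∀ u ∈ s, u ∈ ({u | u ≠ v} : Set W)} := by
            ext s
            simp only [Set.mem_setOf_eq, hmemA, hmemD]
            constructor
            · rintro ⟨⟨⟨hne, hcl⟩, hnv⟩, hnd⟩
              exact ⟨⟨hne, hcl⟩, fun u hu huv =>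
                hnd ⟨⟨⟨hne, hcl⟩, hnv⟩, huv ▸ hu⟩⟩
            · rintro ⟨⟨hne, hcl⟩, hall⟩
              have hvs : v ∉ s := fun h => hall v h rfl
              have hnv : s ≠ {v} := fun h => hvs (h ▸ Finset.mem_singleton_self v)
              exact ⟨⟨⟨hne, hcl⟩, hnv⟩, fun hd => hvs hd.2⟩
          rw [hset]
          exact ((br_contr hv).of_iso _ (brRestrict H {u | u ≠ v}).symm)
        have hS' : ∀ s ∈ D, GraphContractible ((ssubGraph W).induce
            {w | w ∈ A ∧ (ssubGraph W).Adj s w ∧ (w ∉ D ∨ Finset.card s < Finset.card w)}) := by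
          intro s hs
          obtain ⟨⟨⟨hsne, hscl⟩, hsnv⟩, hvs⟩ := (hmemD s).1 hs
          set P₁ : Set (Finset W) := {w | w.Nonempty ∧ w ⊆ s \ {v}} with hP₁
          set P₂ : Set (Finset W) :=
            {w | (w.Nonempty ∧ H.IsClique (↑w : Set W)) ∧ s ⊂ w} with hP₂
          have hset : {w | w ∈ A ∧ (ssubGraph W).Adj s w ∧
              (w ∉ D ∨ Finset.card s < Finset.card w)} = P₁ ∪ P₂ := by
            ext w
            simp only [Set.mem_setOf_eq, Set.mem_union, hmemA, hmemD, hP₁, hP₂, ssub_adj]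
            constructor
            · rintro ⟨⟨⟨hne, hcl⟩, hnv⟩, hor, hcond⟩
              rcases hor with h | h
              · exact Or.inr ⟨⟨hne, hcl⟩, h⟩
              · left
                have hvw : v ∉ w := by
                  rcases hcond with h2 | h2
                  · exact fun hh => h2 ⟨⟨⟨hne, hcl⟩, hnv⟩, hh⟩
                  · have := Finset.card_lt_card h
                    omega
                exact ⟨hne, Finset.subset_sdiff.2 ⟨h.1, Finset.disjoint_singleton_right.2 hvw⟩⟩
            · rintro (⟨hne, hsub⟩ | ⟨⟨hne, hcl⟩, hsw⟩)
              · have hvw : v ∉ w := fun h =>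
                  (Finset.mem_sdiff.1 (hsub h)).2 (Finset.mem_singleton_self v)
                have hws : w ⊂ s := Finset.ssubset_of_subset_of_ssubset hsub
                  (Finset.sdiff_ssubset (Finset.singleton_subset_iff.2 hvs)
                    (Finset.singleton_nonempty v))
                refine ⟨⟨⟨hne, hscl.subset (Finset.coe_subset.2 hws.1)⟩,
                  fun h => hvw (h ▸ Finset.mem_singleton_self v)⟩, Or.inr hws,
                  Or.inl (fun hd => hvw hd.2)⟩
              · have hwv : w ≠ {v} := by
                  rintro rfl
                  exact not_ssubset_singleton hsne hsw
                exact ⟨⟨⟨hne, hcl⟩, hwv⟩, Or.inl hsw, Or.inr (Finset.card_lt_card hsw)⟩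
          rw [hset]
          have hd : Disjoint P₁ P₂ := by
            rw [Set.disjoint_left]
            rintro w ⟨-, hwsub⟩ ⟨-, hsw⟩
            exact (Finset.mem_sdiff.1 (hwsub (hsw.1 hvs))).2 (Finset.mem_singleton_self v)
          have hadj : ∀ w₁ ∈ P₁, ∀ w₂ ∈ P₂, (ssubGraph W).Adj w₁ w₂ := by
            rintro w₁ ⟨-, h1⟩ w₂ ⟨-, h2⟩
            refine (ssub_adj _ _).2 (Or.inl ?_)
            exact (Finset.ssubset_of_subset_of_ssubset h1
              (Finset.sdiff_ssubset (Finset.singleton_subset_iff.2 hvs)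
                (Finset.singleton_nonempty v))).trans h2
          have hdom : GraphContractible ((ssubGraph W).induce P₁) := by
            have hvne : (s \ {v}).Nonempty := sdiff_singleton_ne_nonempty hvs hsnv
            refine GraphContractible.of_dominating _ (⟨s \ {v}, hvne, le_rfl⟩ : ↑P₁) ?_
            rintro ⟨w, hwne, hwsub⟩ hne
            have hne' : w ≠ s \ {v} := fun h => hne (Subtype.ext h)
            exact (ssub_adj _ _).2 (Or.inr (Finset.ssubset_def.2
              ⟨hwsub, fun h => hne' (le_antisymm hwsub h)⟩))
          exact (joinContractibleLeft hdom ((ssubGraph W).induce P₂)).of_iso _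
            (splitJoin _ P₁ P₂ hd hadj).symm
        have hpeel := peel (ssubGraph W) A D (Finset.filter_subset _ _) Finset.card hρ hS' hcore
        refine hpeel.of_iso _ ?_
        refine (induceCongr _ ?_).trans
          (flattenDelete (ssubGraph W) (brSet H)
            ⟨{v}, Finset.singleton_nonempty v, isClique_coe_singleton H v⟩).symm
        ext s
        simp only [Set.mem_setOf_eq, hmemA, brSet]
        constructor
        · rintro ⟨h1, h2⟩; exact ⟨h1, h2⟩
        · rintro ⟨h1, h2⟩; exact ⟨h1, h2⟩
end BrSphere
noncomputable def stmtIso {V : Type} (G : SimpleGraph V) {k : ℕ} (f : V → Fin (k + 1)) :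
    (SimpleGraph.fromRel
      (fun x y : {x : Finset V // x.Nonempty ∧ G.IsClique (↑x : Set V) ∧
          ∀ c : Fin (k + 1), ∃ v ∈ x, f v = c} => x.1 ⊂ y.1)) ≃g
    (ssubGraph V).induce {s : Finset V | s.Nonempty ∧ G.IsClique (↑s : Set V) ∧
        ∀ c : Fin (k + 1), ∃ v ∈ s, f v = c} := by
  refine ⟨Equiv.refl _, ?_⟩
  intro a b
  simp only [Equiv.refl_apply, induce_adj', ssub_adj, SimpleGraph.fromRel_adj]
  constructor
  · intro h
    refine ⟨?_, h⟩
    rintro rfl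
    rcases h with h | h <;> exact ssubset_irrefl _ h
  · rintro ⟨-, h⟩
    exact h

/-- Sard's theorem for discrete manifolds: for an `m`-manifold `G` and any function
`f` on the vertices with values in `{0, …, k}`, the graph `G_f` of cliques on which
`f` attains all `k+1` values (ordered by strict inclusion) is either empty or an
`(m-k)`-manifold. -/
theorem level_set_is_manifold {V : Type} [Fintype V] (G : SimpleGraph V)
    (m k : ℕ) (hkm : k ≤ m) (hG : IsGraphManifold (m : ℤ) G)
    (f : V → Fin (k + 1)) :
    IsEmpty {x : Finset V // x.Nonempty ∧ G.IsClique (↑x : Set V) ∧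
        ∀ c : Fin (k + 1), ∃ v ∈ x, f v = c} ∨
    IsGraphManifold ((m : ℤ) - k)
      (SimpleGraph.fromRel
        (fun x y : {x : Finset V // x.Nonempty ∧ G.IsClique (↑x : Set V) ∧
            ∀ c : Fin (k + 1), ∃ v ∈ x, f v = c} => x.1 ⊂ y.1)) := by
  classical
  right
  intro x
  obtain ⟨z, hzne, hzcl, hzh⟩ := x
  have hQ : GraphSphere ((m : ℤ) - z.card) (G.induce {u | ∀ v ∈ z, G.Adj v u}) := by
    have hzne' := hzne
    obtain ⟨v, hv⟩ := hzne'
    by_cases hsv : z = {v}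
    · subst hsv
      have h2 := hG v
      have hset : {u | G.Adj v u} = {u | ∀ v' ∈ ({v} : Finset V), G.Adj v' u} := by
        ext u
        simp only [Set.mem_setOf_eq, Finset.mem_singleton]
        constructor
        · rintro h v' rfl; exact h
        · intro h; exact h v rfl
      have h3 := h2.of_iso _ (induceCongr G hset)
      rw [show (m : ℤ) - (({v} : Finset V).card : ℤ) = (m : ℤ) - 1 by simp]
      exact h3
    · have hs2 : 2 ≤ z.card := by
        by_contra hcon
        push_neg at hcon
        have h1 : z.card = 1 := by
          have := Finset.card_pos.2 ⟨v, hv⟩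
          omega
        obtain ⟨u, hu⟩ := Finset.card_eq_one.1 h1
        rw [hu, Finset.mem_singleton] at hv
        exact hsv (by rw [hu, hv])
      set z' := z.erase v with hz'
      have hz'card : z'.card = z.card - 1 := Finset.card_erase_of_mem hv
      have hz'Q : ∀ u ∈ z', u ∈ {u | G.Adj v u} := by
        intro u hu
        have huv : u ≠ v := (Finset.mem_erase.1 hu).1
        exact hzcl (Finset.mem_coe.2 hv)
          (Finset.mem_coe.2 (Finset.mem_of_mem_erase hu)) (Ne.symm huv)
      have hz'cl : G.IsClique (↑z' : Set V) :=
        hzcl.subset (Finset.coe_subset.2 (Finset.erase_subset v z))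
      have h4 := clique_sphere' (z.card - 2) G {u | G.Adj v u} ((m : ℤ) - 1)
        (hG v) z' (by omega) hz'Q hz'cl
      have hset : {u | u ∈ {u | G.Adj v u} ∧ ∀ v' ∈ z', G.Adj v' u}
          = {u | ∀ v' ∈ z, G.Adj v' u} := by
        ext u
        simp only [Set.mem_setOf_eq]
        constructor
        · rintro ⟨h1, h2⟩ v' hv'
          by_cases hvv : v' = v
          · exact hvv ▸ h1
          · exact h2 v' (Finset.mem_erase.2 ⟨hvv, hv'⟩)
        · intro h
          exact ⟨h v hv, fun v' hv' => h v' (Finset.mem_of_mem_erase hv')⟩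
      have h5 := h4.of_iso _ (induceCongr G hset)
      have harith : (m : ℤ) - 1 - (((z.card - 2 : ℕ) : ℤ) + 1)
          = (m : ℤ) - z.card := by omega
      rwa [harith] at h5
  have hzm : (z.card : ℤ) ≤ (m : ℤ) + 1 := by
    rcases hQ.neg_one_or_nonneg with h | h <;> omega
  have hzm' : z.card ≤ m + 1 := by exact_mod_cast hzm
  have hQ' : GraphSphere ((((m + 1) - z.card : ℕ) : ℤ) - 1)
      (G.induce {u | ∀ v ∈ z, G.Adj v u}) := by
    have harith : (((m + 1) - z.card : ℕ) : ℤ) - 1 = (m : ℤ) - z.card := by omega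
    rw [harith]; exact hQ
  have hbr := br_sphere ((m + 1) - z.card) _ hQ'
  have hP₂ : GraphSphere ((((m + 1) - z.card : ℕ) : ℤ) - 1)
      ((ssubGraph V).induce {w : Finset V | (w.Nonempty ∧ G.IsClique (↑w : Set V)) ∧ z ⊂ w}) :=
    hbr.of_iso _ (brSup G z hzne hzcl).symm
  have hP₁ : GraphSphere ((z.card : ℤ) - k - 2)
      ((ssubGraph V).induce {s : Finset V | s ⊂ z ∧ ∀ c, ∃ u ∈ s, f u = c}) :=
    sub_sphere f z.card z le_rfl hzh
  have hsplit : {w | ({s : Finset V | s.Nonempty ∧ G.IsClique (↑s : Set V) ∧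
        ∀ c : Fin (k + 1), ∃ v ∈ s, f v = c} : Set (Finset V)) w ∧ (ssubGraph V).Adj z w}
      = {s : Finset V | s ⊂ z ∧ ∀ c, ∃ u ∈ s, f u = c}
        ∪ {w : Finset V | (w.Nonempty ∧ G.IsClique (↑w : Set V)) ∧ z ⊂ w} := by
    ext w
    simp only [Set.mem_setOf_eq, Set.mem_union, ssub_adj]
    constructor
    · rintro ⟨⟨hne, hcl, hh⟩, h | h⟩
      · exact Or.inr ⟨⟨hne, hcl⟩, h⟩
      · exact Or.inl ⟨h, hh⟩
    · rintro (⟨hws, hh⟩ | ⟨⟨hne, hcl⟩, hzw⟩)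
      · exact ⟨⟨hits_nonempty f hh, hzcl.subset (Finset.coe_subset.2 hws.1), hh⟩, Or.inr hws⟩
      · exact ⟨⟨hne, hcl, hits_mono f hzw.1 hzh⟩, Or.inl hzw⟩
  have hd : Disjoint ({s : Finset V | s ⊂ z ∧ ∀ c, ∃ u ∈ s, f u = c})
      ({w : Finset V | (w.Nonempty ∧ G.IsClique (↑w : Set V)) ∧ z ⊂ w}) := by
    rw [Set.disjoint_left]
    rintro w ⟨hws, -⟩ ⟨-, hzw⟩
    exact ssubset_irrefl _ (hws.trans hzw)
  have hadj : ∀ w₁ ∈ {s : Finset V | s ⊂ z ∧ ∀ c, ∃ u ∈ s, f u = c},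
      ∀ w₂ ∈ {w : Finset V | (w.Nonempty ∧ G.IsClique (↑w : Set V)) ∧ z ⊂ w},
      (ssubGraph V).Adj w₁ w₂ := by
    rintro w₁ ⟨h1, -⟩ w₂ ⟨-, h2⟩
    exact (ssub_adj _ _).2 (Or.inl (h1.trans h2))
  have hj := joinSphere hP₂ hP₁
  have harith : (z.card : ℤ) - k - 2 + ((((m + 1) - z.card : ℕ) : ℤ) - 1) + 1
      = (m : ℤ) - k - 1 := by omega
  rw [harith] at hj
  have e1 : (((ssubGraph V).induce {s : Finset V | s.Nonempty ∧ G.IsClique (↑s : Set V) ∧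
        ∀ c : Fin (k + 1), ∃ v ∈ s, f v = c}).unitSphere
        (stmtIso G f ⟨z, hzne, hzcl, hzh⟩)) ≃g
      graphJoin ((ssubGraph V).induce {s : Finset V | s ⊂ z ∧ ∀ c, ∃ u ∈ s, f u = c})
        ((ssubGraph V).induce
          {w : Finset V | (w.Nonempty ∧ G.IsClique (↑w : Set V)) ∧ z ⊂ w}) :=
    (flattenSphere (ssubGraph V) _ _).trans
      ((induceCongr _ (show {w | ({s : Finset V | s.Nonempty ∧ G.IsClique (↑s : Set V) ∧
        ∀ c : Fin (k + 1), ∃ v ∈ s, f v = c} : Set (Finset V)) w ∧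
        (ssubGraph V).Adj (↑(stmtIso G f ⟨z, hzne, hzcl, hzh⟩) : Finset V) w}
      = {s : Finset V | s ⊂ z ∧ ∀ c, ∃ u ∈ s, f u = c}
        ∪ {w : Finset V | (w.Nonempty ∧ G.IsClique (↑w : Set V)) ∧ z ⊂ w} from hsplit)).trans
        (splitJoin _ _ _ hd hadj))
  exact (hj.of_iso _ e1.symm).of_iso _ (isoUnitSphere (stmtIso G f) ⟨z, hzne, hzcl, hzh⟩).symm
end

section
/- If G is a finite simple graph that is a p-sphere and H is a finite simple graph that is a q-sphere, then the join G * H is a (p+q+1)-sphere. -/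
universe u

namespace JoinSphereAux
open scoped Classical

open SimpleGraph

def isoUnitSphere {V V' : Type u} {G : SimpleGraph V} {G' : SimpleGraph V'}
    (e : G ≃g G') (v : V) : G.unitSphere v ≃g G'.unitSphere (e v) where
  toEquiv := Equiv.subtypeEquiv e.toEquiv (fun u => e.map_adj_iff.symm)
  map_rel_iff' := by intro a b; exact e.map_adj_iff

def isoDeleteVert {V V' : Type u} {G : SimpleGraph V} {G' : SimpleGraph V'}
    (e : G ≃g G') (v : V) : G.deleteVert v ≃g G'.deleteVert (e v) where
  toEquiv := Equiv.subtypeEquiv e.toEquiv (fun u =>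
    (not_congr e.toEquiv.apply_eq_iff_eq).symm)
  map_rel_iff' := by intro a b; exact e.map_adj_iff


def joinSphereLeft {V W : Type u} (G : SimpleGraph V) (H : SimpleGraph W) (v : V) :
    (graphJoin G H).unitSphere (Sum.inl v) ≃g graphJoin (G.unitSphere v) H where
  toEquiv := Equiv.subtypeSum.trans
    (Equiv.sumCongr (Equiv.subtypeEquivRight (fun a => Iff.rfl))
      (Equiv.subtypeUnivEquiv (fun b => trivial)))
  map_rel_iff' := by rintro ⟨(a | a), ha⟩ ⟨(b | b), hb⟩ <;> exact Iff.rfl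

def joinSphereRight {V W : Type u} (G : SimpleGraph V) (H : SimpleGraph W) (w : W) :
    (graphJoin G H).unitSphere (Sum.inr w) ≃g graphJoin G (H.unitSphere w) where
  toEquiv := Equiv.subtypeSum.trans
    (Equiv.sumCongr (Equiv.subtypeUnivEquiv (fun b => trivial))
      (Equiv.subtypeEquivRight (fun a => Iff.rfl)))
  map_rel_iff' := by rintro ⟨(a | a), ha⟩ ⟨(b | b), hb⟩ <;> exact Iff.rfl

def joinDeleteLeft {V W : Type u} (G : SimpleGraph V) (H : SimpleGraph W) (v : V) :
    (graphJoin G H).deleteVert (Sum.inl v) ≃g graphJoin (G.deleteVert v) H where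
  toEquiv := Equiv.subtypeSum.trans
    (Equiv.sumCongr (Equiv.subtypeEquivRight (fun a => by simp))
      (Equiv.subtypeUnivEquiv (fun b => by simp)))
  map_rel_iff' := by rintro ⟨(a | a), ha⟩ ⟨(b | b), hb⟩ <;> exact Iff.rfl

def joinDeleteRight {V W : Type u} (G : SimpleGraph V) (H : SimpleGraph W) (w : W) :
    (graphJoin G H).deleteVert (Sum.inr w) ≃g graphJoin G (H.deleteVert w) where
  toEquiv := Equiv.subtypeSum.trans
    (Equiv.sumCongr (Equiv.subtypeUnivEquiv (fun b => by simp))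
      (Equiv.subtypeEquivRight (fun a => by simp)))
  map_rel_iff' := by rintro ⟨(a | a), ha⟩ ⟨(b | b), hb⟩ <;> exact Iff.rfl

def joinEmptyRight {V W : Type u} (G : SimpleGraph V) (H : SimpleGraph W) [IsEmpty W] :
    graphJoin G H ≃g G where
  toEquiv := Equiv.sumEmpty V W
  map_rel_iff' := by rintro (a | a) (b | b) <;> first | exact isEmptyElim a | exact isEmptyElim b | exact Iff.rfl

def joinEmptyLeft {V W : Type u} (G : SimpleGraph V) (H : SimpleGraph W) [IsEmpty V] :
    graphJoin G H ≃g H where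
  toEquiv := Equiv.emptySum V W
  map_rel_iff' := by rintro (a | a) (b | b) <;> first | exact isEmptyElim a | exact isEmptyElim b | exact Iff.rfl


theorem contractible_of_iso : ∀ {V : Type u} {G : SimpleGraph V}, GraphContractible G →
    ∀ {V' : Type u} {G' : SimpleGraph V'}, (G ≃g G') → GraphContractible G' := by
  intro V G h
  induction h with
  | single G h1 h2 =>
    intro V' G' e
    exact GraphContractible.single G' (Nonempty.map e.toEquiv h1)
      (e.toEquiv.symm.injective.subsingleton)
  | step G v hS hD ihS ihD =>
    intro V' G' e
    exact GraphContractible.step G' (e v) (ihS (isoUnitSphere e v)) (ihD (isoDeleteVert e v))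

theorem sphere_of_iso : ∀ {p : ℤ} {V : Type u} {G : SimpleGraph V}, GraphSphere p G →
    ∀ {V' : Type u} {G' : SimpleGraph V'}, (G ≃g G') → GraphSphere p G' := by
  intro p V G h
  induction h with
  | empty G h =>
    intro V' G' e
    exact GraphSphere.empty G' (e.toEquiv.symm.isEmpty)
  | succ G q hq hS hv ih =>
    intro V' G' e
    refine GraphSphere.succ G' q hq (fun v' => ?_) ?_
    · exact ih (e.symm v') (isoUnitSphere e.symm v').symm
    · obtain ⟨v, hv⟩ := hv
      exact ⟨e v, contractible_of_iso hv (isoDeleteVert e v)⟩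

theorem card_sphere_lt {V : Type} [Fintype V] (G : SimpleGraph V) (v : V) :
    Fintype.card {u : V // G.Adj v u} < Fintype.card V :=
  Fintype.card_subtype_lt (x := v) (G.irrefl)

theorem card_delete_lt {V : Type} [Fintype V] (G : SimpleGraph V) (v : V) :
    Fintype.card {u : V // u ≠ v} < Fintype.card V :=
  Fintype.card_subtype_lt (x := v) (fun h => h rfl)

theorem contractible_join : ∀ (n : ℕ) (V W : Type) [Fintype V] [Fintype W]
    (G : SimpleGraph V) (H : SimpleGraph W),
    Fintype.card V + Fintype.card W ≤ n → GraphContractible G →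
    GraphContractible (graphJoin G H) := by
  intro n
  induction n with
  | zero =>
    intro V W _ _ G H hn hG
    cases hG with
    | single G h1 h2 =>
      have : 0 < Fintype.card V := Fintype.card_pos
      omega
    | step G v hS hD =>
      have : 0 < Fintype.card V := Fintype.card_pos_iff.mpr ⟨v⟩
      omega
  | succ n ih =>
    intro V W _ _ G H hn hG
    cases hG with
    | single G h1 h2 =>
      by_cases hW : IsEmpty W
      · exact contractible_of_iso (GraphContractible.single G h1 h2)
          (joinEmptyRight G H).symm
      · obtain ⟨w⟩ := not_isEmpty_iff.mp hW
        refine GraphContractible.step _ (Sum.inr w) ?_ ?_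
        · refine contractible_of_iso (ih V _ G (H.unitSphere w) ?_
            (GraphContractible.single G h1 h2)) (joinSphereRight G H w).symm
          have := card_sphere_lt H w
          have : 0 < Fintype.card W := Fintype.card_pos_iff.mpr ⟨w⟩
          have := card_sphere_lt H w
          omega
        · refine contractible_of_iso (ih V _ G (H.deleteVert w) ?_
            (GraphContractible.single G h1 h2)) (joinDeleteRight G H w).symm
          have := card_delete_lt H w
          omega
    | step G v hS hD =>
      refine GraphContractible.step _ (Sum.inl v) ?_ ?_
      · refine contractible_of_iso (ih _ W (G.unitSphere v) H ?_ hS)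
          (joinSphereLeft G H v).symm
        have := card_sphere_lt G v
        omega
      · refine contractible_of_iso (ih _ W (G.deleteVert v) H ?_ hD)
          (joinDeleteLeft G H v).symm
        have := card_delete_lt G v
        omega

theorem sphere_join : ∀ (n : ℕ) (V W : Type) [Fintype V] [Fintype W]
    (G : SimpleGraph V) (H : SimpleGraph W) (p q : ℤ),
    Fintype.card V + Fintype.card W ≤ n → GraphSphere p G → GraphSphere q H →
    GraphSphere (p + q + 1) (graphJoin G H) := by
  intro n
  induction n with
  | zero =>
    intro V W _ _ G H p q hn hG hH
    cases hG with
    | empty _ hV =>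
      cases hH with
      | empty _ hW =>
        have : (-1 : ℤ) + -1 + 1 = -1 := by ring
        rw [this]
        exact GraphSphere.empty _ (by infer_instance)
      | succ _ q hq hS hv =>
        obtain ⟨w, _⟩ := hv
        have : 0 < Fintype.card W := Fintype.card_pos_iff.mpr ⟨w⟩
        omega
    | succ _ p hp hS hv =>
      obtain ⟨v, _⟩ := hv
      have : 0 < Fintype.card V := Fintype.card_pos_iff.mpr ⟨v⟩
      omega
  | succ n ih =>
    intro V W _ _ G H p q hn hG hH
    cases hG with
    | empty _ hV =>
      have h : GraphSphere q (graphJoin G H) := sphere_of_iso hH (joinEmptyLeft G H).symm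
      have : (-1 : ℤ) + q + 1 = q := by ring
      rw [this]; exact h
    | succ _ p hp hSG hvG =>
      cases hH with
      | empty _ hW =>
        have h : GraphSphere p (graphJoin G H) := sphere_of_iso
          (GraphSphere.succ G p hp hSG hvG) (joinEmptyRight G H).symm
        have : p + -1 + 1 = p := by ring
        rw [this]; exact h
      | succ _ q hq hSH hvH =>
        obtain ⟨v0, hv0⟩ := hvG
        obtain ⟨w0, _⟩ := hvH
        have hcV : 0 < Fintype.card V := Fintype.card_pos_iff.mpr ⟨v0⟩
        have hcW : 0 < Fintype.card W := Fintype.card_pos_iff.mpr ⟨w0⟩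
        refine GraphSphere.succ _ (p + q + 1) (by omega) ?_ ?_
        · rintro (v | w)
          · have h := ih _ W (G.unitSphere v) H (p - 1) q
              (by have := card_sphere_lt G v; omega) (hSG v)
              (GraphSphere.succ H q hq hSH ⟨w0, ‹_›⟩)
            have h2 := sphere_of_iso h (joinSphereLeft G H v).symm
            have : p - 1 + q + 1 = p + q + 1 - 1 := by ring
            rwa [this] at h2
          · have h := ih V _ G (H.unitSphere w) p (q - 1)
              (by have := card_sphere_lt H w; omega)
              (GraphSphere.succ G p hp hSG ⟨v0, hv0⟩) (hSH w)
            have h2 := sphere_of_iso h (joinSphereRight G H w).symm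
            have : p + (q - 1) + 1 = p + q + 1 - 1 := by ring
            rwa [this] at h2
        · refine ⟨Sum.inl v0, ?_⟩
          exact contractible_of_iso
            (contractible_join _ _ W (G.deleteVert v0) H le_rfl hv0)
            (joinDeleteLeft G H v0).symm

end JoinSphereAux

/-- The join of a `p`-sphere and a `q`-sphere is a `(p+q+1)`-sphere. -/
theorem graphJoin_sphere {V W : Type} [Fintype V] [Fintype W]
    (G : SimpleGraph V) (H : SimpleGraph W) (p q : ℤ)
    (hG : GraphSphere p G) (hH : GraphSphere q H) :
    GraphSphere (p + q + 1) (graphJoin G H) :=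
  JoinSphereAux.sphere_join _ V W G H p q le_rfl hG hH
end

section
/- Gauss–Bonnet for graphs: for every finite simple graph G, the sum of the curvatures over all vertices equals the Euler characteristic: Σ_{v ∈ V(G)} K(v) = χ(G), where the curvature of a vertex v is K(v) = Σ_{x clique of G with v ∈ x} (−1)^{|x|−1} / |x| (a rational number). -/
universe u

/-- Gauss–Bonnet for graphs: the curvatures `K(v) = Σ_{x ∋ v} (-1)^(|x|-1)/|x|` add up
to the Euler characteristic. -/
theorem graph_gauss_bonnet {V : Type} [Fintype V] (G : SimpleGraph V) :
    ∑ v : V, graphCurvature G v = (graphEulerChar G : ℚ) := by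
  classical
  set S := Finset.univ.filter
    (fun x : Finset V => x.Nonempty ∧ G.IsClique (↑x : Set V)) with hS
  have hL : ∑ v : V, graphCurvature G v = ∑ x ∈ S, (-1 : ℚ) ^ (x.card - 1) := by
    have h1 : ∀ v : V, graphCurvature G v
        = ∑ x ∈ S, (if v ∈ x then (-1 : ℚ) ^ (x.card - 1) / (x.card : ℚ) else 0) := by
      intro v
      rw [← Finset.sum_filter]
      unfold graphCurvature
      congr 1
      ext x
      simp [hS, and_assoc]
    simp only [h1]
    rw [Finset.sum_comm]
    refine Finset.sum_congr rfl fun x hx => ?_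
    have hne : x.Nonempty := by
      simp only [hS, Finset.mem_filter] at hx; exact hx.2.1
    have hcard : (x.card : ℚ) ≠ 0 :=
      (Nat.cast_ne_zero (R := ℚ)).mpr (Finset.card_pos.mpr hne).ne'
    rw [Finset.sum_ite_mem, Finset.univ_inter, Finset.sum_const, nsmul_eq_mul]
    field_simp
  have hR : (graphEulerChar G : ℚ) = ∑ x ∈ S, (-1 : ℚ) ^ (x.card - 1) := by
    rw [← Finset.sum_fiberwise_of_maps_to (g := fun x : Finset V => x.card - 1)
      (t := Finset.range (Fintype.card V + 1))
      (fun x _ => by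
        have := Finset.card_le_univ x
        simp only [Finset.mem_range]; omega)]
    unfold graphEulerChar
    push_cast
    refine Finset.sum_congr rfl fun k hk => ?_
    have hfib : S.filter (fun x => x.card - 1 = k)
        = Finset.univ.filter (fun x : Finset V => x.card = k + 1 ∧ G.IsClique (↑x : Set V)) := by
      ext x
      simp only [hS, Finset.filter_filter, Finset.mem_filter, Finset.mem_univ, true_and]
      constructor
      · rintro ⟨⟨hne, hcl⟩, hc⟩
        have := Finset.card_pos.mpr hne
        exact ⟨by omega, hcl⟩
      · rintro ⟨hc, hcl⟩
        exact ⟨⟨Finset.card_pos.mp (by omega), hcl⟩, by omega⟩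
    have : ∀ x ∈ S.filter (fun x => x.card - 1 = k),
        (-1 : ℚ) ^ (x.card - 1) = (-1 : ℚ) ^ k := by
      intro x hx
      rw [(Finset.mem_filter.mp hx).2]
    rw [Finset.sum_congr rfl this, Finset.sum_const, hfib, nsmul_eq_mul]
    unfold graphFVec
    ring
  rw [hL, hR]
end
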